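/- arXiv:1903.06102 — 6 statements merged into one kernel-verified Lean document; each statement's English description precedes it below -/
import Mathlib

section
/- The set D+K of operators on a separable Hilbert space that can be written as the sum of a diagonal operator (with respect to a fixed orthonormal basis) and a compact operator is norm-closed in B(H). -/
open scoped InnerProductSpace
open ContinuousLinearMap

variable {H : Type*} [NormedAddCommGroup H] [InnerProductSpace ℂ H] [CompleteSpace H]

/-- An operator is diagonal with respect to the fixed orthonormal (Hilbert) basis `e`. -/
def IsDiagonal (e : HilbertBasis ℕ ℂ H) (T : H →L[ℂ] H) : Prop :=
  ∀ n m : ℕ, n ≠ m → ⟪e m, T (e n)⟫_ℂ = 0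

/-- The set `D + K` of sums of a diagonal operator and a compact operator. -/
def DplusK (e : HilbertBasis ℕ ℂ H) : Set (H →L[ℂ] H) :=
  {T | ∃ D K : H →L[ℂ] H, IsDiagonal e D ∧ IsCompactOperator ⇑K ∧ T = D + K}

open scoped ENNReal Topology

noncomputable section

set_option linter.unusedSectionVars false

lemma mul_memℓp (a : lp (fun _ : ℕ => ℂ) ∞) (f : lp (fun _ : ℕ => ℂ) 2) :
    Memℓp (fun n => a n * f n) 2 := by
  apply memℓp_gen
  have hs : Summable fun n => ‖a‖ ^ (2 : ℝ≥0∞).toReal * ‖f n‖ ^ (2 : ℝ≥0∞).toReal :=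
    ((lp.memℓp f).summable (by norm_num)).mul_left _
  refine hs.of_nonneg_of_le (fun n => by positivity) (fun n => ?_)
  calc ‖a n * f n‖ ^ (2 : ℝ≥0∞).toReal
      = (‖a n‖ * ‖f n‖) ^ (2 : ℝ≥0∞).toReal := by rw [norm_mul]
    _ ≤ (‖a‖ * ‖f n‖) ^ (2 : ℝ≥0∞).toReal := by
        apply Real.rpow_le_rpow (by positivity)
          (mul_le_mul_of_nonneg_right (lp.norm_apply_le_norm ENNReal.top_ne_zero a n)
            (norm_nonneg _)) (by norm_num)
    _ = ‖a‖ ^ (2 : ℝ≥0∞).toReal * ‖f n‖ ^ (2 : ℝ≥0∞).toReal :=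
        Real.mul_rpow (norm_nonneg _) (norm_nonneg _)


def mulSeq (a : lp (fun _ : ℕ => ℂ) ∞) (f : lp (fun _ : ℕ => ℂ) 2) : lp (fun _ : ℕ => ℂ) 2 :=
  ⟨fun n => a n * f n, mul_memℓp a f⟩

@[simp] lemma mulSeq_apply (a : lp (fun _ : ℕ => ℂ) ∞) (f : lp (fun _ : ℕ => ℂ) 2) (n : ℕ) :
    mulSeq a f n = a n * f n := rfl

lemma norm_mulSeq_le (a : lp (fun _ : ℕ => ℂ) ∞) (f : lp (fun _ : ℕ => ℂ) 2) :
    ‖mulSeq a f‖ ≤ ‖a‖ * ‖f‖ := by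
  refine lp.norm_le_of_tsum_le (by norm_num) (by positivity) ?_
  have h1 : ∀ n : ℕ, ‖mulSeq a f n‖ ^ (2 : ℝ≥0∞).toReal ≤
      ‖a‖ ^ (2 : ℝ≥0∞).toReal * ‖f n‖ ^ (2 : ℝ≥0∞).toReal := by
    intro n
    calc ‖mulSeq a f n‖ ^ (2 : ℝ≥0∞).toReal
        = (‖a n‖ * ‖f n‖) ^ (2 : ℝ≥0∞).toReal := by rw [mulSeq_apply, norm_mul]
      _ ≤ (‖a‖ * ‖f n‖) ^ (2 : ℝ≥0∞).toReal := by
          apply Real.rpow_le_rpow (by positivity)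
            (mul_le_mul_of_nonneg_right (lp.norm_apply_le_norm ENNReal.top_ne_zero a n)
              (norm_nonneg _)) (by norm_num)
      _ = ‖a‖ ^ (2 : ℝ≥0∞).toReal * ‖f n‖ ^ (2 : ℝ≥0∞).toReal :=
          Real.mul_rpow (norm_nonneg _) (norm_nonneg _)
  calc (∑' n, ‖mulSeq a f n‖ ^ (2 : ℝ≥0∞).toReal)
      ≤ ∑' n, ‖a‖ ^ (2 : ℝ≥0∞).toReal * ‖f n‖ ^ (2 : ℝ≥0∞).toReal := by
        refine Summable.tsum_le_tsum h1 ((lp.memℓp (mulSeq a f)).summable (by norm_num)) ?_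
        exact ((lp.memℓp f).summable (by norm_num)).mul_left _
    _ = ‖a‖ ^ (2 : ℝ≥0∞).toReal * ∑' n, ‖f n‖ ^ (2 : ℝ≥0∞).toReal := tsum_mul_left
    _ = ‖a‖ ^ (2 : ℝ≥0∞).toReal * ‖f‖ ^ (2 : ℝ≥0∞).toReal := by
        rw [← lp.norm_rpow_eq_tsum (by norm_num) f]
    _ = (‖a‖ * ‖f‖) ^ (2 : ℝ≥0∞).toReal :=
        (Real.mul_rpow (norm_nonneg _) (norm_nonneg _)).symm


lemma mulSeq_add_right (a : lp (fun _ : ℕ => ℂ) ∞) (f g : lp (fun _ : ℕ => ℂ) 2) :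
    mulSeq a (f + g) = mulSeq a f + mulSeq a g := by
  apply lp.ext
  funext n
  simp only [lp.coeFn_add, Pi.add_apply, mulSeq_apply]
  exact mul_add _ _ _

lemma mulSeq_smul_right (a : lp (fun _ : ℕ => ℂ) ∞) (c : ℂ) (f : lp (fun _ : ℕ => ℂ) 2) :
    mulSeq a (c • f) = c • mulSeq a f := by
  apply lp.ext
  funext n
  simp only [lp.coeFn_smul, Pi.smul_apply, mulSeq_apply, smul_eq_mul]
  ring

/-- The diagonal operator on `H` with diagonal entries `a`, as a linear map. -/
def diagL (e : HilbertBasis ℕ ℂ H) (a : lp (fun _ : ℕ => ℂ) ∞) : H →ₗ[ℂ] H where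
  toFun x := e.repr.symm (mulSeq a (e.repr x))
  map_add' x y := by
    show e.repr.symm (mulSeq a (e.repr (x + y))) = _
    rw [map_add, mulSeq_add_right, map_add]
  map_smul' c x := by
    show e.repr.symm (mulSeq a (e.repr (c • x))) = _
    rw [map_smul, mulSeq_smul_right, map_smul]
    rfl

/-- The diagonal operator on `H` with diagonal entries `a`. -/
def diagOp (e : HilbertBasis ℕ ℂ H) (a : lp (fun _ : ℕ => ℂ) ∞) : H →L[ℂ] H :=
  (diagL e a).mkContinuous ‖a‖ (fun x => by
    simp only [diagL, LinearMap.coe_mk, AddHom.coe_mk]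
    rw [LinearIsometryEquiv.norm_map]
    refine (norm_mulSeq_le a (e.repr x)).trans ?_
    rw [LinearIsometryEquiv.norm_map])

lemma repr_diagOp (e : HilbertBasis ℕ ℂ H) (a : lp (fun _ : ℕ => ℂ) ∞) (x : H) (n : ℕ) :
    e.repr (diagOp e a x) n = a n * e.repr x n := by
  have h : diagOp e a x = e.repr.symm (mulSeq a (e.repr x)) := rfl
  rw [h, LinearIsometryEquiv.apply_symm_apply, mulSeq_apply]

lemma norm_diagOp_le (e : HilbertBasis ℕ ℂ H) (a : lp (fun _ : ℕ => ℂ) ∞) :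
    ‖diagOp e a‖ ≤ ‖a‖ :=
  LinearMap.mkContinuous_norm_le _ (norm_nonneg a) _

lemma diagOp_add (e : HilbertBasis ℕ ℂ H) (a b : lp (fun _ : ℕ => ℂ) ∞) :
    diagOp e (a + b) = diagOp e a + diagOp e b := by
  ext x
  apply e.repr.injective
  apply lp.ext
  funext n
  simp only [ContinuousLinearMap.add_apply, map_add, lp.coeFn_add, Pi.add_apply, repr_diagOp]
  exact add_mul _ _ _

lemma diagOp_sub (e : HilbertBasis ℕ ℂ H) (a b : lp (fun _ : ℕ => ℂ) ∞) :
    diagOp e (a - b) = diagOp e a - diagOp e b := by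
  have := diagOp_add e (a - b) b
  rw [sub_add_cancel] at this
  rw [this]; abel

lemma isDiagonal_diagOp (e : HilbertBasis ℕ ℂ H) (a : lp (fun _ : ℕ => ℂ) ∞) :
    ∀ n m : ℕ, n ≠ m → ⟪e m, diagOp e a (e n)⟫_ℂ = 0 := by
  intro n m hnm
  rw [← e.repr_apply_apply, repr_diagOp, e.repr_self, lp.single_apply_ne 2 n _ (Ne.symm hnm),
    mul_zero]

lemma isCompactOperator_smulRight' (φ : H →L[ℂ] ℂ) (y : H) :
    IsCompactOperator fun x => φ x • y := by
  rw [isCompactOperator_iff_exists_mem_nhds_image_subset_compact]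
  refine ⟨φ ⁻¹' Metric.ball 0 1,
    φ.continuous.continuousAt.preimage_mem_nhds (by simpa using Metric.ball_mem_nhds (0 : ℂ) one_pos),
    (fun c : ℂ => c • y) '' Metric.closedBall 0 1,
    (isCompact_closedBall 0 1).image (continuous_id.smul continuous_const), ?_⟩
  rintro _ ⟨x, hx, rfl⟩
  exact ⟨φ x, Metric.ball_subset_closedBall hx, rfl⟩

lemma isCompactOperator_finset_sum {ι : Type*} (s : Finset ι) (f : ι → H →L[ℂ] H)
    (h : ∀ i ∈ s, IsCompactOperator ⇑(f i)) : IsCompactOperator ⇑(∑ i ∈ s, f i) := by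
  classical
  induction s using Finset.induction with
  | empty => simpa using (isCompactOperator_zero : IsCompactOperator (0 : H → H))
  | @insert i s hi ih =>
    rw [Finset.sum_insert hi]
    have : (⇑(f i + ∑ j ∈ s, f j)) = ⇑(f i) + ⇑(∑ j ∈ s, f j) := rfl
    rw [this]
    exact (h i (Finset.mem_insert_self _ _)).add
      (ih fun j hj => h j (Finset.mem_insert_of_mem hj))

def truncSeq (a : lp (fun _ : ℕ => ℂ) ∞) (N : ℕ) : lp (fun _ : ℕ => ℂ) ∞ :=
  ⟨fun n => if n < N then a n else 0, by
    apply memℓp_infty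
    refine ⟨‖a‖, ?_⟩
    rintro x ⟨n, rfl⟩
    dsimp only
    split
    · exact lp.norm_apply_le_norm ENNReal.top_ne_zero a n
    · rw [norm_zero]; exact norm_nonneg a⟩

@[simp] lemma truncSeq_apply (a : lp (fun _ : ℕ => ℂ) ∞) (N n : ℕ) :
    truncSeq a N n = if n < N then a n else 0 := rfl

lemma diagOp_truncSeq (e : HilbertBasis ℕ ℂ H) (a : lp (fun _ : ℕ => ℂ) ∞) (N : ℕ) :
    diagOp e (truncSeq a N) =
      ∑ n ∈ Finset.range N, ((a n • innerSL ℂ (e n)).smulRight (e n)) := by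
  ext x
  apply e.repr.injective
  apply lp.ext
  funext m
  rw [repr_diagOp]
  rw [ContinuousLinearMap.sum_apply, map_sum, lp.coeFn_sum, Finset.sum_apply]
  have hterm : ∀ n : ℕ, e.repr (((a n • innerSL ℂ (e n)).smulRight (e n)) x) m
      = (a n * ⟪e n, x⟫_ℂ) • ((lp.single 2 n (1:ℂ) : lp (fun _ : ℕ => ℂ) 2) m) := by
    intro n
    have h1 : ((a n • innerSL ℂ (e n)).smulRight (e n)) x = (a n * ⟪e n, x⟫_ℂ) • e n := by
      rw [ContinuousLinearMap.smulRight_apply, ContinuousLinearMap.smul_apply, innerSL_apply_apply,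
        smul_eq_mul]
    rw [h1, map_smul, e.repr_self, lp.coeFn_smul, Pi.smul_apply]
  rw [Finset.sum_congr rfl fun n _ => hterm n]
  by_cases hm : m < N
  · rw [Finset.sum_eq_single m]
    · rw [lp.single_apply_self, truncSeq_apply, if_pos hm, smul_eq_mul, mul_one,
        e.repr_apply_apply]
    · intro n _ hnm
      rw [lp.single_apply_ne 2 n _ (Ne.symm hnm), smul_zero]
    · intro hmem
      exact absurd (Finset.mem_range.mpr hm) hmem
  · rw [Finset.sum_eq_zero, truncSeq_apply, if_neg hm, zero_mul]
    intro n hn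
    have hnm : m ≠ n := by
      rintro rfl
      exact hm (Finset.mem_range.mp hn)
    rw [lp.single_apply_ne 2 n _ hnm, smul_zero]

open Filter in
lemma isCompactOperator_diagOp_of_tendsto (e : HilbertBasis ℕ ℂ H) (a : lp (fun _ : ℕ => ℂ) ∞)
    (ha : Tendsto (fun n => a n) atTop (𝓝 0)) : IsCompactOperator ⇑(diagOp e a) := by
  refine isCompactOperator_of_tendsto (l := atTop)
    (F := fun N => diagOp e (truncSeq a N)) ?_ ?_
  · rw [Metric.tendsto_atTop]
    intro ε hε
    obtain ⟨M, hM⟩ := Metric.tendsto_atTop.mp ha (ε / 2) (half_pos hε)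
    refine ⟨M, fun N hN => ?_⟩
    rw [dist_eq_norm, ← neg_sub, norm_neg, ← diagOp_sub]
    have hbound : ‖a - truncSeq a N‖ ≤ ε / 2 := by
      refine lp.norm_le_of_forall_le (le_of_lt (half_pos hε)) fun n => ?_
      have hco : (a - truncSeq a N) n = a n - truncSeq a N n := by
        rw [lp.coeFn_sub, Pi.sub_apply]
      rw [hco, truncSeq_apply]
      by_cases h : n < N
      · rw [if_pos h, sub_self, norm_zero]; exact le_of_lt (half_pos hε)
      · rw [if_neg h, sub_zero]
        have hn : n ≥ M := le_trans hN (not_lt.mp h)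
        have := hM n hn
        rw [dist_zero_right] at this
        exact this.le
    calc ‖diagOp e (a - truncSeq a N)‖ ≤ ‖a - truncSeq a N‖ := norm_diagOp_le e _
      _ ≤ ε / 2 := hbound
      _ < ε := half_lt_self hε
  · refine Eventually.of_forall fun N => ?_
    show IsCompactOperator ⇑(diagOp e (truncSeq a N))
    rw [diagOp_truncSeq]
    refine isCompactOperator_finset_sum _ _ fun n _ => ?_
    have hco : ⇑((a n • innerSL ℂ (e n)).smulRight (e n))
        = fun x => ((a n • innerSL ℂ (e n)) x) • e n := rfl
    rw [hco]
    exact isCompactOperator_smulRight' _ _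

open Filter in
lemma tendsto_norm_inner_right (e : HilbertBasis ℕ ℂ H) (y : H) :
    Tendsto (fun n => ‖⟪e n, y⟫_ℂ‖) atTop (𝓝 0) := by
  have hsum : Summable fun n => ‖e.repr y n‖ ^ (2 : ℝ≥0∞).toReal :=
    (lp.memℓp (e.repr y)).summable (by norm_num)
  have h2 := hsum.tendsto_atTop_zero
  have h3 : Tendsto (fun n => Real.sqrt (‖e.repr y n‖ ^ (2 : ℝ≥0∞).toReal)) atTop (𝓝 0) := by
    have := (Real.continuous_sqrt.tendsto 0).comp h2
    rw [Real.sqrt_zero] at this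
    exact this
  have h4 : (fun n => Real.sqrt (‖e.repr y n‖ ^ (2 : ℝ≥0∞).toReal))
      = fun n => ‖⟪e n, y⟫_ℂ‖ := by
    funext n
    rw [show ((2 : ℝ≥0∞).toReal) = ((2 : ℕ) : ℝ) by norm_num, Real.rpow_natCast,
      Real.sqrt_sq (norm_nonneg _), e.repr_apply_apply]
  rwa [h4] at h3

open Filter in
lemma tendsto_diag_of_isCompactOperator (e : HilbertBasis ℕ ℂ H) {K : H →L[ℂ] H}
    (hK : IsCompactOperator ⇑K) :
    Tendsto (fun n => ⟪e n, K (e n)⟫_ℂ) atTop (𝓝 0) := by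
  obtain ⟨C, hC, hCmem⟩ := hK
  obtain ⟨r, hr, hball⟩ := Metric.mem_nhds_iff.mp hCmem
  have hnorm_e : ∀ n, ‖e n‖ = 1 := fun n => e.orthonormal.1 n
  have hmem : ∀ n, K (((r / 2 : ℝ) : ℂ) • e n) ∈ C := by
    intro n
    apply hball
    rw [Metric.mem_ball, dist_zero_right, norm_smul, hnorm_e, mul_one, Complex.norm_real,
      Real.norm_eq_abs, abs_of_pos (half_pos hr)]
    exact half_lt_self hr
  rw [tendsto_zero_iff_norm_tendsto_zero, Metric.tendsto_atTop]
  intro ε hε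
  obtain ⟨t, htfin, htcover⟩ := Metric.totallyBounded_iff.mp hC.totallyBounded
    (r * ε / 8) (by positivity)
  set g : ℕ → ℝ := fun n => ∑ y ∈ htfin.toFinset, ‖⟪e n, y⟫_ℂ‖ with hg_def
  have hg : Tendsto g atTop (𝓝 0) := by
    have := tendsto_finset_sum htfin.toFinset
      (fun y _ => tendsto_norm_inner_right e y)
    simpa using this
  obtain ⟨N, hN⟩ := Metric.tendsto_atTop.mp hg (r * ε / 8) (by positivity)
  refine ⟨N, fun n hn => ?_⟩
  have hr' : (r : ℂ) ≠ 0 := by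
    exact_mod_cast ne_of_gt hr
  have h1 : ⟪e n, K (e n)⟫_ℂ = ((2 / r : ℝ) : ℂ) * ⟪e n, K (((r / 2 : ℝ) : ℂ) • e n)⟫_ℂ := by
    rw [map_smul, inner_smul_right]
    push_cast
    rw [← mul_assoc]
    rw [show (2 / (r:ℂ)) * ((r:ℂ) / 2) = 1 by field_simp]
    rw [one_mul]
  obtain ⟨y, hy, hyball⟩ := Set.mem_iUnion₂.mp (htcover (hmem n))
  have h2 : ‖⟪e n, K (((r / 2 : ℝ) : ℂ) • e n)⟫_ℂ‖ ≤ ‖⟪e n, y⟫_ℂ‖ + r * ε / 8 := by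
    have hsplit : ⟪e n, K (((r / 2 : ℝ) : ℂ) • e n)⟫_ℂ
        = ⟪e n, y⟫_ℂ + ⟪e n, K (((r / 2 : ℝ) : ℂ) • e n) - y⟫_ℂ := by
      rw [inner_sub_right]; ring
    rw [hsplit]
    refine (norm_add_le _ _).trans (add_le_add_right ?_ _)
    calc ‖⟪e n, K (((r / 2 : ℝ) : ℂ) • e n) - y⟫_ℂ‖
        ≤ ‖e n‖ * ‖K (((r / 2 : ℝ) : ℂ) • e n) - y‖ := norm_inner_le_norm _ _
      _ = ‖K (((r / 2 : ℝ) : ℂ) • e n) - y‖ := by rw [hnorm_e, one_mul]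
      _ ≤ r * ε / 8 := by
          have := Metric.mem_ball.mp hyball
          rw [dist_eq_norm] at this
          exact this.le
  have h3 : ‖⟪e n, y⟫_ℂ‖ ≤ g n := by
    refine Finset.single_le_sum (f := fun z => ‖⟪e n, z⟫_ℂ‖) (fun z _ => norm_nonneg _) ?_
    exact htfin.mem_toFinset.mpr hy
  have h4 : g n < r * ε / 8 := by
    have := hN n hn
    rw [dist_zero_right, Real.norm_eq_abs] at this
    exact (le_abs_self _).trans_lt this
  have h5 : ‖⟪e n, K (e n)⟫_ℂ‖ ≤ (2 / r) * (g n + r * ε / 8) := by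
    rw [h1, norm_mul, Complex.norm_real, Real.norm_eq_abs,
      abs_of_pos (by positivity : (0:ℝ) < 2 / r)]
    exact mul_le_mul_of_nonneg_left (h2.trans (add_le_add_left h3 _)) (by positivity)
  rw [dist_zero_right, Real.norm_eq_abs, abs_of_nonneg (norm_nonneg _)]
  calc ‖⟪e n, K (e n)⟫_ℂ‖ ≤ (2 / r) * (g n + r * ε / 8) := h5
    _ < (2 / r) * (r * ε / 8 + r * ε / 8) := by
        apply mul_lt_mul_of_pos_left (by linarith) (by positivity)
    _ = ε / 2 := by field_simp; ring
    _ < ε := half_lt_self hε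

/-- The diagonal entries of an operator, as an `ℓ∞` sequence. -/
def diagSeq (e : HilbertBasis ℕ ℂ H) (T : H →L[ℂ] H) : lp (fun _ : ℕ => ℂ) ∞ :=
  ⟨fun n => ⟪e n, T (e n)⟫_ℂ, by
    apply memℓp_infty
    refine ⟨‖T‖, ?_⟩
    rintro x ⟨n, rfl⟩
    dsimp only
    calc ‖⟪e n, T (e n)⟫_ℂ‖ ≤ ‖e n‖ * ‖T (e n)‖ := norm_inner_le_norm _ _
      _ = ‖T (e n)‖ := by rw [e.orthonormal.1, one_mul]
      _ ≤ ‖T‖ * ‖e n‖ := T.le_opNorm _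
      _ = ‖T‖ := by rw [e.orthonormal.1, mul_one]⟩

@[simp] lemma diagSeq_apply (e : HilbertBasis ℕ ℂ H) (T : H →L[ℂ] H) (n : ℕ) :
    diagSeq e T n = ⟪e n, T (e n)⟫_ℂ := rfl

lemma norm_diagSeq_le (e : HilbertBasis ℕ ℂ H) (T : H →L[ℂ] H) : ‖diagSeq e T‖ ≤ ‖T‖ := by
  refine lp.norm_le_of_forall_le (norm_nonneg T) fun n => ?_
  rw [diagSeq_apply]
  calc ‖⟪e n, T (e n)⟫_ℂ‖ ≤ ‖e n‖ * ‖T (e n)‖ := norm_inner_le_norm _ _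
    _ = ‖T (e n)‖ := by rw [e.orthonormal.1, one_mul]
    _ ≤ ‖T‖ * ‖e n‖ := T.le_opNorm _
    _ = ‖T‖ := by rw [e.orthonormal.1, mul_one]

lemma diagSeq_add (e : HilbertBasis ℕ ℂ H) (T S : H →L[ℂ] H) :
    diagSeq e (T + S) = diagSeq e T + diagSeq e S := by
  apply lp.ext
  funext n
  rw [lp.coeFn_add, Pi.add_apply, diagSeq_apply, diagSeq_apply, diagSeq_apply,
    ContinuousLinearMap.add_apply, inner_add_right]

/-- The diagonal part (conditional expectation onto the diagonal) of an operator. -/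
def Delta (e : HilbertBasis ℕ ℂ H) (T : H →L[ℂ] H) : H →L[ℂ] H :=
  diagOp e (diagSeq e T)

lemma Delta_add (e : HilbertBasis ℕ ℂ H) (T S : H →L[ℂ] H) :
    Delta e (T + S) = Delta e T + Delta e S := by
  rw [Delta, Delta, Delta, diagSeq_add, diagOp_add]

lemma Delta_sub (e : HilbertBasis ℕ ℂ H) (T S : H →L[ℂ] H) :
    Delta e (T - S) = Delta e T - Delta e S := by
  have := Delta_add e (T - S) S
  rw [sub_add_cancel] at this
  rw [this]; abel

lemma norm_Delta_le (e : HilbertBasis ℕ ℂ H) (T : H →L[ℂ] H) : ‖Delta e T‖ ≤ ‖T‖ :=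
  (norm_diagOp_le e _).trans (norm_diagSeq_le e T)

lemma continuous_Delta (e : HilbertBasis ℕ ℂ H) :
    Continuous (fun T : H →L[ℂ] H => Delta e T) := by
  refine (LipschitzWith.of_dist_le_mul (K := 1) fun T S => ?_).continuous
  rw [dist_eq_norm, dist_eq_norm, ← Delta_sub, NNReal.coe_one, one_mul]
  exact norm_Delta_le e (T - S)

lemma isDiagonal_Delta (e : HilbertBasis ℕ ℂ H) (T : H →L[ℂ] H) :
    ∀ n m : ℕ, n ≠ m → ⟪e m, Delta e T (e n)⟫_ℂ = 0 :=
  isDiagonal_diagOp e _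

lemma Delta_eq_self (e : HilbertBasis ℕ ℂ H) {D : H →L[ℂ] H}
    (hD : ∀ n m : ℕ, n ≠ m → ⟪e m, D (e n)⟫_ℂ = 0) : Delta e D = D := by
  refine ContinuousLinearMap.ext_on
    (Submodule.dense_iff_topologicalClosure_eq_top.mpr e.dense_span) ?_
  rintro _ ⟨n, rfl⟩
  apply e.repr.injective
  apply lp.ext
  funext m
  show e.repr (diagOp e (diagSeq e D) (e n)) m = e.repr (D (e n)) m
  rw [repr_diagOp, e.repr_self, e.repr_apply_apply, diagSeq_apply]
  by_cases h : m = n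
  · subst h
    rw [lp.single_apply_self, mul_one]
  · rw [lp.single_apply_ne 2 n _ h, mul_zero, hD n m fun hc => h hc.symm]

lemma isCompactOperator_Delta (e : HilbertBasis ℕ ℂ H) {K : H →L[ℂ] H}
    (hK : IsCompactOperator ⇑K) : IsCompactOperator ⇑(Delta e K) := by
  refine isCompactOperator_diagOp_of_tendsto e _ ?_
  have := tendsto_diag_of_isCompactOperator e hK
  simpa using this

theorem DplusK_isClosed (e : HilbertBasis ℕ ℂ H) : IsClosed (DplusK e) := by
  have hset : DplusK e
      = (fun T : H →L[ℂ] H => T - Delta e T) ⁻¹' {S : H →L[ℂ] H | IsCompactOperator ⇑S} := by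
    ext T
    constructor
    · rintro ⟨D, K, hD, hK, rfl⟩
      have h1 : D + K - Delta e (D + K) = K - Delta e K := by
        rw [Delta_add, Delta_eq_self e hD]
        abel
      show IsCompactOperator ⇑(D + K - Delta e (D + K))
      rw [h1, ContinuousLinearMap.coe_sub']
      exact hK.sub (isCompactOperator_Delta e hK)
    · intro hT
      exact ⟨Delta e T, T - Delta e T, isDiagonal_Delta e T, hT, (add_sub_cancel _ _).symm⟩
  rw [hset]
  exact isClosed_setOf_isCompactOperator.preimage (continuous_id.sub (continuous_Delta e))

end
end

section
/- The set of elements of D+K with finite spectrum is norm dense in D+K; moreover self-adjoint elements with finite spectrum are dense in the self-adjoint part of D+K (D+K has real rank zero). -/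
open scoped InnerProductSpace
open ContinuousLinearMap

variable {H : Type*} [NormedAddCommGroup H] [InnerProductSpace ℂ H] [CompleteSpace H]

namespace DKAux

set_option linter.unusedSectionVars false

variable (e : HilbertBasis ℕ ℂ H)

lemma inner_basis (i j : ℕ) : ⟪e i, e j⟫_ℂ = if i = j then 1 else 0 :=
  orthonormal_iff_ite.mp e.orthonormal i j

lemma dense_span : Dense ((Submodule.span ℂ (Set.range e) : Submodule ℂ H) : Set H) :=
  Submodule.dense_iff_topologicalClosure_eq_top.mpr e.dense_span

lemma ext_basis {A B : H →L[ℂ] H} (h : ∀ k, A (e k) = B (e k)) : A = B :=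
  ContinuousLinearMap.ext_on (dense_span e) (by rintro x ⟨k, rfl⟩; exact h k)

/-- rank one projection onto `e k`. -/
noncomputable def rk (k : ℕ) : H →L[ℂ] H := (innerSL ℂ (e k)).smulRight (e k)

lemma rk_apply (k : ℕ) (x : H) : rk e k x = ⟪e k, x⟫_ℂ • e k := rfl

/-- The partial sum projections. -/
noncomputable def FF (n : ℕ) : H →L[ℂ] H := ∑ k ∈ Finset.range n, rk e k

lemma FF_apply (n : ℕ) (x : H) : FF e n x = ∑ k ∈ Finset.range n, ⟪e k, x⟫_ℂ • e k := by
  simp [FF, ContinuousLinearMap.sum_apply, rk_apply]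

lemma FF_apply_basis (n j : ℕ) : FF e n (e j) = if j < n then e j else 0 := by
  rw [FF_apply]
  have : ∀ k ∈ Finset.range n, ⟪e k, e j⟫_ℂ • e k = if k = j then e j else 0 := by
    intro k _
    rw [inner_basis]
    split_ifs with h
    · subst h; simp
    · simp
  rw [Finset.sum_congr rfl this, Finset.sum_ite_eq' (Finset.range n) j (fun _ => e j)]
  simp

lemma coord_eq {A : H →L[ℂ] H} {a : ℕ → ℂ} (h : ∀ k, A (e k) = a k • e k) (x : H) (k : ℕ) :
    e.repr (A x) k = a k * e.repr x k := by
  have key : (innerSL ℂ (e k)).comp A = a k • innerSL ℂ (e k) := by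
    refine ContinuousLinearMap.ext_on (dense_span e) ?_
    rintro x ⟨j, rfl⟩
    simp only [ContinuousLinearMap.coe_comp', Function.comp_apply, innerSL_apply_apply,
      ContinuousLinearMap.smul_apply, h j, inner_smul_right, smul_eq_mul, inner_basis]
    by_cases hjk : k = j <;> simp [hjk]
  have := congrArg (fun f : H →L[ℂ] ℂ => f x) key
  simp only [ContinuousLinearMap.coe_comp', Function.comp_apply, innerSL_apply_apply,
    ContinuousLinearMap.smul_apply, smul_eq_mul] at this
  rw [e.repr_apply_apply, e.repr_apply_apply, this]

lemma sq_le_of_norm {a b : ℝ} (ha : 0 ≤ a) (hb : 0 ≤ b) (h : a ^ (2:ℝ) ≤ b ^ (2:ℝ)) : a ≤ b := by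
  have h2 : a ^ (2:ℕ) ≤ b ^ (2:ℕ) := by
    rw [← Real.rpow_natCast a 2, ← Real.rpow_natCast b 2]; exact_mod_cast h
  by_contra hab
  push_neg at hab
  exact absurd h2 (not_le.mpr (pow_lt_pow_left₀ hab hb (by norm_num)))

lemma diag_norm {A : H →L[ℂ] H} {a : ℕ → ℂ} {c : ℝ} (hc : 0 ≤ c)
    (h : ∀ k, A (e k) = a k • e k) (hb : ∀ k, ‖a k‖ ≤ c) : ‖A‖ ≤ c := by
  refine A.opNorm_le_bound hc fun x => ?_
  have hp : 0 < (2 : ENNReal).toReal := by norm_num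
  have h1 : ∀ k, e.repr (A x) k = a k * e.repr x k := coord_eq e h x
  have sumx : Summable fun k => ‖e.repr x k‖ ^ (2 : ENNReal).toReal :=
    (memℓp_gen_iff hp).mp (lp.memℓp (e.repr x))
  have sumAx : Summable fun k => ‖e.repr (A x) k‖ ^ (2 : ENNReal).toReal :=
    (memℓp_gen_iff hp).mp (lp.memℓp (e.repr (A x)))
  have hterm : ∀ k, ‖e.repr (A x) k‖ ^ (2 : ENNReal).toReal
      ≤ c ^ (2 : ENNReal).toReal * ‖e.repr x k‖ ^ (2 : ENNReal).toReal := by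
    intro k
    rw [← Real.mul_rpow hc (norm_nonneg _), h1 k]
    refine Real.rpow_le_rpow (norm_nonneg _) ?_ (by norm_num)
    rw [norm_mul]
    exact mul_le_mul_of_nonneg_right (hb k) (norm_nonneg _)
  have key : ‖A x‖ ^ (2 : ENNReal).toReal ≤ (c * ‖x‖) ^ (2 : ENNReal).toReal := by
    rw [← e.repr.norm_map (A x), lp.norm_rpow_eq_tsum hp]
    calc ∑' k, ‖e.repr (A x) k‖ ^ (2 : ENNReal).toReal
        ≤ ∑' k, c ^ (2 : ENNReal).toReal * ‖e.repr x k‖ ^ (2 : ENNReal).toReal :=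
          Summable.tsum_le_tsum hterm sumAx (sumx.mul_left _)
      _ = c ^ (2 : ENNReal).toReal * ∑' k, ‖e.repr x k‖ ^ (2 : ENNReal).toReal := tsum_mul_left
      _ = c ^ (2 : ENNReal).toReal * ‖e.repr x‖ ^ (2 : ENNReal).toReal := by
          rw [lp.norm_rpow_eq_tsum hp]
      _ = (c * ‖x‖) ^ (2 : ENNReal).toReal := by
          rw [Real.mul_rpow hc (norm_nonneg _), e.repr.norm_map x]
  have h2 : (2 : ENNReal).toReal = (2 : ℝ) := by norm_num
  rw [h2] at key
  exact sq_le_of_norm (norm_nonneg _) (by positivity) key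

lemma FF_norm (n : ℕ) : ‖FF e n‖ ≤ 1 := by
  refine diag_norm e zero_le_one (a := fun k => if k < n then 1 else 0) (fun k => ?_) (fun k => ?_)
  · rw [FF_apply_basis]; by_cases h : k < n <;> simp [h]
  · by_cases h : k < n <;> simp [h]

lemma one_sub_FF_apply_basis (n j : ℕ) :
    ((1 : H →L[ℂ] H) - FF e n) (e j) = (if j < n then (0:ℂ) else 1) • e j := by
  simp only [ContinuousLinearMap.sub_apply, ContinuousLinearMap.one_apply, FF_apply_basis]
  by_cases h : j < n <;> simp [h]

lemma one_sub_FF_norm (n : ℕ) : ‖(1 : H →L[ℂ] H) - FF e n‖ ≤ 1 := by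
  refine diag_norm e zero_le_one (a := fun k => if k < n then 0 else 1)
    (fun k => one_sub_FF_apply_basis e n k) (fun k => ?_)
  by_cases h : k < n <;> simp [h]

lemma one_sub_FF_apply_le (n : ℕ) (x : H) : ‖((1 : H →L[ℂ] H) - FF e n) x‖ ≤ ‖x‖ := by
  calc ‖((1 : H →L[ℂ] H) - FF e n) x‖ ≤ ‖(1 : H →L[ℂ] H) - FF e n‖ * ‖x‖ :=
        ContinuousLinearMap.le_opNorm _ _
    _ ≤ 1 * ‖x‖ := mul_le_mul_of_nonneg_right (one_sub_FF_norm e n) (norm_nonneg x)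
    _ = ‖x‖ := one_mul _

lemma rk_sa (k : ℕ) : IsSelfAdjoint (rk e k) := by
  rw [ContinuousLinearMap.isSelfAdjoint_iff']
  refine ((ContinuousLinearMap.eq_adjoint_iff _ _).mpr ?_).symm
  intro x y
  simp only [rk_apply, inner_smul_left, inner_smul_right]
  rw [← inner_conj_symm x (e k)]
  ring

lemma FF_sa (n : ℕ) : IsSelfAdjoint (FF e n) := by
  unfold FF
  rw [IsSelfAdjoint, star_sum]
  exact Finset.sum_congr rfl fun k _ => (rk_sa e k).star_eq

lemma one_sub_FF_sa (n : ℕ) : IsSelfAdjoint ((1 : H →L[ℂ] H) - FF e n) :=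
  (by rw [IsSelfAdjoint, star_one] : IsSelfAdjoint (1 : H →L[ℂ] H)).sub (FF_sa e n)

lemma FF_tendsto (x : H) : Filter.Tendsto (fun n => FF e n x) Filter.atTop (nhds x) := by
  have h := (e.hasSum_repr x).tendsto_sum_nat
  have heq : (fun n => FF e n x) = fun n => ∑ k ∈ Finset.range n, e.repr x k • e k := by
    funext n
    rw [FF_apply]
    exact Finset.sum_congr rfl fun k _ => by rw [e.repr_apply_apply]
  rw [heq]
  exact h

/-- rank one operators are compact. -/
lemma rk_compact (u v : H) : IsCompactOperator ⇑((innerSL ℂ u).smulRight v) := by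
  refine ⟨(fun c : ℂ => c • v) '' Metric.closedBall 0 ‖u‖,
    ((isCompact_closedBall (0:ℂ) ‖u‖).image (continuous_id.smul continuous_const)), ?_⟩
  refine Filter.mem_of_superset (Metric.closedBall_mem_nhds (0:H) one_pos) ?_
  intro x hx
  refine ⟨⟪u, x⟫_ℂ, ?_, rfl⟩
  rw [Metric.mem_closedBall, dist_zero_right] at hx ⊢
  calc ‖⟪u, x⟫_ℂ‖ ≤ ‖u‖ * ‖x‖ := norm_inner_le_norm u x
    _ ≤ ‖u‖ * 1 := mul_le_mul_of_nonneg_left hx (norm_nonneg u)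
    _ = ‖u‖ := mul_one _

lemma FF_compact (n : ℕ) : IsCompactOperator ⇑(FF e n) := by
  induction n with
  | zero =>
      simp only [FF, Finset.range_zero, Finset.sum_empty]
      exact isCompactOperator_zero
  | succ n ih =>
      have h : FF e (n+1) = FF e n + rk e n := by rw [FF, FF, Finset.sum_range_succ]
      rw [h]
      exact ih.add (rk_compact (e n) (e n))

/-- The key approximation: the "tail" of a compact operator is small. -/
lemma tail_small {K : H →L[ℂ] H} (hK : IsCompactOperator ⇑K) {δ : ℝ} (hδ : 0 < δ) :
    ∃ N : ℕ, ∀ n ≥ N, ‖((1 : H →L[ℂ] H) - FF e n) ∘L K‖ ≤ δ := by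
  obtain ⟨C, hCc, hC⟩ := hK.image_closedBall_subset_compact (1 : ℝ)
  have htb : TotallyBounded (⇑K '' Metric.closedBall 0 1) := hCc.totallyBounded.subset hC
  obtain ⟨t, htf, hts⟩ := Metric.totallyBounded_iff.mp htb (δ/3) (by linarith)
  have hN : ∀ y : H, ∃ N : ℕ, ∀ n ≥ N, ‖y - FF e n y‖ < δ/3 := by
    intro y
    have h3 : Filter.Tendsto (fun n => y - FF e n y) Filter.atTop (nhds 0) := by
      have h0 := Filter.Tendsto.sub (tendsto_const_nhds (x := y) (f := Filter.atTop))
        (FF_tendsto e y)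
      simpa using h0
    have h4 : Filter.Tendsto (fun n => ‖y - FF e n y‖) Filter.atTop (nhds 0) := by
      simpa using h3.norm
    exact Filter.eventually_atTop.mp (h4.eventually_lt_const (by linarith))
  choose NN hNN using hN
  refine ⟨htf.toFinset.sup NN, fun n hn => ?_⟩
  refine ContinuousLinearMap.opNorm_le_bound _ hδ.le fun x => ?_
  rcases eq_or_ne x 0 with rfl | hx
  · simp
  · set u : H := ‖x‖⁻¹ • x with hu
    have hxn : ‖x‖ ≠ 0 := norm_ne_zero_iff.mpr hx
    have hunorm : ‖u‖ ≤ 1 := by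
      rw [hu, norm_smul, norm_inv, norm_norm, inv_mul_cancel₀ hxn]
    have hKu : K u ∈ ⇑K '' Metric.closedBall 0 1 :=
      ⟨u, by simpa [Metric.mem_closedBall, dist_zero_right] using hunorm, rfl⟩
    obtain ⟨y, hyt, hyb⟩ := Set.mem_iUnion₂.mp (hts hKu)
    have hn' : n ≥ NN y := le_trans (Finset.le_sup (htf.mem_toFinset.mpr hyt)) hn
    have h1 : ‖((1 : H →L[ℂ] H) - FF e n) (K u)‖ ≤ δ := by
      have hsplit : ((1 : H →L[ℂ] H) - FF e n) (K u)
          = ((1 : H →L[ℂ] H) - FF e n) (K u - y) + ((1 : H →L[ℂ] H) - FF e n) y := by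
        rw [← map_add]; congr 1; abel
      rw [hsplit]
      have hy2 : ‖((1 : H →L[ℂ] H) - FF e n) y‖ = ‖y - FF e n y‖ := by
        simp [ContinuousLinearMap.sub_apply]
      calc ‖((1 : H →L[ℂ] H) - FF e n) (K u - y) + ((1 : H →L[ℂ] H) - FF e n) y‖
          ≤ ‖((1 : H →L[ℂ] H) - FF e n) (K u - y)‖ + ‖((1 : H →L[ℂ] H) - FF e n) y‖ :=
            norm_add_le _ _
        _ ≤ ‖K u - y‖ + ‖y - FF e n y‖ := by
            rw [hy2]; exact add_le_add (one_sub_FF_apply_le e n _) le_rfl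
        _ ≤ δ/3 + δ/3 := by
            refine add_le_add ?_ (hNN y n hn').le
            rw [Metric.mem_ball, dist_eq_norm] at hyb
            exact hyb.le
        _ ≤ δ := by linarith
    have hxu : x = ‖x‖ • u := by
      rw [hu, smul_smul, mul_inv_cancel₀ hxn, one_smul]
    calc ‖(((1 : H →L[ℂ] H) - FF e n) ∘L K) x‖
        = ‖((1 : H →L[ℂ] H) - FF e n) (K x)‖ := rfl
      _ = ‖x‖ * ‖((1 : H →L[ℂ] H) - FF e n) (K u)‖ := by
          nth_rewrite 1 [hxu]
          rw [map_smul_of_tower, map_smul_of_tower, norm_smul, norm_norm]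
      _ ≤ ‖x‖ * δ := mul_le_mul_of_nonneg_left h1 (norm_nonneg x)
      _ = δ * ‖x‖ := mul_comm _ _

/-- Control of `K ∘ (1 - Fₙ)` via the tail of `K* K`. -/
lemma right_small {K : H →L[ℂ] H} {n : ℕ} {δ : ℝ} (hδ : 0 < δ)
    (h : ‖((1 : H →L[ℂ] H) - FF e n) ∘L (ContinuousLinearMap.adjoint K ∘L K)‖ ≤ δ^2) :
    ‖K ∘L ((1 : H →L[ℂ] H) - FF e n)‖ ≤ δ := by
  refine ContinuousLinearMap.opNorm_le_bound _ hδ.le fun x => ?_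
  set P : H →L[ℂ] H := (1 : H →L[ℂ] H) - FF e n with hP
  set u : H := P x with hu
  have hsym : ∀ a b : H, ⟪P a, b⟫_ℂ = ⟪a, P b⟫_ℂ := fun a b =>
    ((ContinuousLinearMap.isSelfAdjoint_iff_isSymmetric).mp (one_sub_FF_sa e n)) a b
  have key : ‖K u‖^2 ≤ δ^2 * ‖x‖^2 := by
    have h1 : (⟪K u, K u⟫_ℂ) = ⟪x, P ((ContinuousLinearMap.adjoint K ∘L K) u)⟫_ℂ := by
      rw [← ContinuousLinearMap.adjoint_inner_right]
      rw [hu, ← hsym]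
      rfl
    have h2 : ‖K u‖^2 = ‖(⟪K u, K u⟫_ℂ)‖ := by
      rw [inner_self_eq_norm_sq_to_K (𝕜 := ℂ), norm_pow]
      simp
    have h3 : ‖(⟪x, P ((ContinuousLinearMap.adjoint K ∘L K) u)⟫_ℂ)‖
        ≤ ‖x‖ * (δ^2 * ‖x‖) := by
      calc ‖(⟪x, P ((ContinuousLinearMap.adjoint K ∘L K) u)⟫_ℂ)‖
          ≤ ‖x‖ * ‖P ((ContinuousLinearMap.adjoint K ∘L K) u)‖ := norm_inner_le_norm _ _
        _ ≤ ‖x‖ * (δ^2 * ‖x‖) := by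
            refine mul_le_mul_of_nonneg_left ?_ (norm_nonneg x)
            calc ‖P ((ContinuousLinearMap.adjoint K ∘L K) u)‖
                = ‖(P ∘L (ContinuousLinearMap.adjoint K ∘L K)) u‖ := rfl
              _ ≤ ‖P ∘L (ContinuousLinearMap.adjoint K ∘L K)‖ * ‖u‖ :=
                  ContinuousLinearMap.le_opNorm _ _
              _ ≤ δ^2 * ‖x‖ := by
                  refine mul_le_mul h (by rw [hu, hP]; exact one_sub_FF_apply_le e n x)
                    (norm_nonneg u) (by positivity)
    calc ‖K u‖^2 = ‖(⟪K u, K u⟫_ℂ)‖ := h2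
      _ = ‖(⟪x, P ((ContinuousLinearMap.adjoint K ∘L K) u)⟫_ℂ)‖ := by rw [h1]
      _ ≤ ‖x‖ * (δ^2 * ‖x‖) := h3
      _ = δ^2 * ‖x‖^2 := by ring
  have hb : (0:ℝ) ≤ δ * ‖x‖ := by positivity
  show ‖K u‖ ≤ δ * ‖x‖
  nlinarith [key, hb, norm_nonneg (K u), sq_nonneg (‖K u‖ - δ * ‖x‖), sq_nonneg (‖K u‖ + δ * ‖x‖)]

/-- a diagonal operator acts diagonally on basis vectors. -/
lemma diag_apply {D : H →L[ℂ] H} (hD : IsDiagonal e D) (k : ℕ) :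
    D (e k) = (⟪e k, D (e k)⟫_ℂ) • e k := by
  apply e.repr.injective
  apply lp.ext
  funext j
  rw [LinearIsometryEquiv.map_smul]
  have hL : (e.repr (D (e k))) j = ⟪e j, D (e k)⟫_ℂ := e.repr_apply_apply _ _
  show (e.repr (D (e k))) j = (((⟪e k, D (e k)⟫_ℂ) • e.repr (e k)) : lp (fun _ : ℕ => ℂ) 2) j
  by_cases h : j = k
  · subst h
    rw [hL, lp.coeFn_smul, Pi.smul_apply, e.repr_self, lp.single_apply_self, smul_eq_mul,
      mul_one]
  · rw [hL, hD k j (fun hkj => h hkj.symm), lp.coeFn_smul, Pi.smul_apply, e.repr_self,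
      lp.single_apply_ne 2 k 1 h, smul_eq_mul, mul_zero]

/-- applying a polynomial of an operator to an eigenvector. -/
lemma aeval_eigen {T : H →L[ℂ] H} {μ : ℂ} {x : H} (hx : T x = μ • x) (p : Polynomial ℂ) :
    (Polynomial.aeval T p) x = p.eval μ • x := by
  have hpow : ∀ m : ℕ, (T ^ m) x = μ ^ m • x := by
    intro m
    induction m with
    | zero => simp
    | succ m ih =>
        rw [pow_succ, ContinuousLinearMap.mul_apply, hx, map_smul, ih, smul_smul, pow_succ]
        rw [mul_comm]
  induction p using Polynomial.induction_on' with
  | add p q hp hq =>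
      simp only [map_add, ContinuousLinearMap.add_apply, hp, hq, Polynomial.eval_add, add_smul]
  | monomial m a =>
      rw [Polynomial.aeval_monomial, Polynomial.eval_monomial, ContinuousLinearMap.mul_apply,
        hpow, Algebra.algebraMap_eq_smul_one]
      simp [smul_smul, mul_comm]

/-- polynomial evaluation commutes with restriction to an invariant subspace. -/
lemma aeval_restrict {T : H →L[ℂ] H} {V : Submodule ℂ H}
    (hV : ∀ v ∈ V, (T : H →ₗ[ℂ] H) v ∈ V) (p : Polynomial ℂ) :
    ∀ x (hx : x ∈ V), (Polynomial.aeval T p) x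
      = ((Polynomial.aeval ((T : H →ₗ[ℂ] H).restrict hV) p) ⟨x, hx⟩ : H) := by
  set L : V →ₗ[ℂ] V := (T : H →ₗ[ℂ] H).restrict hV with hL
  have hpow : ∀ (m : ℕ) x (hx : x ∈ V), (T ^ m) x = ((L ^ m) ⟨x, hx⟩ : H) := by
    intro m
    induction m with
    | zero => intro x hx; simp
    | succ m ih =>
        intro x hx
        have hTx : (T : H →ₗ[ℂ] H) x ∈ V := hV x hx
        have h1 : (T ^ (m+1)) x = (T ^ m) (T x) := by
          rw [pow_succ, ContinuousLinearMap.mul_apply]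
        have h2 : (L ^ (m+1)) ⟨x, hx⟩ = (L ^ m) (L ⟨x, hx⟩) := by
          rw [pow_succ, Module.End.mul_apply]
        have h3 : L ⟨x, hx⟩ = ⟨T x, hTx⟩ := Subtype.ext (by simp [hL, LinearMap.restrict_apply])
        rw [h1, h2, h3, ih (T x) hTx]
  induction p using Polynomial.induction_on' with
  | add p q hp hq =>
      intro x hx
      simp only [map_add, ContinuousLinearMap.add_apply, LinearMap.add_apply, hp x hx, hq x hx,
        Submodule.coe_add]
  | monomial m a =>
      intro x hx
      rw [Polynomial.aeval_monomial, Polynomial.aeval_monomial, ContinuousLinearMap.mul_apply,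
        Module.End.mul_apply, hpow m x hx, Algebra.algebraMap_eq_smul_one,
        Algebra.algebraMap_eq_smul_one]
      simp

section BB

variable (s : ℕ → ℂ)

/-- The closed subspace spanned by the basis vectors where `s` takes value `v`. -/
noncomputable def UU (v : ℂ) : Submodule ℂ H :=
  (Submodule.span ℂ (e '' {k | s k = v})).topologicalClosure

instance UU_has (v : ℂ) : Submodule.HasOrthogonalProjection (UU e s v) :=
  haveI : CompleteSpace (UU e s v) := by unfold UU; infer_instance
  inferInstance

/-- The spectral projection associated to the value `v`. -/
noncomputable def PP (v : ℂ) : H →L[ℂ] H :=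
  (UU e s v).subtypeL ∘L (UU e s v).orthogonalProjectionOnto

lemma PP_apply_eq {v : ℂ} {k : ℕ} (h : s k = v) : PP e s v (e k) = e k := by
  have hk : e k ∈ UU e s v :=
    Submodule.le_topologicalClosure _ (Submodule.subset_span ⟨k, h, rfl⟩)
  have := Submodule.starProjection_eq_self_iff.mpr hk
  exact this

lemma PP_apply_ne {v : ℂ} {k : ℕ} (h : s k ≠ v) : PP e s v (e k) = 0 := by
  have hk : e k ∈ (UU e s v)ᗮ := by
    rw [Submodule.mem_orthogonal]
    intro u hu
    have hgen : Submodule.span ℂ (e '' {k' | s k' = v}) ≤ LinearMap.ker (innerSL ℂ (e k) : H →ₗ[ℂ] ℂ) := by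
      rw [Submodule.span_le]
      rintro _ ⟨j, hj, rfl⟩
      have hjk : k ≠ j := by
        rintro rfl; exact h hj
      simp only [SetLike.mem_coe, LinearMap.mem_ker, ContinuousLinearMap.coe_coe,
        innerSL_apply_apply]
      rw [inner_basis, if_neg hjk]
    have hle : UU e s v ≤ LinearMap.ker (innerSL ℂ (e k) : H →ₗ[ℂ] ℂ) :=
      Submodule.topologicalClosure_minimal _ hgen (ContinuousLinearMap.isClosed_ker (innerSL ℂ (e k)))
    have h0 : ⟪e k, u⟫_ℂ = 0 := hle hu
    rw [← inner_conj_symm, h0, map_zero]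
  have h0 : (UU e s v).orthogonalProjectionOnto (e k) = 0 :=
    Submodule.orthogonalProjectionOnto_apply_of_mem_orthogonal hk
  simp [PP, h0]

lemma PP_sa (v : ℂ) : IsSelfAdjoint (PP e s v) :=
  haveI : CompleteSpace (UU e s v) := by unfold UU; infer_instance
  isSelfAdjoint_starProjection _

variable (hs : (Set.range s).Finite)

/-- The diagonal operator with entries `s`. -/
noncomputable def BB : H →L[ℂ] H := ∑ v ∈ hs.toFinset, v • PP e s v

lemma BB_apply_basis (k : ℕ) : BB e s hs (e k) = s k • e k := by
  unfold BB
  rw [ContinuousLinearMap.sum_apply]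
  rw [Finset.sum_eq_single (s k)]
  · simp only [ContinuousLinearMap.smul_apply]
    rw [PP_apply_eq e s rfl]
  · intro v _ hv
    simp only [ContinuousLinearMap.smul_apply]
    rw [PP_apply_ne e s (fun hh => hv (hh ▸ rfl)), smul_zero]
  · intro hmem
    exact absurd (hs.mem_toFinset.mpr ⟨k, rfl⟩) hmem

lemma BB_diag : IsDiagonal e (BB e s hs) := by
  intro a b hab
  rw [BB_apply_basis, inner_smul_right, inner_basis, if_neg (fun hba => hab hba.symm), mul_zero]

lemma BB_sa (hreal : ∀ k, (starRingEnd ℂ) (s k) = s k) : IsSelfAdjoint (BB e s hs) := by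
  unfold BB
  rw [IsSelfAdjoint, star_sum]
  refine Finset.sum_congr rfl fun v hv => ?_
  obtain ⟨k, rfl⟩ := hs.mem_toFinset.mp hv
  rw [star_smul, (PP_sa e s (s k)).star_eq, RCLike.star_def, hreal k]

end BB

/-- The core construction. -/
lemma core (T D K : H →L[ℂ] H) (hD : IsDiagonal e D) (hK : IsCompactOperator ⇑K)
    (hT : T = D + K) (n : ℕ) (s : ℕ → ℂ) (hs : (Set.range s).Finite)
    (hs0 : ∀ k, k < n → s k = 0) {c : ℝ} (hc : 0 ≤ c)
    (hclose : ∀ k, n ≤ k → ‖⟪e k, D (e k)⟫_ℂ - s k‖ ≤ c) :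
    ∃ T' ∈ DplusK e, (spectrum ℂ T').Finite ∧
      ‖T - T'‖ ≤ c + ‖((1 : H →L[ℂ] H) - FF e n) ∘L K‖ +
        ‖K ∘L ((1 : H →L[ℂ] H) - FF e n)‖ ∧
      ((∀ k, (starRingEnd ℂ) (s k) = s k) → IsSelfAdjoint T → IsSelfAdjoint T') := by
  classical
  set F : H →L[ℂ] H := FF e n with hF
  set A : H →L[ℂ] H := F * (T * F) with hA
  set B : H →L[ℂ] H := BB e s hs with hB
  -- membership
  have hAcompact : IsCompactOperator ⇑A := by
    have h1 : ⇑A = ⇑F ∘ ⇑(T * F) := rfl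
    rw [h1]
    exact (FF_compact e n).comp_clm (T * F)
  have hmem : A + B ∈ DplusK e :=
    ⟨B, A, BB_diag e s hs, hAcompact, (add_comm A B).symm ▸ rfl⟩
  -- eigenvectors in the tail
  have hFbasis_ge : ∀ k, n ≤ k → F (e k) = 0 := by
    intro k hk
    rw [hF, FF_apply_basis, if_neg (Nat.not_lt.mpr hk)]
  have heigen : ∀ k, n ≤ k → (A + B) (e k) = s k • e k := by
    intro k hk
    rw [ContinuousLinearMap.add_apply, hA, ContinuousLinearMap.mul_apply,
      ContinuousLinearMap.mul_apply, hFbasis_ge k hk, map_zero, map_zero, zero_add, hB,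
      BB_apply_basis]
  -- the invariant finite-dimensional subspace
  set V : Submodule ℂ H := Submodule.span ℂ (e '' Set.Iio n) with hVdef
  haveI : FiniteDimensional ℂ V := FiniteDimensional.span_of_finite ℂ ((Set.finite_Iio n).image e)
  have hFmem : ∀ x : H, F x ∈ V := by
    intro x
    rw [hF, FF_apply]
    refine Submodule.sum_mem _ fun k hk => Submodule.smul_mem _ _ ?_
    exact Submodule.subset_span ⟨k, Set.mem_Iio.mpr (Finset.mem_range.mp hk), rfl⟩
  have hBV : ∀ x ∈ V, B x = 0 := by
    intro x hx
    induction hx using Submodule.span_induction with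
    | mem y hy =>
        obtain ⟨k, hk, rfl⟩ := hy
        rw [hB, BB_apply_basis, hs0 k (Set.mem_Iio.mp hk), zero_smul]
    | zero => simp
    | add a b _ _ ha hb => simp [ha, hb]
    | smul r a _ ha => simp [ha]
  have hV : ∀ v ∈ V, ((A + B : H →L[ℂ] H) : H →ₗ[ℂ] H) v ∈ V := by
    intro v hv
    have h1 : ((A + B : H →L[ℂ] H) : H →ₗ[ℂ] H) v = A v + B v := rfl
    rw [h1, hBV v hv, add_zero, hA, ContinuousLinearMap.mul_apply]
    exact hFmem _
  set L : V →ₗ[ℂ] V := (((A + B : H →L[ℂ] H)) : H →ₗ[ℂ] H).restrict hV with hLdef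
  set pA : Polynomial ℂ := L.charpoly with hpA
  set pB : Polynomial ℂ := ∏ v ∈ hs.toFinset, (Polynomial.X - Polynomial.C v) with hpB
  set Q : Polynomial ℂ := pB * pA with hQ
  have hQmonic : Q.Monic :=
    (Polynomial.monic_prod_of_monic _ _ fun v _ => Polynomial.monic_X_sub_C v).mul
      (LinearMap.charpoly_monic L)
  have hQ0 : Polynomial.aeval (A + B : H →L[ℂ] H) Q = 0 := by
    refine ext_basis e fun k => ?_
    rw [ContinuousLinearMap.zero_apply]
    by_cases hk : k < n
    · rw [hQ, map_mul, ContinuousLinearMap.mul_apply]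
      have hkV : e k ∈ V := Submodule.subset_span ⟨k, Set.mem_Iio.mpr hk, rfl⟩
      have h1 : (Polynomial.aeval (A + B : H →L[ℂ] H) pA) (e k) = 0 := by
        rw [aeval_restrict hV pA (e k) hkV]
        rw [hpA, LinearMap.aeval_self_charpoly]
        simp
      rw [h1, map_zero]
    · have hk' : n ≤ k := Nat.not_lt.mp hk
      rw [aeval_eigen (heigen k hk') Q]
      have hroot : Q.eval (s k) = 0 := by
        rw [hQ, Polynomial.eval_mul, hpB]
        have : (∏ v ∈ hs.toFinset, (Polynomial.X - Polynomial.C v)).eval (s k) = 0 := by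
          rw [Polynomial.eval_prod]
          exact Finset.prod_eq_zero (hs.mem_toFinset.mpr ⟨k, rfl⟩) (by simp)
        rw [this, zero_mul]
      rw [hroot, zero_smul]
  -- nontriviality
  have he0 : (e 0 : H) ≠ 0 := by
    intro h0
    have h1 := e.orthonormal.1 0
    rw [h0, norm_zero] at h1
    exact one_ne_zero h1.symm
  haveI : Nontrivial (H →L[ℂ] H) := by
    refine ⟨1, 0, fun h01 => he0 ?_⟩
    have := congrArg (fun M : H →L[ℂ] H => M (e 0)) h01
    simpa using this
  have hspec : (spectrum ℂ (A + B : H →L[ℂ] H)).Finite := by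
    refine (Polynomial.finite_setOf_isRoot hQmonic.ne_zero).subset ?_
    intro z hz
    have hmem2 := spectrum.subset_polynomial_aeval (A + B : H →L[ℂ] H) Q ⟨z, hz, rfl⟩
    rw [hQ0, spectrum.zero_eq] at hmem2
    simpa [Polynomial.IsRoot] using hmem2
  -- the norm estimate
  have hDel : ‖D - F * D * F - B‖ ≤ c := by
    refine diag_norm e hc
      (a := fun k => if k < n then 0 else ⟪e k, D (e k)⟫_ℂ - s k) (fun k => ?_) (fun k => ?_)
    · show (D - F * D * F - B) (e k) = (if k < n then 0 else ⟪e k, D (e k)⟫_ℂ - s k) • e k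
      by_cases hk : k < n
      · rw [if_pos hk]
        have hFk : F (e k) = e k := by rw [hF, FF_apply_basis, if_pos hk]
        rw [ContinuousLinearMap.sub_apply, ContinuousLinearMap.sub_apply,
          ContinuousLinearMap.mul_apply, ContinuousLinearMap.mul_apply, hFk,
          diag_apply e hD k, map_smul, hFk, hB, BB_apply_basis, hs0 k hk]
        simp
      · rw [if_neg hk]
        rw [ContinuousLinearMap.sub_apply, ContinuousLinearMap.sub_apply,
          ContinuousLinearMap.mul_apply, ContinuousLinearMap.mul_apply,
          hFbasis_ge k (Nat.not_lt.mp hk), map_zero, map_zero, sub_zero, hB, BB_apply_basis,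
          sub_smul]
        congr 1
        exact diag_apply e hD k
    · show ‖if k < n then 0 else ⟪e k, D (e k)⟫_ℂ - s k‖ ≤ c
      by_cases hk : k < n
      · rw [if_pos hk]; simpa using hc
      · rw [if_neg hk]; exact hclose k (Nat.not_lt.mp hk)
  have hid : T - (A + B) = (D - F * D * F - B)
      + ((((1 : H →L[ℂ] H) - F) * K) + (F * (K * ((1 : H →L[ℂ] H) - F)))) := by
    rw [hA, hT]
    noncomm_ring
  have hnorm : ‖T - (A + B)‖ ≤ c + ‖((1 : H →L[ℂ] H) - F) ∘L K‖
      + ‖K ∘L ((1 : H →L[ℂ] H) - F)‖ := by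
    rw [hid]
    calc ‖(D - F * D * F - B) + ((((1 : H →L[ℂ] H) - F) * K)
            + (F * (K * ((1 : H →L[ℂ] H) - F))))‖
        ≤ ‖D - F * D * F - B‖ + ‖(((1 : H →L[ℂ] H) - F) * K)
            + (F * (K * ((1 : H →L[ℂ] H) - F)))‖ := norm_add_le _ _
      _ ≤ ‖D - F * D * F - B‖ + (‖((1 : H →L[ℂ] H) - F) * K‖
            + ‖F * (K * ((1 : H →L[ℂ] H) - F))‖) := by
          gcongr
          exact norm_add_le _ _
      _ ≤ c + (‖((1 : H →L[ℂ] H) - F) * K‖ + ‖K * ((1 : H →L[ℂ] H) - F)‖) := by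
          gcongr
          calc ‖F * (K * ((1 : H →L[ℂ] H) - F))‖ ≤ ‖F‖ * ‖K * ((1 : H →L[ℂ] H) - F)‖ :=
                norm_mul_le _ _
            _ ≤ 1 * ‖K * ((1 : H →L[ℂ] H) - F)‖ :=
                mul_le_mul_of_nonneg_right (FF_norm e n) (norm_nonneg _)
            _ = ‖K * ((1 : H →L[ℂ] H) - F)‖ := one_mul _
      _ = c + ‖((1 : H →L[ℂ] H) - F) ∘L K‖ + ‖K ∘L ((1 : H →L[ℂ] H) - F)‖ := by
          rw [ContinuousLinearMap.mul_def, ContinuousLinearMap.mul_def]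
          ring
  -- self-adjointness
  have hsa : (∀ k, (starRingEnd ℂ) (s k) = s k) → IsSelfAdjoint T → IsSelfAdjoint (A + B) := by
    intro hreal hTsa
    refine IsSelfAdjoint.add ?_ (BB_sa e s hs hreal)
    show star A = A
    rw [hA, star_mul, star_mul, (FF_sa e n).star_eq, hTsa.star_eq, ← hF, mul_assoc]
  exact ⟨A + B, hmem, hspec, hnorm, hsa⟩

/-- rounding to a grid of mesh `δ`. -/
noncomputable def rround (δ x : ℝ) : ℝ := δ * (⌊x / δ⌋ : ℤ)

lemma rround_close {δ : ℝ} (hδ : 0 < δ) (x : ℝ) : |x - rround δ x| ≤ δ := by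
  have hfr : x - rround δ x = δ * Int.fract (x / δ) := by
    rw [rround, Int.fract]
    field_simp
  rw [hfr, abs_of_nonneg (mul_nonneg hδ.le (Int.fract_nonneg _))]
  calc δ * Int.fract (x/δ) ≤ δ * 1 := mul_le_mul_of_nonneg_left (Int.fract_lt_one _).le hδ.le
    _ = δ := mul_one δ

lemma floor_bound {δ M : ℝ} (hδ : 0 < δ) {x : ℝ} (hx : |x| ≤ M) :
    ⌊x / δ⌋ ∈ Finset.Icc (-(⌈M / δ⌉ + 1)) (⌈M / δ⌉ + 1) := by
  have hceil := Int.le_ceil (M / δ)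
  have hx1 := (abs_le.mp hx).1
  have hx2 := (abs_le.mp hx).2
  have hd1 : (-M) / δ ≤ x / δ := by gcongr
  have hd2 : x / δ ≤ M / δ := by gcongr
  rw [Finset.mem_Icc]
  constructor
  · refine Int.le_floor.mpr ?_
    push_cast
    calc -((⌈M / δ⌉:ℝ) + 1) ≤ -(M/δ) := by linarith
      _ = (-M)/δ := (neg_div δ M).symm
      _ ≤ x / δ := hd1
  · have h1 : ((⌊x / δ⌋ : ℤ) : ℝ) ≤ ((⌈M / δ⌉ + 1 : ℤ) : ℝ) := by
      push_cast
      calc ((⌊x / δ⌋ : ℤ) : ℝ) ≤ x / δ := Int.floor_le _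
        _ ≤ M / δ := hd2
        _ ≤ (⌈M / δ⌉:ℝ) + 1 := by linarith
    exact_mod_cast h1

lemma cround_close {δ : ℝ} (hδ : 0 < δ) (z : ℂ) :
    ‖z - (↑(rround δ z.re) + ↑(rround δ z.im) * Complex.I)‖ ≤ 2 * δ := by
  set w : ℂ := ↑(rround δ z.re) + ↑(rround δ z.im) * Complex.I with hw
  have hre : (z - w).re = z.re - rround δ z.re := by simp [hw]
  have him : (z - w).im = z.im - rround δ z.im := by simp [hw]
  calc ‖z - w‖ = ‖z - w‖ := rfl
    _ ≤ |(z - w).re| + |(z - w).im| := Complex.norm_le_abs_re_add_abs_im _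
    _ ≤ δ + δ := by
        rw [hre, him]
        exact add_le_add (rround_close hδ z.re) (rround_close hδ z.im)
    _ = 2 * δ := by ring

lemma d_bound (D : H →L[ℂ] H) (k : ℕ) : ‖⟪e k, D (e k)⟫_ℂ‖ ≤ ‖D‖ := by
  have h1 : ‖e k‖ = 1 := e.orthonormal.1 k
  calc ‖⟪e k, D (e k)⟫_ℂ‖ ≤ ‖e k‖ * ‖D (e k)‖ := norm_inner_le_norm _ _
    _ = ‖D (e k)‖ := by rw [h1, one_mul]
    _ ≤ ‖D‖ * ‖e k‖ := ContinuousLinearMap.le_opNorm _ _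
    _ = ‖D‖ := by rw [h1, mul_one]

end DKAux

open DKAux in
/-- Elements of `D+K` with finite spectrum are norm dense in `D+K`; moreover self-adjoint elements
with finite spectrum are dense in the self-adjoint part of `D+K` (real rank zero). -/
theorem finite_spectrum_dense (e : HilbertBasis ℕ ℂ H) :
    (∀ T ∈ DplusK e, ∀ ε > (0 : ℝ),
      ∃ T' ∈ DplusK e, (spectrum ℂ T').Finite ∧ ‖T - T'‖ < ε) ∧
    (∀ T ∈ DplusK e, IsSelfAdjoint T → ∀ ε > (0 : ℝ),
      ∃ T' ∈ DplusK e, IsSelfAdjoint T' ∧ (spectrum ℂ T').Finite ∧ ‖T - T'‖ < ε) := by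
  constructor
  · -- general density
    rintro T ⟨D, K, hD, hK, hT⟩ ε hε
    have hδ : (0:ℝ) < ε/8 := by linarith
    obtain ⟨N₁, hN₁⟩ := tail_small e hK hδ
    have hKKc : IsCompactOperator ⇑(ContinuousLinearMap.adjoint K ∘L K) := by
      have h1 : ⇑(ContinuousLinearMap.adjoint K ∘L K) = ⇑(ContinuousLinearMap.adjoint K) ∘ ⇑K := rfl
      rw [h1]
      exact hK.continuous_comp (ContinuousLinearMap.adjoint K).continuous
    obtain ⟨N₂, hN₂⟩ := tail_small e hKKc (show (0:ℝ) < (ε/8)^2 by positivity)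
    set n := max N₁ N₂ with hn
    have hleft : ‖(1 - FF e n) ∘L K‖ ≤ ε/8 := hN₁ n (le_max_left _ _)
    have hright : ‖K ∘L (1 - FF e n)‖ ≤ ε/8 := right_small e hδ (hN₂ n (le_max_right _ _))
    set s : ℕ → ℂ := fun k => if k < n then 0 else
      (↑(rround (ε/8) (⟪e k, D (e k)⟫_ℂ).re) +
        ↑(rround (ε/8) (⟪e k, D (e k)⟫_ℂ).im) * Complex.I) with hsdef
    have hs0 : ∀ k, k < n → s k = 0 := by
      intro k hk; simp only [hsdef]; rw [if_pos hk]
    have hsfin : (Set.range s).Finite := by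
      set M : ℤ := ⌈‖D‖/(ε/8)⌉ + 1 with hM
      have hsub : Set.range s ⊆ insert (0:ℂ)
          ((fun p : ℤ × ℤ => ((ε/8 * (p.1:ℝ) : ℝ) : ℂ) + ((ε/8 * (p.2:ℝ) : ℝ) : ℂ) * Complex.I) ''
            ↑(Finset.Icc (-M) M ×ˢ Finset.Icc (-M) M)) := by
        rintro - ⟨k, rfl⟩
        by_cases hk : k < n
        · exact Or.inl (hs0 k hk)
        · refine Or.inr ⟨(⌊(⟪e k, D (e k)⟫_ℂ).re/(ε/8)⌋, ⌊(⟪e k, D (e k)⟫_ℂ).im/(ε/8)⌋), ?_, ?_⟩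
          · have hdb : ‖⟪e k, D (e k)⟫_ℂ‖ ≤ ‖D‖ := d_bound e D k
            have hre : |(⟪e k, D (e k)⟫_ℂ).re| ≤ ‖D‖ :=
              le_trans (Complex.abs_re_le_norm _) hdb
            have him : |(⟪e k, D (e k)⟫_ℂ).im| ≤ ‖D‖ :=
              le_trans (Complex.abs_im_le_norm _) hdb
            simp only [Finset.coe_product, Set.mem_prod, Finset.mem_coe, hM]
            exact ⟨floor_bound hδ hre, floor_bound hδ him⟩
          · simp only [hsdef]
            rw [if_neg hk]
            simp [rround]
      exact (((Set.Finite.image _ (Finset.finite_toSet _)).insert 0)).subset hsub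
    have hclose : ∀ k, n ≤ k → ‖⟪e k, D (e k)⟫_ℂ - s k‖ ≤ 2 * (ε/8) := by
      intro k hk
      simp only [hsdef]
      rw [if_neg (Nat.not_lt.mpr hk)]
      exact cround_close hδ _
    obtain ⟨T', hT'mem, hT'fin, hT'norm, -⟩ :=
      core e T D K hD hK hT n s hsfin hs0 (by positivity) hclose
    refine ⟨T', hT'mem, hT'fin, lt_of_le_of_lt hT'norm ?_⟩
    linarith
  · -- self-adjoint density
    rintro T ⟨D, K, hD, hK, hT⟩ hTsa ε hε
    have hδ : (0:ℝ) < ε/8 := by linarith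
    obtain ⟨N₁, hN₁⟩ := tail_small e hK hδ
    have hKKc : IsCompactOperator ⇑(ContinuousLinearMap.adjoint K ∘L K) := by
      have h1 : ⇑(ContinuousLinearMap.adjoint K ∘L K) = ⇑(ContinuousLinearMap.adjoint K) ∘ ⇑K := rfl
      rw [h1]
      exact hK.continuous_comp (ContinuousLinearMap.adjoint K).continuous
    obtain ⟨N₂, hN₂⟩ := tail_small e hKKc (show (0:ℝ) < (ε/8)^2 by positivity)
    set n := max N₁ N₂ with hn
    have hleft : ‖(1 - FF e n) ∘L K‖ ≤ ε/8 := hN₁ n (le_max_left _ _)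
    have hright : ‖K ∘L (1 - FF e n)‖ ≤ ε/8 := right_small e hδ (hN₂ n (le_max_right _ _))
    -- imaginary parts of the tail diagonal entries are small
    have hIm : ∀ k, n ≤ k → |(⟪e k, D (e k)⟫_ℂ).im| ≤ ε/8 := by
      intro k hk
      have hsym := ContinuousLinearMap.isSelfAdjoint_iff_isSymmetric.mp hTsa
      have hconj : (starRingEnd ℂ) ⟪e k, T (e k)⟫_ℂ = ⟪e k, T (e k)⟫_ℂ := by
        rw [inner_conj_symm]
        exact hsym (e k) (e k)
      have him0 : (⟪e k, T (e k)⟫_ℂ).im = 0 := Complex.conj_eq_iff_im.mp hconj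
      have hsplit : ⟪e k, T (e k)⟫_ℂ = ⟪e k, D (e k)⟫_ℂ + ⟪e k, K (e k)⟫_ℂ := by
        rw [hT]; simp [inner_add_right]
      have him1 : (0:ℝ) = (⟪e k, D (e k)⟫_ℂ).im + (⟪e k, K (e k)⟫_ℂ).im := by
        rw [← Complex.add_im, ← hsplit, him0]
      have h6 : ‖e k‖ = 1 := e.orthonormal.1 k
      have h4 : |(⟪e k, K (e k)⟫_ℂ).im| ≤ ‖⟪e k, K (e k)⟫_ℂ‖ := by
        exact Complex.abs_im_le_norm _
      have h5 : ‖⟪e k, K (e k)⟫_ℂ‖ ≤ ‖K (e k)‖ := by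
        calc ‖⟪e k, K (e k)⟫_ℂ‖ ≤ ‖e k‖ * ‖K (e k)‖ := norm_inner_le_norm _ _
          _ = ‖K (e k)‖ := by rw [h6, one_mul]
      have h7 : K (e k) = (K ∘L (1 - FF e n)) (e k) := by
        rw [ContinuousLinearMap.comp_apply, one_sub_FF_apply_basis,
          if_neg (Nat.not_lt.mpr hk), one_smul]
      have h8 : ‖K (e k)‖ ≤ ‖K ∘L (1 - FF e n)‖ := by
        rw [h7]
        calc ‖(K ∘L (1 - FF e n)) (e k)‖ ≤ ‖K ∘L (1 - FF e n)‖ * ‖e k‖ :=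
              ContinuousLinearMap.le_opNorm _ _
          _ = ‖K ∘L (1 - FF e n)‖ := by rw [h6, mul_one]
      have h9 : |(⟪e k, D (e k)⟫_ℂ).im| = |(⟪e k, K (e k)⟫_ℂ).im| := by
        rw [show (⟪e k, D (e k)⟫_ℂ).im = -(⟪e k, K (e k)⟫_ℂ).im by linarith, abs_neg]
      rw [h9]
      linarith
    set s : ℕ → ℂ := fun k => if k < n then 0 else
      ((rround (ε/8) (⟪e k, D (e k)⟫_ℂ).re : ℝ) : ℂ) with hsdef
    have hs0 : ∀ k, k < n → s k = 0 := by
      intro k hk; simp only [hsdef]; rw [if_pos hk]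
    have hsfin : (Set.range s).Finite := by
      set M : ℤ := ⌈‖D‖/(ε/8)⌉ + 1 with hM
      have hsub : Set.range s ⊆ insert (0:ℂ)
          ((fun m : ℤ => ((ε/8 * (m:ℝ) : ℝ) : ℂ)) '' ↑(Finset.Icc (-M) M)) := by
        rintro - ⟨k, rfl⟩
        by_cases hk : k < n
        · exact Or.inl (hs0 k hk)
        · refine Or.inr ⟨⌊(⟪e k, D (e k)⟫_ℂ).re/(ε/8)⌋, ?_, ?_⟩
          · have hdb : ‖⟪e k, D (e k)⟫_ℂ‖ ≤ ‖D‖ := d_bound e D k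
            have hre : |(⟪e k, D (e k)⟫_ℂ).re| ≤ ‖D‖ :=
              le_trans (Complex.abs_re_le_norm _) hdb
            simpa only [Finset.mem_coe, hM] using floor_bound hδ hre
          · simp only [hsdef]
            rw [if_neg hk]
            simp [rround]
      exact (((Set.Finite.image _ (Finset.finite_toSet _)).insert 0)).subset hsub
    have hclose : ∀ k, n ≤ k → ‖⟪e k, D (e k)⟫_ℂ - s k‖ ≤ 2 * (ε/8) := by
      intro k hk
      simp only [hsdef]
      rw [if_neg (Nat.not_lt.mpr hk)]
      set z := ⟪e k, D (e k)⟫_ℂ with hz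
      have h1 : (z - ↑(rround (ε/8) z.re)).re = z.re - rround (ε/8) z.re := by simp
      have h2 : (z - ↑(rround (ε/8) z.re)).im = z.im := by simp
      calc ‖z - ↑(rround (ε/8) z.re)‖ = ‖z - ↑(rround (ε/8) z.re)‖ := rfl
        _ ≤ |(z - ↑(rround (ε/8) z.re)).re| + |(z - ↑(rround (ε/8) z.re)).im| :=
            Complex.norm_le_abs_re_add_abs_im _
        _ ≤ ε/8 + ε/8 := by
            rw [h1, h2]
            exact add_le_add (rround_close hδ z.re) (hIm k hk)
        _ = 2 * (ε/8) := by ring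
    have hreal : ∀ k, (starRingEnd ℂ) (s k) = s k := by
      intro k
      by_cases hk : k < n
      · simp [hsdef, hk]
      · simp [hsdef, hk, Complex.conj_ofReal]
    obtain ⟨T', hT'mem, hT'fin, hT'norm, hT'sa⟩ :=
      core e T D K hD hK hT n s hsfin hs0 (by positivity) hclose
    refine ⟨T', hT'mem, hT'sa hreal hTsa, hT'fin, lt_of_le_of_lt hT'norm ?_⟩
    linarith
end

section
/- If T ∈ D+K is invertible in B(H), then there exists a decomposition T = D₀ + K₀ with D₀ diagonal and invertible and K₀ compact. -/
open scoped InnerProductSpace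
open ContinuousLinearMap Filter Topology
open scoped ENNReal

variable {H : Type*} [NormedAddCommGroup H] [InnerProductSpace ℂ H] [CompleteSpace H]

section Aux

variable (e : HilbertBasis ℕ ℂ H)

lemma aux_ext_inner {x y : H} (h : ∀ m, ⟪e m, x⟫_ℂ = ⟪e m, y⟫_ℂ) : x = y := by
  apply e.repr.injective
  apply lp.ext
  funext m
  rw [e.repr_apply_apply, e.repr_apply_apply, h]

lemma aux_diag_apply {D : H →L[ℂ] H} (hD : IsDiagonal e D) (n : ℕ) :
    D (e n) = ⟪e n, D (e n)⟫_ℂ • e n := by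
  classical
  apply aux_ext_inner e
  intro m
  rw [inner_smul_right]
  rcases eq_or_ne m n with rfl | hmn
  · rw [orthonormal_iff_ite.mp e.orthonormal, if_pos rfl, mul_one]
  · rw [hD n m hmn.symm, orthonormal_iff_ite.mp e.orthonormal, if_neg hmn, mul_zero]

lemma aux_tendsto_inner (z : H) :
    Tendsto (fun n => ⟪z, e n⟫_ℂ) atTop (𝓝 0) := by
  have ht : (0:ℝ) < (2 : ℝ≥0∞).toReal := by norm_num
  have hsum : Summable (fun n => ‖e.repr z n‖ ^ (2 : ℝ≥0∞).toReal) :=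
    (memℓp_gen_iff ht).1 (lp.memℓp (e.repr z))
  have h1 : Tendsto (fun n => ‖e.repr z n‖ ^ (2 : ℝ≥0∞).toReal) atTop (𝓝 0) :=
    hsum.tendsto_atTop_zero
  have h2 : Tendsto (fun n => ‖e.repr z n‖) atTop (𝓝 0) := by
    have h3 := (Real.continuous_sqrt.tendsto 0).comp h1
    rw [Real.sqrt_zero] at h3
    refine h3.congr fun n => ?_
    have : (2 : ℝ≥0∞).toReal = ((2:ℕ) : ℝ) := by norm_num
    rw [Function.comp_apply, this, Real.rpow_natCast, Real.sqrt_sq (norm_nonneg _)]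
  rw [tendsto_zero_iff_norm_tendsto_zero]
  refine h2.congr fun n => ?_
  rw [← inner_conj_symm, ← e.repr_apply_apply, RCLike.norm_conj]

lemma aux_exists_mult (w : ℕ → ℂ) (B : ℝ) (hB : 0 < B) (hw : ∀ n, ‖w n‖ ≤ B) :
    ∃ M : H →L[ℂ] H, ∀ n, M (e n) = w n • e n := by
  classical
  have ht : (0:ℝ) < (2 : ℝ≥0∞).toReal := by norm_num
  set t : ℝ := (2 : ℝ≥0∞).toReal with htdef
  have hmem : ∀ x : H, Memℓp (fun n => w n * e.repr x n) 2 := by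
    intro x
    apply memℓp_gen
    have hfx : Summable (fun n => ‖e.repr x n‖ ^ t) :=
      (memℓp_gen_iff ht).1 (lp.memℓp (e.repr x))
    refine Summable.of_nonneg_of_le (fun n => Real.rpow_nonneg (norm_nonneg _) _)
      (fun n => ?_) (hfx.mul_left (B ^ t))
    calc ‖w n * e.repr x n‖ ^ t = (‖w n‖ * ‖e.repr x n‖) ^ t := by rw [norm_mul]
      _ ≤ (B * ‖e.repr x n‖) ^ t :=
          Real.rpow_le_rpow (by positivity)
            (mul_le_mul_of_nonneg_right (hw n) (norm_nonneg _)) ht.le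
      _ = B ^ t * ‖e.repr x n‖ ^ t := Real.mul_rpow hB.le (norm_nonneg _)
  let Mlin : H →ₗ[ℂ] H :=
    { toFun := fun x => e.repr.symm ⟨fun n => w n * e.repr x n, hmem x⟩
      map_add' := by
        intro x y
        show e.repr.symm ⟨_, hmem (x + y)⟩
          = e.repr.symm ⟨_, hmem x⟩ + e.repr.symm ⟨_, hmem y⟩
        rw [← map_add]
        congr 1
        apply lp.ext
        funext n
        rw [lp.coeFn_add, Pi.add_apply]
        show w n * e.repr (x + y) n = w n * e.repr x n + w n * e.repr y n
        rw [map_add, lp.coeFn_add, Pi.add_apply, mul_add]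
      map_smul' := by
        intro c x
        show e.repr.symm ⟨_, hmem (c • x)⟩ = c • e.repr.symm ⟨_, hmem x⟩
        rw [← map_smul]
        congr 1
        apply lp.ext
        funext n
        rw [lp.coeFn_smul, Pi.smul_apply]
        show w n * e.repr (c • x) n = c • (w n * e.repr x n)
        rw [map_smul, lp.coeFn_smul, Pi.smul_apply, smul_eq_mul, smul_eq_mul]
        ring }
  have hbound : ∀ x : H, ‖Mlin x‖ ≤ B * ‖x‖ := by
    intro x
    rcases eq_or_ne x 0 with rfl | hx
    · simp [map_zero]
    · have hx' : 0 < ‖x‖ := norm_pos_iff.2 hx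
      have hBx : 0 < B * ‖x‖ := mul_pos hB hx'
      have hMx : ‖Mlin x‖ = ‖(⟨fun n => w n * e.repr x n, hmem x⟩ : lp (fun _ : ℕ => ℂ) 2)‖ :=
        e.repr.symm.norm_map _
      rw [hMx, ← Real.rpow_le_rpow_iff (norm_nonneg _) hBx.le ht]
      have hfx : Summable (fun n => ‖e.repr x n‖ ^ t) :=
        (memℓp_gen_iff ht).1 (lp.memℓp (e.repr x))
      calc ‖(⟨fun n => w n * e.repr x n, hmem x⟩ : lp (fun _ : ℕ => ℂ) 2)‖ ^ t
          = ∑' n, ‖w n * e.repr x n‖ ^ t := lp.norm_rpow_eq_tsum ht _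
        _ ≤ ∑' n, B ^ t * ‖e.repr x n‖ ^ t := by
            refine Summable.tsum_le_tsum (fun n => ?_) ((memℓp_gen_iff ht).1 (hmem x))
              (hfx.mul_left (B ^ t))
            calc ‖w n * e.repr x n‖ ^ t = (‖w n‖ * ‖e.repr x n‖) ^ t := by rw [norm_mul]
              _ ≤ (B * ‖e.repr x n‖) ^ t :=
                  Real.rpow_le_rpow (by positivity)
                    (mul_le_mul_of_nonneg_right (hw n) (norm_nonneg _)) ht.le
              _ = B ^ t * ‖e.repr x n‖ ^ t := Real.mul_rpow hB.le (norm_nonneg _)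
        _ = B ^ t * ∑' n, ‖e.repr x n‖ ^ t := tsum_mul_left
        _ = B ^ t * ‖e.repr x‖ ^ t := by rw [← lp.norm_rpow_eq_tsum ht]
        _ = B ^ t * ‖x‖ ^ t := by rw [e.repr.norm_map]
        _ = (B * ‖x‖) ^ t := (Real.mul_rpow hB.le (norm_nonneg _)).symm
  have hsingle : ∀ (a : ℂ) (n m : ℕ),
      ((lp.single 2 n a : lp (fun _ : ℕ => ℂ) 2) : ∀ _ : ℕ, ℂ) m = if m = n then a else 0 := by
    intro a n m
    rcases eq_or_ne m n with rfl | hmn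
    · rw [lp.single_apply_self, if_pos rfl]
    · rw [lp.single_apply_ne _ _ _ hmn, if_neg hmn]
  refine ⟨Mlin.mkContinuous B hbound, fun n => ?_⟩
  show e.repr.symm ⟨_, hmem (e n)⟩ = w n • e n
  have h1 : (⟨fun m => w m * e.repr (e n) m, hmem (e n)⟩ : lp (fun _ : ℕ => ℂ) 2)
      = lp.single 2 n (w n) := by
    apply lp.ext
    funext m
    show w m * e.repr (e n) m
      = ((lp.single 2 n (w n) : lp (fun _ : ℕ => ℂ) 2) : ∀ _ : ℕ, ℂ) m
    rw [e.repr_self, hsingle, hsingle]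
    split_ifs with h <;> simp [h]
  rw [h1]
  apply e.repr.injective
  rw [LinearIsometryEquiv.apply_symm_apply, map_smul, e.repr_self]
  apply lp.ext
  funext m
  show ((lp.single 2 n (w n) : lp (fun _ : ℕ => ℂ) 2) : ∀ _ : ℕ, ℂ) m
    = (w n • (lp.single 2 n (1:ℂ) : lp (fun _ : ℕ => ℂ) 2) : lp (fun _ : ℕ => ℂ) 2) m
  rw [lp.coeFn_smul, Pi.smul_apply, hsingle, hsingle]
  split_ifs <;> simp

lemma aux_compact_toSpanSingleton (v : H) :
    IsCompactOperator ⇑(ContinuousLinearMap.toSpanSingleton ℂ v) := by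
  refine ⟨(fun c : ℂ => c • v) '' Metric.closedBall 0 1,
    ((isCompact_closedBall (0:ℂ) 1).image (continuous_id.smul continuous_const)), ?_⟩
  refine Filter.mem_of_superset (Metric.closedBall_mem_nhds (0:ℂ) one_pos) ?_
  intro c hc
  exact ⟨c, hc, rfl⟩

lemma aux_compact_sum {s : Finset ℕ} {g : ℕ → H →L[ℂ] H}
    (h : ∀ n, IsCompactOperator ⇑(g n)) : IsCompactOperator ⇑(∑ n ∈ s, g n) := by
  classical
  induction s using Finset.induction with
  | empty => simpa using (isCompactOperator_zero : IsCompactOperator (0 : H → H))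
  | insert _ _ hni ih =>
    rw [Finset.sum_insert hni, ContinuousLinearMap.coe_add']
    exact (h _).add ih

end Aux

/-- If `T ∈ D+K` is invertible, there is a decomposition `T = D₀ + K₀` with `D₀` a diagonal
invertible operator and `K₀` compact. -/
theorem exists_invertible_diagonal_decomposition (e : HilbertBasis ℕ ℂ H)
    (T : H →L[ℂ] H) (hT : T ∈ DplusK e) (hinv : IsUnit T) :
    ∃ D₀ K₀ : H →L[ℂ] H, IsDiagonal e D₀ ∧ IsUnit D₀ ∧ IsCompactOperator ⇑K₀ ∧ T = D₀ + K₀ := by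
  classical
  obtain ⟨D, K, hD, hK, hTDK⟩ := hT
  obtain ⟨u, hu⟩ := hinv
  set Tinv : H →L[ℂ] H := ↑u⁻¹ with hTinv
  have hnorme : ∀ n, ‖e n‖ = 1 := fun n => e.orthonormal.1 n
  have hTinvT : ∀ x : H, Tinv (T x) = x := by
    intro x
    have h1 : (↑u⁻¹ * ↑u : H →L[ℂ] H) = 1 := u.inv_mul
    have := congrArg (fun S : H →L[ℂ] H => S x) h1
    simpa [hu, ContinuousLinearMap.mul_apply] using this
  have hTinvpos : 0 < ‖Tinv‖ := by
    rcases le_or_gt ‖Tinv‖ 0 with h | h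
    · exfalso
      have h1 : ‖Tinv (T (e 0))‖ ≤ ‖Tinv‖ * ‖T (e 0)‖ := Tinv.le_opNorm _
      rw [hTinvT, hnorme] at h1
      nlinarith [norm_nonneg (T (e 0)), norm_nonneg Tinv]
    · exact h
  set c : ℝ := ‖Tinv‖⁻¹ with hc
  have hcpos : 0 < c := inv_pos.2 hTinvpos
  have hclow : ∀ n, c ≤ ‖T (e n)‖ := by
    intro n
    have h1 : ‖Tinv (T (e n))‖ ≤ ‖Tinv‖ * ‖T (e n)‖ := Tinv.le_opNorm _
    rw [hTinvT, hnorme] at h1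
    rw [hc, inv_le_iff_one_le_mul₀ hTinvpos]
    linarith
  -- the set of indices where the diagonal entry is small is finite
  have hfin : {n | ‖D (e n)‖ < c / 2}.Finite := by
    by_contra hinf
    set p : ℕ → Prop := fun n => ‖D (e n)‖ < c / 2 with hp
    have hinf' : (setOf p).Infinite := hinf
    set f : ℕ → ℕ := Nat.nth p with hf
    have hfmono : StrictMono f := Nat.nth_strictMono hinf'
    have hfmem : ∀ k, ‖D (e (f k))‖ < c / 2 := fun k => Nat.nth_mem_of_infinite hinf' k
    -- compactness: the sequence K (e (f k)) lies in a compact set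
    obtain ⟨C, hCc, hCmem⟩ := hK
    obtain ⟨δ, hδpos, hball⟩ := Metric.mem_nhds_iff.1 hCmem
    set r : ℝ := δ / 2 with hr
    have hrpos : 0 < r := by positivity
    have hmemC : ∀ n : ℕ, K (e n) ∈ (fun y : H => ((r:ℂ))⁻¹ • y) '' C := by
      intro n
      have h1 : ((r:ℂ)) • e n ∈ Metric.ball (0:H) δ := by
        rw [mem_ball_zero_iff, norm_smul, hnorme, mul_one, Complex.norm_real,
          Real.norm_eq_abs, abs_of_pos hrpos]
        rw [hr]; linarith
      have h2 : K (((r:ℂ)) • e n) ∈ C := hball h1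
      rw [map_smul] at h2
      exact ⟨((r:ℂ)) • K (e n), h2,
        inv_smul_smul₀ (by exact_mod_cast hrpos.ne') (K (e n))⟩
    have hCc' : IsCompact ((fun y : H => ((r:ℂ))⁻¹ • y) '' C) :=
      hCc.image (continuous_const_smul _)
    obtain ⟨y, _, σ, hσmono, hσtend⟩ :=
      hCc'.tendsto_subseq (x := fun k => K (e (f k))) (fun k => hmemC (f k))
    -- y = 0 since all its basis coefficients vanish
    have hy0 : y = 0 := by
      apply aux_ext_inner e
      intro m
      rw [inner_zero_right]
      have h1 : Tendsto (fun k => ⟪e m, K (e (f (σ k)))⟫_ℂ) atTop (𝓝 ⟪e m, y⟫_ℂ) := by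
        have := ((innerSL ℂ (e m)).continuous.tendsto y).comp hσtend
        exact this
      have h2 : Tendsto (fun k => ⟪e m, K (e (f (σ k)))⟫_ℂ) atTop (𝓝 0) := by
        have h3 := (aux_tendsto_inner e ((ContinuousLinearMap.adjoint K) (e m))).comp
          ((hfmono.comp hσmono).tendsto_atTop)
        refine h3.congr fun k => ?_
        rw [Function.comp_apply, ContinuousLinearMap.adjoint_inner_left]
        rfl
      exact tendsto_nhds_unique h1 h2
    -- but the norms stay bounded below
    have hnorm : Tendsto (fun k => ‖K (e (f (σ k)))‖) atTop (𝓝 ‖y‖) :=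
      (continuous_norm.tendsto y).comp hσtend
    have hlow : ∀ k, c / 2 ≤ ‖K (e (f (σ k)))‖ := by
      intro k
      set n := f (σ k)
      have h1 : K (e n) = T (e n) - D (e n) := by rw [hTDK]; simp
      have h2 : ‖T (e n)‖ - ‖D (e n)‖ ≤ ‖T (e n) - D (e n)‖ := norm_sub_norm_le _ _
      have h3 := hclow n
      have h4 : ‖D (e n)‖ < c / 2 := hfmem (σ k)
      rw [h1]
      linarith
    have h5 : c / 2 ≤ ‖y‖ := ge_of_tendsto' hnorm hlow
    rw [hy0, norm_zero] at h5
    linarith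
  -- construct the modified diagonal operator
  set bad : Finset ℕ := hfin.toFinset with hbad
  set d : ℕ → ℂ := fun n => ⟪e n, D (e n)⟫_ℂ with hd
  set d' : ℕ → ℂ := fun n => if n ∈ bad then 1 else d n with hd'
  set P : H →L[ℂ] H :=
    ∑ n ∈ bad, ((1 - d n) • ((innerSL ℂ (e n)).smulRight (e n))) with hP
  have hDen : ∀ n, D (e n) = d n • e n := fun n => aux_diag_apply e hD n
  have hPen : ∀ n, P (e n) = (if n ∈ bad then (1 - d n) else 0) • e n := by
    intro n
    rw [hP, ContinuousLinearMap.sum_apply]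
    have h1 : ∀ j ∈ bad, ((1 - d j) • ((innerSL ℂ (e j)).smulRight (e j))) (e n)
        = if n = j then (1 - d n) • e n else 0 := by
      intro j _
      rw [ContinuousLinearMap.smul_apply, ContinuousLinearMap.smulRight_apply, innerSL_apply_apply,
        orthonormal_iff_ite.mp e.orthonormal]
      rcases eq_or_ne j n with rfl | hjn
      · rw [if_pos rfl, if_pos rfl, one_smul]
      · rw [if_neg hjn, if_neg (Ne.symm hjn), zero_smul, smul_zero]
    rw [Finset.sum_congr rfl h1, Finset.sum_ite_eq bad n (fun _ => (1 - d n) • e n)]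
    split <;> simp
  have hD0en : ∀ n, (D + P) (e n) = d' n • e n := by
    intro n
    rw [ContinuousLinearMap.add_apply, hDen, hPen, ← add_smul]
    congr 1
    simp only [hd']
    split_ifs <;> ring
  -- lower bound on the new diagonal entries
  set m₀ : ℝ := min 1 (c / 2) with hm₀
  have hm₀pos : 0 < m₀ := lt_min one_pos (by positivity)
  have hd'low : ∀ n, m₀ ≤ ‖d' n‖ := by
    intro n
    simp only [hd']
    by_cases h : n ∈ bad
    · rw [if_pos h, norm_one]; exact min_le_left _ _
    · rw [if_neg h]
      have h1 : ¬(‖D (e n)‖ < c / 2) := by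
        intro h2
        exact h (by rw [hbad, Set.Finite.mem_toFinset]; exact h2)
      have h2 : ‖D (e n)‖ = ‖d n‖ := by rw [hDen, norm_smul, hnorme, mul_one]
      rw [← h2]
      exact le_trans (min_le_right _ _) (not_lt.1 h1)
  have hd'ne : ∀ n, d' n ≠ 0 := by
    intro n h
    have := hd'low n
    rw [h, norm_zero] at this
    linarith
  -- the inverse multiplier
  obtain ⟨M, hM⟩ := aux_exists_mult e (fun n => (d' n)⁻¹) m₀⁻¹ (inv_pos.2 hm₀pos)
    (fun n => by
      rw [norm_inv]
      exact inv_anti₀ hm₀pos (hd'low n))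
  have hspan : Dense ((Submodule.span ℂ (Set.range ⇑e) : Submodule ℂ H) : Set H) :=
    Submodule.dense_iff_topologicalClosure_eq_top.mpr e.dense_span
  have hDM : (D + P) * M = 1 := by
    apply ContinuousLinearMap.ext_on hspan
    rintro x ⟨n, rfl⟩
    rw [ContinuousLinearMap.mul_apply, hM, map_smul, hD0en, ContinuousLinearMap.one_apply,
      smul_smul, inv_mul_cancel₀ (hd'ne n), one_smul]
  have hMD : M * (D + P) = 1 := by
    apply ContinuousLinearMap.ext_on hspan
    rintro x ⟨n, rfl⟩
    rw [ContinuousLinearMap.mul_apply, hD0en, map_smul, hM, ContinuousLinearMap.one_apply,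
      smul_smul, mul_inv_cancel₀ (hd'ne n), one_smul]
  have hD0unit : IsUnit (D + P) := ⟨⟨D + P, M, hDM, hMD⟩, rfl⟩
  -- P is compact
  have hPc : IsCompactOperator ⇑P := by
    rw [hP]
    apply aux_compact_sum
    intro n
    have h1 : IsCompactOperator ⇑((innerSL ℂ (e n)).smulRight (e n)) := by
      have h2 := (aux_compact_toSpanSingleton (e n)).comp_clm (innerSL ℂ (e n))
      have h3 : ⇑((innerSL ℂ (e n)).smulRight (e n))
          = ⇑(ContinuousLinearMap.toSpanSingleton ℂ (e n)) ∘ ⇑(innerSL ℂ (e n)) := by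
        funext x
        simp [ContinuousLinearMap.toSpanSingleton_apply]
      rw [h3]
      exact h2
    have h4 := h1.smul ((1:ℂ) - d n)
    rwa [← ContinuousLinearMap.coe_smul'] at h4
  refine ⟨D + P, K - P, ?_, hD0unit, ?_, ?_⟩
  · intro n m hnm
    rw [hD0en, inner_smul_right, orthonormal_iff_ite.mp e.orthonormal,
      if_neg (Ne.symm hnm), mul_zero]
  · have h5 := hK.sub hPc
    rwa [← ContinuousLinearMap.coe_sub'] at h5
  · rw [hTDK]; abel
end

section
/- There are no proper isometries in D+K: every isometry V ∈ D+K is a unitary operator. Dually, every co-isometry in D+K is unitary. -/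
open scoped InnerProductSpace
open ContinuousLinearMap Filter Topology
open scoped NNReal
open scoped ENNReal

variable {H : Type*} [NormedAddCommGroup H] [InnerProductSpace ℂ H] [CompleteSpace H]

namespace DK

/-- Extract a convergent subsequence of `K ∘ x` for a compact operator and bounded sequence. -/
lemma exists_subseq (K : H →L[ℂ] H) (hK : IsCompactOperator ⇑K) (x : ℕ → H)
    (hx : ∀ n, ‖x n‖ ≤ 1) :
    ∃ φ : ℕ → ℕ, StrictMono φ ∧ ∃ y, Tendsto (fun n => K (x (φ n))) atTop (𝓝 y) := by
  have hs : IsCompact (closure (⇑K '' Metric.closedBall 0 1)) :=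
    IsCompactOperator.isCompact_closure_image_closedBall (f := (K : H →ₗ[ℂ] H)) hK 1
  have hmem : ∀ n, K (x n) ∈ closure (⇑K '' Metric.closedBall 0 1) := fun n =>
    subset_closure ⟨x n, by simpa [Metric.mem_closedBall, dist_eq_norm] using hx n, rfl⟩
  obtain ⟨y, -, φ, hφ, hconv⟩ := hs.tendsto_subseq hmem
  exact ⟨φ, hφ, y, hconv⟩

/-- The coefficients of any vector w.r.t. a Hilbert basis tend to zero. -/
lemma coeff_tendsto (e : HilbertBasis ℕ ℂ H) (z : H) :
    Tendsto (fun n => ⟪(e n : H), z⟫_ℂ) atTop (𝓝 0) := by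
  have hsum : Summable fun n => ‖(e.repr z : ∀ _ : ℕ, ℂ) n‖ ^ (2 : ℝ≥0∞).toReal :=
    (lp.memℓp (e.repr z)).summable (by norm_num)
  have h2 : Tendsto (fun n => ‖(e.repr z : ∀ _ : ℕ, ℂ) n‖ ^ (2 : ℝ≥0∞).toReal) atTop (𝓝 0) :=
    hsum.tendsto_atTop_zero
  have h1 : Tendsto (fun n => ‖(e.repr z : ∀ _ : ℕ, ℂ) n‖) atTop (𝓝 0) := by
    have := h2.sqrt
    simpa [ENNReal.toReal_ofNat, Real.rpow_natCast, Real.sqrt_sq (norm_nonneg _),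
      Real.sqrt_zero] using this
  have h0 : Tendsto (fun n => (e.repr z : ∀ _ : ℕ, ℂ) n) atTop (𝓝 0) :=
    tendsto_zero_iff_norm_tendsto_zero.2 h1
  have hrepr : ∀ n, (e.repr z : ∀ _ : ℕ, ℂ) n = ⟪(e n : H), z⟫_ℂ := fun n =>
    e.repr_apply_apply z n
  simpa [hrepr] using h0

/-- A compact operator sends the Hilbert basis to a null sequence. -/
lemma compact_basis_tendsto (e : HilbertBasis ℕ ℂ H) (K : H →L[ℂ] H)
    (hK : IsCompactOperator ⇑K) :
    Tendsto (fun n => K (e n)) atTop (𝓝 0) := by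
  apply Filter.tendsto_of_subseq_tendsto
  intro ns hns
  obtain ⟨φ, hφ, y, hy⟩ := exists_subseq K hK (fun n => e (ns n))
    (fun n => le_of_eq (e.orthonormal.1 (ns n)))
  refine ⟨φ, ?_⟩
  have hy0 : y = 0 := by
    apply ext_inner_left ℂ
    intro v
    have h1 : Tendsto (fun n => ⟪v, K (e (ns (φ n)))⟫_ℂ) atTop (𝓝 ⟪v, y⟫_ℂ) :=
      tendsto_const_nhds.inner hy
    have h2 : Tendsto (fun n => ⟪v, K (e (ns (φ n)))⟫_ℂ) atTop (𝓝 0) := by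
      have hv : ∀ m, ⟪v, K (e m)⟫_ℂ = (starRingEnd ℂ) ⟪(e m : H), ContinuousLinearMap.adjoint K v⟫_ℂ := by
        intro m
        rw [← ContinuousLinearMap.adjoint_inner_left, ← inner_conj_symm]
      have hc : Tendsto (fun m => ⟪(e m : H), ContinuousLinearMap.adjoint K v⟫_ℂ) atTop (𝓝 0) :=
        coeff_tendsto e _
      have hcomp : Tendsto (fun n => ns (φ n)) atTop atTop := hns.comp hφ.tendsto_atTop
      have h3 := (hc.comp hcomp).star
      rw [star_zero] at h3
      refine h3.congr fun n => ?_
      rw [Function.comp_apply, ← starRingEnd_apply, ← hv]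
    rw [tendsto_nhds_unique h1 h2, inner_zero_right]
  rw [hy0] at hy
  exact hy

/-- Two continuous linear maps agreeing on a Hilbert basis are equal. -/
lemma ext_basis (e : HilbertBasis ℕ ℂ H) {A B : H →L[ℂ] H}
    (h : ∀ n, A (e n) = B (e n)) : A = B := by
  apply ContinuousLinearMap.ext_on (s := Set.range (⇑e))
  · rw [Submodule.dense_iff_topologicalClosure_eq_top]
    exact e.dense_span
  · rintro _ ⟨n, rfl⟩
    exact h n

/-- A diagonal operator acts diagonally on the basis. -/
lemma diag_apply' (e : HilbertBasis ℕ ℂ H) {D : H →L[ℂ] H} (hD : IsDiagonal e D) (n : ℕ) :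
    D (e n) = ⟪(e n : H), D (e n)⟫_ℂ • e n := by
  apply e.repr.injective
  apply lp.ext
  funext m
  rw [map_smul]
  rcases eq_or_ne n m with rfl | hnm
  · simp [e.repr_apply_apply, e.repr_self, lp.single_apply, inner_self_eq_norm_sq_to_K,
      e.orthonormal.1 n]
  · have h0 : ⟪(e m : H), D (e n)⟫_ℂ = 0 := hD n m hnm
    rw [lp.coeFn_smul]
    simp only [Pi.smul_apply]
    rw [e.repr_apply_apply, h0, e.repr_self]
    rw [lp.single_apply]
    simp [Ne.symm hnm]


lemma memlp_mul (c : ℕ → ℂ) {B : ℝ} (hc : ∀ n, ‖c n‖ ≤ B) (f : lp (fun _ : ℕ => ℂ) 2) :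
    Memℓp (fun n => c n * (f : ∀ _ : ℕ, ℂ) n) 2 := by
  apply memℓp_gen
  have h2 : (0:ℝ) < (2 : ℝ≥0∞).toReal := by norm_num
  have hsum := (lp.memℓp f).summable h2
  have hB : 0 ≤ B := le_trans (norm_nonneg _) (hc 0)
  apply Summable.of_nonneg_of_le (fun n => by positivity) _ (hsum.mul_left (B ^ (2 : ℝ≥0∞).toReal))
  intro n
  rw [norm_mul, Real.mul_rpow (norm_nonneg _) (norm_nonneg _)]
  exact mul_le_mul_of_nonneg_right
    (Real.rpow_le_rpow (norm_nonneg _) (hc n) (by norm_num)) (Real.rpow_nonneg (norm_nonneg _) _)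

lemma norm_lp_mul_le {c : ℕ → ℂ} {β : ℝ} (hβ : 0 ≤ β) (h : ∀ n, ‖c n‖ ≤ β)
    (f g : lp (fun _ : ℕ => ℂ) 2) (hg : ∀ n, (g : ∀ _ : ℕ, ℂ) n = c n * (f : ∀ _ : ℕ, ℂ) n) :
    ‖g‖ ≤ β * ‖f‖ := by
  have h2 : (0:ℝ) < (2 : ℝ≥0∞).toReal := by norm_num
  apply lp.norm_le_of_forall_sum_le h2 (by positivity)
  intro s
  have hstep : ∀ n ∈ s, ‖(g : ∀ _ : ℕ, ℂ) n‖ ^ (2 : ℝ≥0∞).toReal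
      ≤ β ^ (2 : ℝ≥0∞).toReal * ‖(f : ∀ _ : ℕ, ℂ) n‖ ^ (2 : ℝ≥0∞).toReal := by
    intro n _
    rw [hg n, norm_mul, Real.mul_rpow (norm_nonneg _) (norm_nonneg _)]
    exact mul_le_mul_of_nonneg_right
      (Real.rpow_le_rpow (norm_nonneg _) (h n) (by norm_num)) (Real.rpow_nonneg (norm_nonneg _) _)
  calc ∑ n ∈ s, ‖(g : ∀ _ : ℕ, ℂ) n‖ ^ (2 : ℝ≥0∞).toReal
      ≤ ∑ n ∈ s, β ^ (2 : ℝ≥0∞).toReal * ‖(f : ∀ _ : ℕ, ℂ) n‖ ^ (2 : ℝ≥0∞).toReal :=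
        Finset.sum_le_sum hstep
    _ = β ^ (2 : ℝ≥0∞).toReal * ∑ n ∈ s, ‖(f : ∀ _ : ℕ, ℂ) n‖ ^ (2 : ℝ≥0∞).toReal := by
        rw [Finset.mul_sum]
    _ ≤ β ^ (2 : ℝ≥0∞).toReal * ‖f‖ ^ (2 : ℝ≥0∞).toReal := by
        apply mul_le_mul_of_nonneg_left (lp.sum_rpow_le_norm_rpow h2 f s)
          (Real.rpow_nonneg hβ _)
    _ = (β * ‖f‖) ^ (2 : ℝ≥0∞).toReal := (Real.mul_rpow hβ (norm_nonneg _)).symm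

/-- pointwise multiplication operator on ℓ². -/
noncomputable def mulLp (c : ℕ → ℂ) {B : ℝ} (hc : ∀ n, ‖c n‖ ≤ B) :
    lp (fun _ : ℕ => ℂ) 2 →L[ℂ] lp (fun _ : ℕ => ℂ) 2 :=
  LinearMap.mkContinuous
    { toFun := fun f => ⟨fun n => c n * (f : ∀ _ : ℕ, ℂ) n, memlp_mul c hc f⟩
      map_add' := by
        intro f g; apply lp.ext; funext n
        simp [lp.coeFn_add, mul_add]; rfl
      map_smul' := by
        intro a f; apply lp.ext; funext n
        simp [lp.coeFn_smul, Pi.smul_apply, smul_eq_mul]; ring } B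
    (fun f => norm_lp_mul_le (le_trans (norm_nonneg _) (hc 0)) hc f _ (fun _ => rfl))

lemma mulLp_apply (c : ℕ → ℂ) {B : ℝ} (hc : ∀ n, ‖c n‖ ≤ B) (f : lp (fun _ : ℕ => ℂ) 2) (n : ℕ) :
    ((mulLp c hc f : lp (fun _ : ℕ => ℂ) 2) : ∀ _ : ℕ, ℂ) n = c n * (f : ∀ _ : ℕ, ℂ) n := by
  simp only [mulLp, LinearMap.mkContinuous_apply]
  rfl

/-- norm bound for `mulLp` under any uniform bound. -/
lemma mulLp_bound (c : ℕ → ℂ) {B : ℝ} (hc : ∀ n, ‖c n‖ ≤ B) {β : ℝ} (hβ : 0 ≤ β)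
    (h : ∀ n, ‖c n‖ ≤ β) (f : lp (fun _ : ℕ => ℂ) 2) : ‖mulLp c hc f‖ ≤ β * ‖f‖ :=
  norm_lp_mul_le hβ h f _ (mulLp_apply c hc f)


/-- Diagonal operator on `H` associated to a bounded sequence of entries. -/
noncomputable def diagOp (e : HilbertBasis ℕ ℂ H) (c : ℕ → ℂ) {B : ℝ} (hc : ∀ n, ‖c n‖ ≤ B) :
    H →L[ℂ] H :=
  ((e.repr.symm.toContinuousLinearEquiv : lp (fun _ : ℕ => ℂ) 2 ≃L[ℂ] H) :
      lp (fun _ : ℕ => ℂ) 2 →L[ℂ] H).comp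
    ((mulLp c hc).comp
      ((e.repr.toContinuousLinearEquiv : H ≃L[ℂ] lp (fun _ : ℕ => ℂ) 2) :
        H →L[ℂ] lp (fun _ : ℕ => ℂ) 2))

lemma diagOp_apply (e : HilbertBasis ℕ ℂ H) (c : ℕ → ℂ) {B : ℝ} (hc : ∀ n, ‖c n‖ ≤ B) (x : H) :
    diagOp e c hc x = e.repr.symm (mulLp c hc (e.repr x)) := rfl

lemma diagOp_basis (e : HilbertBasis ℕ ℂ H) (c : ℕ → ℂ) {B : ℝ} (hc : ∀ n, ‖c n‖ ≤ B) (n : ℕ) :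
    diagOp e c hc (e n) = c n • e n := by
  rw [diagOp_apply]
  have h1 : e.repr (e n) = lp.single 2 n 1 := e.repr_self n
  have h2 : mulLp c hc (lp.single 2 n 1) = lp.single 2 n (c n) := by
    apply lp.ext; funext m
    rw [mulLp_apply]
    rcases eq_or_ne m n with rfl | hmn
    · simp [lp.single_apply]
    · simp [lp.single_apply, hmn]
  have h3 : lp.single (E := fun _ : ℕ => ℂ) 2 n (c n) = c n • lp.single 2 n 1 := by
    rw [← lp.single_smul]; norm_num
  rw [h1, h2, h3, map_smul]
  congr 1
  exact e.repr_symm_single n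

lemma diagOp_norm_le (e : HilbertBasis ℕ ℂ H) (c : ℕ → ℂ) {B : ℝ} (hc : ∀ n, ‖c n‖ ≤ B)
    {β : ℝ} (hβ : 0 ≤ β) (h : ∀ n, ‖c n‖ ≤ β) (x : H) : ‖diagOp e c hc x‖ ≤ β * ‖x‖ := by
  rw [diagOp_apply, e.repr.symm.norm_map, ← e.repr.norm_map x]
  exact mulLp_bound c hc hβ h _

lemma diagOp_isometry (e : HilbertBasis ℕ ℂ H) (c : ℕ → ℂ) {B : ℝ} (hc : ∀ n, ‖c n‖ ≤ B)
    (h : ∀ n, ‖c n‖ = 1) (x : H) : ‖diagOp e c hc x‖ = ‖x‖ := by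
  rw [diagOp_apply, e.repr.symm.norm_map, ← e.repr.norm_map x]
  have h2 : (0:ℝ) < (2 : ℝ≥0∞).toReal := by norm_num
  rw [lp.norm_eq_tsum_rpow h2, lp.norm_eq_tsum_rpow h2]
  congr 1
  apply tsum_congr
  intro n
  rw [mulLp_apply, norm_mul, h n, one_mul]

lemma rankOne_compact (f : H →L[ℂ] ℂ) (v : H) : IsCompactOperator (fun x => f x • v) := by
  rw [isCompactOperator_iff_exists_mem_nhds_image_subset_compact]
  refine ⟨Metric.ball 0 1, Metric.ball_mem_nhds 0 one_pos,
    (fun c : ℂ => c • v) '' Metric.closedBall 0 ‖f‖, ?_, ?_⟩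
  · exact ((isCompact_closedBall 0 ‖f‖).image (continuous_id.smul continuous_const))
  · rintro _ ⟨x, hx, rfl⟩
    refine ⟨f x, ?_, rfl⟩
    rw [Metric.mem_closedBall, dist_zero_right]
    calc ‖f x‖ ≤ ‖f‖ * ‖x‖ := f.le_opNorm x
      _ ≤ ‖f‖ * 1 := by
          apply mul_le_mul_of_nonneg_left (le_of_lt (by simpa [dist_eq_norm] using hx))
            (norm_nonneg f)
      _ = ‖f‖ := mul_one _

lemma sum_compact {ι : Type*} (s : Finset ι) (F : ι → (H →L[ℂ] H))
    (h : ∀ i ∈ s, IsCompactOperator ⇑(F i)) : IsCompactOperator ⇑(∑ i ∈ s, F i) := by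
  classical
  induction s using Finset.induction_on with
  | empty => simpa using isCompactOperator_zero
  | insert a t hnot ih =>
    rw [Finset.sum_insert hnot]
    have : ⇑(F a + ∑ i ∈ t, F i) = ⇑(F a) + ⇑(∑ i ∈ t, F i) := rfl
    rw [this]
    exact (h a (Finset.mem_insert_self a t)).add
      (ih fun i hi => h i (Finset.mem_insert_of_mem hi))

lemma diagOp_compact (e : HilbertBasis ℕ ℂ H) (c : ℕ → ℂ) {B : ℝ} (hc : ∀ n, ‖c n‖ ≤ B)
    (h0 : Tendsto c atTop (𝓝 0)) : IsCompactOperator ⇑(diagOp e c hc) := by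
  classical
  have hB : 0 ≤ B := le_trans (norm_nonneg _) (hc 0)
  -- truncations
  set cN : ℕ → ℕ → ℂ := fun N m => if m < N then c m else 0 with hcN
  have hcNb : ∀ N n, ‖cN N n‖ ≤ B := by
    intro N n
    by_cases hn : n < N
    · simpa [hcN, hn] using hc n
    · simp [hcN, hn, hB]
  -- each truncation is compact, being a finite sum of rank-one operators
  have htrunc : ∀ N, IsCompactOperator ⇑(diagOp e (cN N) (hcNb N)) := by
    intro N
    have heq : diagOp e (cN N) (hcNb N)
        = ∑ m ∈ Finset.range N, ((innerSL ℂ (e m : H)).smulRight (c m • (e m : H))) := by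
      apply ext_basis e
      intro n
      rw [diagOp_basis]
      rw [ContinuousLinearMap.sum_apply]
      have hterm : ∀ m ∈ Finset.range N,
          ((innerSL ℂ (e m : H)).smulRight (c m • (e m : H))) (e n)
          = if m = n then c n • (e n : H) else 0 := by
        intro m _
        rw [ContinuousLinearMap.smulRight_apply, innerSL_apply_apply]
        have : ⟪(e m : H), (e n : H)⟫_ℂ = if m = n then 1 else 0 :=
          orthonormal_iff_ite.mp e.orthonormal m n
        rw [this]
        rcases eq_or_ne m n with rfl | hmn
        · simp
        · simp [hmn]
      rw [Finset.sum_congr rfl hterm, Finset.sum_ite_eq' (Finset.range N) n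
        (fun _ => c n • (e n : H))]
      simp only [Finset.mem_range, hcN]
      by_cases hn : n < N <;> simp [hn]
    rw [heq]
    apply sum_compact
    intro m _
    have : ⇑((innerSL ℂ (e m : H)).smulRight (c m • (e m : H)))
        = fun x => (innerSL ℂ (e m : H)) x • (c m • (e m : H)) := rfl
    rw [this]
    exact rankOne_compact _ _
  -- the truncations converge in norm to `diagOp e c`
  have hconv : Tendsto (fun N => diagOp e (cN N) (hcNb N)) atTop (𝓝 (diagOp e c hc)) := by
    rw [Metric.tendsto_atTop]
    intro ε hε
    obtain ⟨N₀, hN₀⟩ := (Metric.tendsto_atTop.mp h0) (ε / 2) (half_pos hε)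
    refine ⟨N₀, fun N hN => ?_⟩
    rw [dist_eq_norm]
    have hdiff : diagOp e (cN N) (hcNb N) - diagOp e c hc
        = diagOp e (fun m => cN N m - c m) (fun m => by
            calc ‖cN N m - c m‖ ≤ ‖cN N m‖ + ‖c m‖ := norm_sub_le _ _
              _ ≤ B + B := add_le_add (hcNb N m) (hc m)) := by
      apply ext_basis e
      intro n
      rw [ContinuousLinearMap.sub_apply, diagOp_basis, diagOp_basis, diagOp_basis, sub_smul]
    have hsmall : ∀ m, ‖cN N m - c m‖ ≤ ε / 2 := by
      intro m
      by_cases hm : m < N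
      · simp [hcN, hm]
        exact le_of_lt (half_pos hε)
      · have : N₀ ≤ m := le_trans hN (not_lt.mp hm)
        have := hN₀ m this
        rw [dist_zero_right] at this
        simp [hcN, hm]
        exact le_of_lt this
    calc ‖diagOp e (cN N) (hcNb N) - diagOp e c hc‖
        ≤ ε / 2 := by
          rw [hdiff]
          exact ContinuousLinearMap.opNorm_le_bound _ (le_of_lt (half_pos hε))
            (diagOp_norm_le e _ _ (le_of_lt (half_pos hε)) hsmall)
      _ < ε := half_lt_self hε
  exact isCompactOperator_of_tendsto hconv (Filter.Eventually.of_forall htrunc)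

/-- On Hilbert space, the adjoint of a compact operator is compact. -/
lemma adjoint_compact (K : H →L[ℂ] H) (hK : IsCompactOperator ⇑K) :
    IsCompactOperator ⇑(ContinuousLinearMap.adjoint K) := by
  set A : H →L[ℂ] H := K.comp (ContinuousLinearMap.adjoint K) with hA
  have hAc : IsCompactOperator ⇑A := by
    have := hK.comp_clm (ContinuousLinearMap.adjoint K)
    simpa [hA, ContinuousLinearMap.coe_comp] using this
  -- key estimate
  have key : ∀ z : H, ‖ContinuousLinearMap.adjoint K z‖ ^ 2 ≤ ‖z‖ * ‖A z‖ := by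
    intro z
    have h1 : (⟪ContinuousLinearMap.adjoint K z, ContinuousLinearMap.adjoint K z⟫_ℂ)
        = ⟪z, A z⟫_ℂ := by
      rw [ContinuousLinearMap.adjoint_inner_left]
      rfl
    have h2 : RCLike.re ⟪ContinuousLinearMap.adjoint K z, ContinuousLinearMap.adjoint K z⟫_ℂ
        = ‖ContinuousLinearMap.adjoint K z‖ ^ 2 := inner_self_eq_norm_sq _
    rw [← h2, h1]
    calc RCLike.re ⟪z, A z⟫_ℂ ≤ ‖⟪z, A z⟫_ℂ‖ := RCLike.re_le_norm _
      _ ≤ ‖z‖ * ‖A z‖ := norm_inner_le_norm _ _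
  suffices hseq : IsSeqCompact (closure
      (⇑((ContinuousLinearMap.adjoint K : H →ₗ[ℂ] H)) '' Metric.closedBall 0 1)) by
    have goal : IsCompactOperator ⇑((ContinuousLinearMap.adjoint K : H →ₗ[ℂ] H)) :=
      (isCompactOperator_iff_isCompact_closure_image_closedBall _ one_pos).mpr hseq.isCompact
    exact goal
  intro y hy
  -- approximate each `y n` by the image of a point of the ball
  have happrox : ∀ n : ℕ, ∃ x : H, ‖x‖ ≤ 1 ∧
      ‖y n - ContinuousLinearMap.adjoint K x‖ < 1 / (n + 1) := by
    intro n
    have hpos : (0:ℝ) < 1 / (n + 1) := by positivity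
    obtain ⟨z, hz, hdist⟩ := Metric.mem_closure_iff.mp (hy n) _ hpos
    obtain ⟨x, hx, rfl⟩ := hz
    exact ⟨x, by simpa [Metric.mem_closedBall, dist_eq_norm] using hx,
      by simpa [dist_eq_norm] using hdist⟩
  choose x hx1 hx2 using happrox
  obtain ⟨φ, hφ, w, hw⟩ := exists_subseq A hAc x hx1
  -- `adjoint K (x (φ n))` is Cauchy
  have hcauchyA : CauchySeq (fun n => A (x (φ n))) := hw.cauchySeq
  have hcauchy : CauchySeq (fun n => ContinuousLinearMap.adjoint K (x (φ n))) := by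
    rw [Metric.cauchySeq_iff] at hcauchyA ⊢
    intro ε hε
    obtain ⟨N, hN⟩ := hcauchyA (ε ^ 2 / 4) (by positivity)
    refine ⟨N, fun m hm n hn => ?_⟩
    have h1 := hN m hm n hn
    have h2 : ‖ContinuousLinearMap.adjoint K (x (φ m)) - ContinuousLinearMap.adjoint K (x (φ n))‖ ^ 2
        ≤ ‖x (φ m) - x (φ n)‖ * ‖A (x (φ m)) - A (x (φ n))‖ := by
      have := key (x (φ m) - x (φ n))
      simpa [map_sub] using this
    have h3 : ‖x (φ m) - x (φ n)‖ ≤ 2 := by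
      calc ‖x (φ m) - x (φ n)‖ ≤ ‖x (φ m)‖ + ‖x (φ n)‖ := norm_sub_le _ _
        _ ≤ 2 := by linarith [hx1 (φ m), hx1 (φ n)]
    rw [dist_eq_norm] at h1 ⊢
    nlinarith [norm_nonneg (ContinuousLinearMap.adjoint K (x (φ m))
      - ContinuousLinearMap.adjoint K (x (φ n))),
      norm_nonneg (A (x (φ m)) - A (x (φ n)))]
  obtain ⟨a, ha⟩ := cauchySeq_tendsto_of_complete hcauchy
  refine ⟨a, ?_, φ, hφ, ?_⟩
  · apply mem_closure_of_tendsto ha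
    apply Filter.Eventually.of_forall
    intro n
    exact ⟨x (φ n), by simpa [Metric.mem_closedBall, dist_eq_norm] using hx1 (φ n), rfl⟩
  · -- `y ∘ φ` has the same limit
    have hdiff : Tendsto (fun n => y (φ n) - ContinuousLinearMap.adjoint K (x (φ n))) atTop (𝓝 0) := by
      exact squeeze_zero_norm (fun n => le_of_lt (hx2 (φ n)))
        (tendsto_one_div_add_atTop_nhds_zero_nat.comp hφ.tendsto_atTop)
    have := hdiff.add ha
    simpa [Function.comp_def] using this
/-- An isometry which is a compact perturbation of the identity is surjective. -/
lemma surjective_of_isometry_compact_perturbation (T : H →L[ℂ] H) (hT : ∀ x, ‖T x‖ = ‖x‖)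
    (hC : IsCompactOperator ⇑(T - 1)) : Function.Surjective T := by
  classical
  by_contra hsurj
  rw [Function.Surjective] at hsurj
  push_neg at hsurj
  obtain ⟨y₀, hy₀⟩ := hsurj
  have hTn : ∀ (n : ℕ) (x : H), ‖(T ^ n) x‖ = ‖x‖ := by
    intro n
    induction n with
    | zero => intro x; simp
    | succ n ih =>
      intro x
      rw [pow_succ, ContinuousLinearMap.mul_apply, ih, hT]
  have hiso : ∀ n : ℕ, Isometry ⇑(T ^ n) := fun n =>
    AddMonoidHomClass.isometry_of_norm _ (hTn n)
  have hinj : ∀ n : ℕ, Function.Injective ⇑(T ^ n) := fun n => (hiso n).injective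
  set R : ℕ → Submodule ℂ H := fun n => LinearMap.range ((T ^ n : H →L[ℂ] H) : H →ₗ[ℂ] H) with hR
  have hclosed : ∀ n, IsClosed (R n : Set H) := by
    intro n
    have hs : (R n : Set H) = Set.range ⇑(T ^ n) := by
      ext w
      exact Iff.rfl
    rw [hs]
    exact (hiso n).isClosedEmbedding.isClosed_range
  have hstep : ∀ n, R (n + 1) ≤ R n := by
    rintro n _ ⟨w, rfl⟩
    exact ⟨T w, by rw [pow_succ, ContinuousLinearMap.coe_coe, ContinuousLinearMap.coe_coe, ContinuousLinearMap.mul_apply]⟩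
  have hmono : Antitone R := antitone_nat_of_succ_le hstep
  have hzin : ∀ n, (T ^ n) y₀ ∈ R n := fun n => ⟨y₀, rfl⟩
  have hznot : ∀ n, (T ^ n) y₀ ∉ R (n + 1) := by
    rintro n ⟨w, hw⟩
    rw [pow_succ, ContinuousLinearMap.coe_coe, ContinuousLinearMap.mul_apply] at hw
    exact hy₀ w (hinj n hw)
  have hx : ∀ n : ℕ, ∃ x : H, ‖x‖ = 1 ∧ x ∈ R n ∧ x ∈ (R (n + 1))ᗮ := by
    intro n
    haveI : CompleteSpace (R (n + 1)) := (hclosed (n + 1)).completeSpace_coe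
    set w := (T ^ n) y₀ - (Submodule.orthogonalProjection (R (n + 1)) ((T ^ n) y₀) : H) with hw
    have hw0 : w ≠ 0 := by
      intro h
      rw [sub_eq_zero] at h
      exact hznot n (h ▸ Submodule.coe_mem _)
    have hworth : w ∈ (R (n + 1))ᗮ := Submodule.sub_starProjection_mem_orthogonal _
    have hwR : w ∈ R n :=
      Submodule.sub_mem _ (hzin n) (hmono (Nat.le_succ n) (Submodule.coe_mem _))
    have hnw : ((‖w‖ : ℂ))⁻¹ ≠ 0 := by
      simp [norm_ne_zero_iff.mpr hw0]
    refine ⟨((‖w‖ : ℂ))⁻¹ • w, ?_, Submodule.smul_mem _ _ hwR, Submodule.smul_mem _ _ hworth⟩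
    rw [norm_smul, norm_inv, Complex.norm_real, Real.norm_eq_abs, abs_norm]
    exact inv_mul_cancel₀ (norm_ne_zero_iff.mpr hw0)
  choose xs hxs1 hxs2 hxs3 using hx
  have hmaps : ∀ n, T (xs n) ∈ R (n + 1) := by
    intro n
    obtain ⟨a, ha⟩ := hxs2 n
    exact ⟨a, by rw [ContinuousLinearMap.coe_coe] at ha; rw [pow_succ', ContinuousLinearMap.coe_coe, ContinuousLinearMap.mul_apply, ha]⟩
  have hsep : ∀ m n : ℕ, n < m → 1 ≤ ‖(T - 1) (xs n) - (T - 1) (xs m)‖ := by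
    intro m n hnm
    set h := T (xs n) - T (xs m) + xs m with hh
    have h1 : (T - 1) (xs n) - (T - 1) (xs m) = h - xs n := by
      simp only [hh, ContinuousLinearMap.sub_apply, ContinuousLinearMap.one_apply]
      abel
    have hmem : h ∈ R (n + 1) := by
      apply Submodule.add_mem
      · exact Submodule.sub_mem _ (hmaps n)
          (hmono (Nat.succ_le_succ (le_of_lt hnm)) (hmaps m))
      · exact hmono (Nat.succ_le_of_lt hnm) (hxs2 m)
    have horth : ⟪h, xs n⟫_ℂ = 0 :=
      (Submodule.mem_orthogonal _ _).mp (hxs3 n) h hmem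
    have horth' : ⟪xs n, h⟫_ℂ = 0 := by
      rw [← inner_conj_symm, horth, map_zero]
    calc (1 : ℝ) = ‖⟪xs n, xs n - h⟫_ℂ‖ := by
          rw [inner_sub_right, horth', sub_zero, inner_self_eq_norm_sq_to_K, hxs1 n]
          norm_num
      _ ≤ ‖xs n‖ * ‖xs n - h‖ := norm_inner_le_norm _ _
      _ = ‖xs n - h‖ := by rw [hxs1 n, one_mul]
      _ = ‖(T - 1) (xs n) - (T - 1) (xs m)‖ := by rw [h1, norm_sub_rev]
  obtain ⟨φ, hφ, yl, hyl⟩ := exists_subseq (T - 1) hC xs (fun n => le_of_eq (hxs1 n))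
  have hcauchy := hyl.cauchySeq
  rw [Metric.cauchySeq_iff] at hcauchy
  obtain ⟨N, hN⟩ := hcauchy 1 one_pos
  have h2 := hN (N + 1) (Nat.le_succ N) N le_rfl
  have h3 : φ N < φ (N + 1) := hφ (Nat.lt_succ_self N)
  have h4 := hsep (φ (N + 1)) (φ N) h3
  rw [dist_eq_norm, norm_sub_rev] at h2
  linarith

/-- Main lemma: every isometry in `D+K` is unitary. -/
lemma mem_unitary_of_isometry (e : HilbertBasis ℕ ℂ H) (V : H →L[ℂ] H)
    (hV : V ∈ DplusK e) (hiso : ∀ x : H, ‖V x‖ = ‖x‖) : V ∈ unitary (H →L[ℂ] H) := by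
  classical
  obtain ⟨D, K, hD, hK, rfl⟩ := hV
  set d : ℕ → ℂ := fun n => ⟪(e n : H), D (e n)⟫_ℂ with hd
  have hdB : ∀ n, ‖d n‖ ≤ ‖D‖ := by
    intro n
    calc ‖d n‖ ≤ ‖(e n : H)‖ * ‖D (e n)‖ := norm_inner_le_norm _ _
      _ = ‖D (e n)‖ := by rw [e.orthonormal.1 n, one_mul]
      _ ≤ ‖D‖ * ‖(e n : H)‖ := D.le_opNorm _
      _ = ‖D‖ := by rw [e.orthonormal.1 n, mul_one]
  have hKe : Tendsto (fun n => K (e n)) atTop (𝓝 0) := compact_basis_tendsto e K hK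
  have hKn : Tendsto (fun n => ‖K (e n)‖) atTop (𝓝 0) := by
    simpa using hKe.norm
  have hVe : ∀ n, (D + K) (e n) = d n • e n + K (e n) := by
    intro n
    rw [ContinuousLinearMap.add_apply, diag_apply' e hD n]
  have hdist : ∀ n, |‖d n‖ - 1| ≤ ‖K (e n)‖ := by
    intro n
    have h1 : ‖(D + K) (e n)‖ = 1 := by rw [hiso]; exact e.orthonormal.1 n
    have h2 : ‖d n • (e n : H)‖ = ‖d n‖ := by rw [norm_smul, e.orthonormal.1 n, mul_one]
    have h3 := abs_norm_sub_norm_le (d n • (e n : H) + K (e n)) (d n • (e n : H))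
    rw [add_sub_cancel_left, h2, ← hVe n, h1, abs_sub_comm] at h3
    exact h3
  have hdlim : Tendsto (fun n => ‖d n‖) atTop (𝓝 1) := by
    have h0 : Tendsto (fun n => ‖d n‖ - 1) atTop (𝓝 0) :=
      squeeze_zero_norm (fun n => by simpa [Real.norm_eq_abs] using hdist n) hKn
    have := h0.add_const 1
    simpa using this
  set u : ℕ → ℂ := fun n => if ‖d n‖ ≤ 1 / 2 then 1 else ((‖d n‖ : ℂ))⁻¹ * d n with hu
  have hu1 : ∀ n, ‖u n‖ = 1 := by
    intro n
    by_cases hn : ‖d n‖ ≤ 1 / 2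
    · show ‖if ‖d n‖ ≤ 1 / 2 then (1 : ℂ) else ((‖d n‖ : ℂ))⁻¹ * d n‖ = 1
      rw [if_pos hn, norm_one]
    · push_neg at hn
      have hdn0 : ‖d n‖ ≠ 0 := ne_of_gt (lt_trans one_half_pos hn)
      show ‖if ‖d n‖ ≤ 1 / 2 then (1 : ℂ) else ((‖d n‖ : ℂ))⁻¹ * d n‖ = 1
      rw [if_neg (not_le.mpr hn), norm_mul, norm_inv, Complex.norm_real, Real.norm_eq_abs, abs_norm]
      exact inv_mul_cancel₀ hdn0
  have hcu : Tendsto (fun n => d n - u n) atTop (𝓝 0) := by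
    have habs : Tendsto (fun n => |‖d n‖ - 1|) atTop (𝓝 0) := by
      have := (hdlim.sub_const 1).abs
      simpa using this
    apply squeeze_zero_norm' _ habs
    have hev : ∀ᶠ n in atTop, 1 / 2 < ‖d n‖ :=
      hdlim.eventually (eventually_gt_nhds (by norm_num))
    filter_upwards [hev] with n hn
    have hdn0 : ‖d n‖ ≠ 0 := ne_of_gt (lt_trans one_half_pos hn)
    have hun : u n = ((‖d n‖ : ℂ))⁻¹ * d n := by
      show (if ‖d n‖ ≤ 1 / 2 then (1 : ℂ) else ((‖d n‖ : ℂ))⁻¹ * d n) = _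
      rw [if_neg (not_le.mpr hn)]
    have heq : d n - u n = (1 - ((‖d n‖ : ℂ))⁻¹) * d n := by rw [hun]; ring
    rw [heq, norm_mul]
    have hcast : (1 - ((‖d n‖ : ℂ))⁻¹) = ((1 - (‖d n‖)⁻¹ : ℝ) : ℂ) := by push_cast; ring
    rw [hcast, Complex.norm_real, Real.norm_eq_abs]
    have hpos : (0 : ℝ) < ‖d n‖ := lt_trans one_half_pos hn
    have h6 : |1 - ‖d n‖⁻¹| * ‖d n‖ = |(1 - ‖d n‖⁻¹) * ‖d n‖| := by
      rw [abs_mul, abs_of_pos hpos]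
    have h7 : (1 - ‖d n‖⁻¹) * ‖d n‖ = ‖d n‖ - 1 := by
      rw [sub_mul, one_mul, inv_mul_cancel₀ hdn0]
    rw [h6, h7]
  have huB : ∀ n, ‖u n‖ ≤ 1 := fun n => le_of_eq (hu1 n)
  set U := diagOp e u huB with hU
  set u' : ℕ → ℂ := fun n => starRingEnd ℂ (u n) with hu'
  have hu'1 : ∀ n, ‖u' n‖ = 1 := fun n => by
    rw [hu']; simpa using hu1 n
  have hu'B : ∀ n, ‖u' n‖ ≤ 1 := fun n => le_of_eq (hu'1 n)
  set U' := diagOp e u' hu'B with hU'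
  have hscal : ∀ n, u' n * u n = 1 := by
    intro n
    rw [hu', mul_comm, Complex.mul_conj]
    norm_cast
    rw [Complex.normSq_eq_norm_sq, hu1 n, one_pow]
  have hscal' : ∀ n, u n * u' n = 1 := fun n => by rw [mul_comm]; exact hscal n
  have hUU' : U.comp U' = 1 := by
    apply ext_basis e
    intro n
    rw [ContinuousLinearMap.comp_apply, hU', diagOp_basis, map_smul, hU, diagOp_basis,
      smul_smul, hscal n, one_smul, ContinuousLinearMap.one_apply]
  have hU'U : U'.comp U = 1 := by
    apply ext_basis e
    intro n
    rw [ContinuousLinearMap.comp_apply, hU, diagOp_basis, map_smul, hU', diagOp_basis,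
      smul_smul, hscal' n, one_smul, ContinuousLinearMap.one_apply]
  have hDUc : IsCompactOperator ⇑(D - U) := by
    have hbound : ∀ n, ‖d n - u n‖ ≤ ‖D‖ + 1 := by
      intro n
      calc ‖d n - u n‖ ≤ ‖d n‖ + ‖u n‖ := norm_sub_le _ _
        _ ≤ ‖D‖ + 1 := add_le_add (hdB n) (huB n)
    have hDU : D - U = diagOp e (fun n => d n - u n) hbound := by
      apply ext_basis e
      intro n
      have hDe : D (e n) = d n • e n := diag_apply' e hD n
      rw [ContinuousLinearMap.sub_apply, hDe, hU, diagOp_basis, diagOp_basis, sub_smul]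
    rw [hDU]
    exact diagOp_compact e _ hbound hcu
  have hVUc : IsCompactOperator ⇑(D + K - U) := by
    have heq : D + K - U = (D - U) + K := by abel
    have hco : ⇑((D - U) + K) = ⇑(D - U) + ⇑K := rfl
    rw [heq, hco]
    exact hDUc.add hK
  set T := U'.comp (D + K) with hT
  have hTiso : ∀ x, ‖T x‖ = ‖x‖ := by
    intro x
    rw [hT, ContinuousLinearMap.comp_apply, hU', diagOp_isometry e u' hu'B hu'1, hiso]
  have hT1 : T - 1 = U'.comp (D + K - U) := by
    rw [ContinuousLinearMap.comp_sub, ← hU'U, hT]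
  have hT1c : IsCompactOperator ⇑(T - 1) := by
    rw [hT1]
    exact hVUc.clm_comp U'
  have hTsurj := surjective_of_isometry_compact_perturbation T hTiso hT1c
  have hVsurj : Function.Surjective ⇑(D + K) := by
    have h5 : U.comp T = D + K := by
      rw [hT, ← ContinuousLinearMap.comp_assoc, hUU', ContinuousLinearMap.one_def,
        ContinuousLinearMap.id_comp]
    intro y
    obtain ⟨x, hx⟩ := hTsurj (U' y)
    refine ⟨x, ?_⟩
    calc (D + K) x = (U.comp T) x := by rw [h5]
      _ = U (T x) := rfl
      _ = U (U' y) := by rw [hx]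
      _ = (U.comp U') y := rfl
      _ = y := by rw [hUU']; rfl
  have hVV : ∀ v x : H, ⟪(D + K) v, (D + K) x⟫_ℂ = ⟪v, x⟫_ℂ := fun v x =>
    LinearIsometry.inner_map_map ⟨(D + K : H →L[ℂ] H).toLinearMap, hiso⟩ v x
  rw [Unitary.mem_iff]
  have hstar1 : star (D + K) * (D + K) = 1 := by
    ext x
    apply ext_inner_left ℂ
    intro v
    rw [ContinuousLinearMap.mul_apply, ContinuousLinearMap.one_apply,
      ContinuousLinearMap.star_eq_adjoint, ContinuousLinearMap.adjoint_inner_right, hVV]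
  refine ⟨hstar1, ?_⟩
  ext y
  obtain ⟨x, rfl⟩ := hVsurj y
  rw [ContinuousLinearMap.mul_apply, ContinuousLinearMap.one_apply]
  calc (D + K) (star (D + K) ((D + K) x)) = (D + K) ((star (D + K) * (D + K)) x) := rfl
    _ = (D + K) x := by rw [hstar1]; rfl

end DK

/-- There are no proper isometries in `D+K`: every isometry in `D+K` is unitary, and every
co-isometry in `D+K` is unitary. -/
theorem isometry_in_DplusK_is_unitary (e : HilbertBasis ℕ ℂ H) (V : H →L[ℂ] H)
    (hV : V ∈ DplusK e) :
    ((∀ x : H, ‖V x‖ = ‖x‖) → V ∈ unitary (H →L[ℂ] H)) ∧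
    ((∀ x : H, ‖ContinuousLinearMap.adjoint V x‖ = ‖x‖) → V ∈ unitary (H →L[ℂ] H)) := by
  constructor
  · exact DK.mem_unitary_of_isometry e V hV
  · intro hiso
    have hadj : ContinuousLinearMap.adjoint V ∈ DplusK e := by
      obtain ⟨D, K, hD, hK, rfl⟩ := hV
      refine ⟨ContinuousLinearMap.adjoint D, ContinuousLinearMap.adjoint K, ?_,
        DK.adjoint_compact K hK, ?_⟩
      · intro n m hnm
        rw [ContinuousLinearMap.adjoint_inner_right, ← inner_conj_symm,
          hD m n (Ne.symm hnm), map_zero]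
      · rw [map_add]
    have h1 := DK.mem_unitary_of_isometry e _ hadj hiso
    have h2 := Unitary.star_mem h1
    rwa [ContinuousLinearMap.star_eq_adjoint, ContinuousLinearMap.adjoint_adjoint] at h2
end

section
/- If U is a unitary operator on H such that U D U* ∈ D+K for every diagonal operator D, then Ad(U) restricts to a *-automorphism of D+K (in particular it is surjective onto D+K). -/
open scoped InnerProductSpace ENNReal
open ContinuousLinearMap Set

noncomputable section

variable {H : Type*} [NormedAddCommGroup H] [InnerProductSpace ℂ H] [CompleteSpace H]

set_option linter.unusedSectionVars false

namespace JP

lemma two_toReal : (2 : ℝ≥0∞).toReal = 2 := by norm_num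

lemma memℓp_mul (b : ℕ → ℂ) (C : ℝ) (hb : ∀ n, ‖b n‖ ≤ C) (f : lp (fun _ : ℕ => ℂ) 2) :
    Memℓp (fun n => b n * f n) 2 := by
  have h0 : (0:ℝ) < (2 : ℝ≥0∞).toReal := by rw [two_toReal]; norm_num
  refine memℓp_gen ?_
  have hs : Summable fun n => C ^ 2 * ‖f n‖ ^ (2 : ℝ≥0∞).toReal :=
    ((lp.memℓp f).summable h0).mul_left _
  refine hs.of_nonneg_of_le (fun n => Real.rpow_nonneg (norm_nonneg _) _) (fun n => ?_)
  have hC : 0 ≤ C := le_trans (norm_nonneg _) (hb 0)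
  have h1 : ‖b n * f n‖ ≤ C * ‖f n‖ := by
    rw [norm_mul]; exact mul_le_mul_of_nonneg_right (hb n) (norm_nonneg _)
  calc ‖b n * f n‖ ^ (2 : ℝ≥0∞).toReal ≤ (C * ‖f n‖) ^ (2 : ℝ≥0∞).toReal :=
        Real.rpow_le_rpow (norm_nonneg _) h1 (le_of_lt h0)
    _ = C ^ 2 * ‖f n‖ ^ (2 : ℝ≥0∞).toReal := by
        rw [Real.mul_rpow hC (norm_nonneg _), two_toReal]
        norm_num [Real.rpow_natCast C 2]

/-- Pointwise multiplication by a bounded sequence, as an operator on `ℓ²`. -/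
def mulLp (b : ℕ → ℂ) (C : ℝ) (hb : ∀ n, ‖b n‖ ≤ C) :
    lp (fun _ : ℕ => ℂ) 2 →L[ℂ] lp (fun _ : ℕ => ℂ) 2 := by
  refine LinearMap.mkContinuous
    { toFun := fun f => ⟨fun n => b n * f n, memℓp_mul b C hb f⟩
      map_add' := fun f g => ?_
      map_smul' := fun c f => ?_ } C (fun f => ?_)
  · apply lp.ext; funext n
    change b n * ((f + g) n) = _
    rw [lp.coeFn_add]
    show b n * (f n + g n) = ((⟨_, memℓp_mul b C hb f⟩ : lp (fun _ : ℕ => ℂ) 2) + ⟨_, memℓp_mul b C hb g⟩) n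
    rw [lp.coeFn_add]
    show b n * (f n + g n) = b n * f n + b n * g n
    ring
  · apply lp.ext; funext n
    change b n * ((c • f) n) = _
    rw [lp.coeFn_smul]
    show b n * (c • f n) = (c • (⟨_, memℓp_mul b C hb f⟩ : lp (fun _ : ℕ => ℂ) 2)) n
    rw [lp.coeFn_smul]
    show b n * (c * f n) = c * (b n * f n)
    ring
  · have hC : 0 ≤ C := le_trans (norm_nonneg _) (hb 0)
    have h0 : (0:ℝ) < (2 : ℝ≥0∞).toReal := by rw [two_toReal]; norm_num
    refine lp.norm_le_of_forall_sum_le h0 (mul_nonneg hC (norm_nonneg f)) (fun s => ?_)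
    have h1 : ∀ i ∈ s, ‖b i * f i‖ ^ (2 : ℝ≥0∞).toReal ≤ C ^ 2 * ‖f i‖ ^ (2 : ℝ≥0∞).toReal := by
      intro i _
      have h1 : ‖b i * f i‖ ≤ C * ‖f i‖ := by
        rw [norm_mul]; exact mul_le_mul_of_nonneg_right (hb i) (norm_nonneg _)
      calc ‖b i * f i‖ ^ (2 : ℝ≥0∞).toReal ≤ (C * ‖f i‖) ^ (2 : ℝ≥0∞).toReal :=
            Real.rpow_le_rpow (norm_nonneg _) h1 (le_of_lt h0)
        _ = C ^ 2 * ‖f i‖ ^ (2 : ℝ≥0∞).toReal := by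
            rw [Real.mul_rpow hC (norm_nonneg _), two_toReal]
            norm_num [Real.rpow_natCast C 2]
    calc (∑ i ∈ s, ‖(fun n => b n * f n) i‖ ^ (2 : ℝ≥0∞).toReal)
        ≤ ∑ i ∈ s, C ^ 2 * ‖f i‖ ^ (2 : ℝ≥0∞).toReal := Finset.sum_le_sum h1
      _ = C ^ 2 * ∑ i ∈ s, ‖f i‖ ^ (2 : ℝ≥0∞).toReal := by rw [Finset.mul_sum]
      _ ≤ C ^ 2 * ‖f‖ ^ (2 : ℝ≥0∞).toReal := by
          refine mul_le_mul_of_nonneg_left (lp.sum_rpow_le_norm_rpow h0 f s) (by positivity)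
      _ = (C * ‖f‖) ^ (2 : ℝ≥0∞).toReal := by
          rw [Real.mul_rpow hC (norm_nonneg _), two_toReal]
          norm_num [Real.rpow_natCast C 2]

lemma mulLp_apply (b : ℕ → ℂ) (C : ℝ) (hb : ∀ n, ‖b n‖ ≤ C) (f : lp (fun _ : ℕ => ℂ) 2)
    (n : ℕ) : (mulLp b C hb f) n = b n * f n := rfl

/-- The diagonal operator with (bounded) diagonal entries `b`. -/
def diag (e : HilbertBasis ℕ ℂ H) (b : ℕ → ℂ) (C : ℝ) (hb : ∀ n, ‖b n‖ ≤ C) :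
    H →L[ℂ] H :=
  (e.repr.symm.toLinearIsometry.toContinuousLinearMap.comp (mulLp b C hb)).comp
    e.repr.toLinearIsometry.toContinuousLinearMap

lemma repr_diag (e : HilbertBasis ℕ ℂ H) (b : ℕ → ℂ) (C : ℝ) (hb : ∀ n, ‖b n‖ ≤ C)
    (x : H) (n : ℕ) : e.repr (diag e b C hb x) n = b n * e.repr x n := by
  simp only [diag, ContinuousLinearMap.comp_apply]
  have : e.repr.symm.toLinearIsometry.toContinuousLinearMap
      (mulLp b C hb (e.repr.toLinearIsometry.toContinuousLinearMap x))
      = e.repr.symm (mulLp b C hb (e.repr x)) := rfl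
  rw [this, LinearIsometryEquiv.apply_symm_apply]
  rfl

lemma ext_repr (e : HilbertBasis ℕ ℂ H) {x y : H}
    (h : ∀ n, e.repr x n = e.repr y n) : x = y := by
  have : e.repr x = e.repr y := lp.ext (funext h)
  exact e.repr.injective this

lemma inner_basis (e : HilbertBasis ℕ ℂ H) (x : H) (m : ℕ) :
    ⟪e m, x⟫_ℂ = e.repr x m := (e.repr_apply_apply x m).symm

lemma norm_diag_apply_le (e : HilbertBasis ℕ ℂ H) (b : ℕ → ℂ) (C : ℝ) (hb : ∀ n, ‖b n‖ ≤ C)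
    (x : H) : ‖diag e b C hb x‖ ≤ C * ‖x‖ := by
  have hC : 0 ≤ C := le_trans (norm_nonneg _) (hb 0)
  have h1 : ‖diag e b C hb x‖ = ‖mulLp b C hb (e.repr x)‖ := by
    have : diag e b C hb x = e.repr.symm (mulLp b C hb (e.repr x)) := rfl
    rw [this, LinearIsometryEquiv.norm_map]
  rw [h1]
  calc ‖mulLp b C hb (e.repr x)‖ ≤ ‖mulLp b C hb‖ * ‖e.repr x‖ := le_opNorm _ _
    _ ≤ C * ‖e.repr x‖ := by
        refine mul_le_mul_of_nonneg_right ?_ (norm_nonneg _)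
        exact LinearMap.mkContinuous_norm_le _ hC _
    _ = C * ‖x‖ := by rw [LinearIsometryEquiv.norm_map]

lemma isDiagonal_diag (e : HilbertBasis ℕ ℂ H) (b : ℕ → ℂ) (C : ℝ) (hb : ∀ n, ‖b n‖ ≤ C) :
    IsDiagonal e (diag e b C hb) := by
  intro n m hnm
  rw [inner_basis, repr_diag, e.repr_self, lp.single_apply]
  rw [Pi.single_apply, if_neg (Ne.symm hnm), mul_zero]

lemma indicator_norm_le (A : Set ℕ) (n : ℕ) : ‖A.indicator (1 : ℕ → ℂ) n‖ ≤ 1 := by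
  by_cases h : n ∈ A
  · rw [Set.indicator_of_mem h]; simp
  · rw [Set.indicator_of_notMem h]; simp

/-- The diagonal projection onto the coordinates in `A`. -/
def P (e : HilbertBasis ℕ ℂ H) (A : Set ℕ) : H →L[ℂ] H :=
  diag e (A.indicator 1) 1 (indicator_norm_le A)

lemma repr_P (e : HilbertBasis ℕ ℂ H) (A : Set ℕ) (x : H) (n : ℕ) [Decidable (n ∈ A)] :
    e.repr (P e A x) n = if n ∈ A then e.repr x n else 0 := by
  rw [P, repr_diag]
  by_cases h : n ∈ A
  · rw [Set.indicator_of_mem h, if_pos h, Pi.one_apply, one_mul]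
  · rw [Set.indicator_of_notMem h, if_neg h, zero_mul]

lemma isDiagonal_P (e : HilbertBasis ℕ ℂ H) (A : Set ℕ) : IsDiagonal e (P e A) :=
  isDiagonal_diag e _ _ _

lemma norm_P_apply_le (e : HilbertBasis ℕ ℂ H) (A : Set ℕ) (x : H) : ‖P e A x‖ ≤ ‖x‖ := by
  simpa [P] using norm_diag_apply_le e (A.indicator 1) 1 (indicator_norm_le A) x

lemma P_P (e : HilbertBasis ℕ ℂ H) (A B : Set ℕ) (x : H) :
    P e A (P e B x) = P e (A ∩ B) x := by
  classical
  refine ext_repr e (fun n => ?_)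
  rw [repr_P, repr_P, repr_P]
  by_cases hA : n ∈ A <;> by_cases hB : n ∈ B <;>
    simp [hA, hB, Set.mem_inter_iff]

lemma P_add_compl (e : HilbertBasis ℕ ℂ H) (A : Set ℕ) (x : H) :
    P e A x + P e Aᶜ x = x := by
  classical
  refine ext_repr e (fun n => ?_)
  rw [map_add, lp.coeFn_add, Pi.add_apply, repr_P, repr_P]
  by_cases hA : n ∈ A <;> simp [hA]

lemma P_union (e : HilbertBasis ℕ ℂ H) {A B : Set ℕ} (h : Disjoint A B) (x : H) :
    P e (A ∪ B) x = P e A x + P e B x := by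
  classical
  refine ext_repr e (fun n => ?_)
  rw [map_add, lp.coeFn_add, Pi.add_apply, repr_P, repr_P, repr_P]
  by_cases hA : n ∈ A <;> by_cases hB : n ∈ B
  · exact absurd (Set.mem_inter hA hB) (by rw [Set.disjoint_iff_inter_eq_empty] at h; simp [h])
  all_goals simp [hA, hB]

lemma norm_P_mono (e : HilbertBasis ℕ ℂ H) {A B : Set ℕ} (h : A ⊆ B) (x : H) :
    ‖P e A x‖ ≤ ‖P e B x‖ := by
  have : P e A x = P e A (P e B x) := by
    rw [P_P, Set.inter_eq_self_of_subset_left h]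
  rw [this]; exact norm_P_apply_le e A _

lemma inner_P_left (e : HilbertBasis ℕ ℂ H) (A : Set ℕ) (x y : H) :
    ⟪P e A x, y⟫_ℂ = ⟪x, P e A y⟫_ℂ := by
  classical
  rw [← e.repr.inner_map_map (P e A x) y, ← e.repr.inner_map_map x (P e A y)]
  rw [lp.inner_eq_tsum, lp.inner_eq_tsum]
  congr 1
  funext n
  rw [repr_P, repr_P]
  by_cases h : n ∈ A <;> simp [h]

lemma P_eq_self (e : HilbertBasis ℕ ℂ H) {A : Set ℕ} {x : H}
    (h : ∀ n, n ∉ A → e.repr x n = 0) : P e A x = x := by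
  classical
  refine ext_repr e (fun n => ?_)
  rw [repr_P]
  by_cases hn : n ∈ A
  · rw [if_pos hn]
  · rw [if_neg hn, h n hn]

lemma P_finset (e : HilbertBasis ℕ ℂ H) (F : Finset ℕ) (x : H) :
    P e (↑F) x = ∑ j ∈ F, e.repr x j • e j := by
  classical
  refine ext_repr e (fun n => ?_)
  rw [repr_P, map_sum]
  have h1 : ∀ j ∈ F, (e.repr (e.repr x j • e j)) n
      = if n = j then e.repr x j else 0 := by
    intro j _
    rw [map_smul, lp.coeFn_smul, Pi.smul_apply, e.repr_self, lp.single_apply]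
    by_cases h : n = j
    · simp [h]
    · simp [dif_neg h, h]
  rw [lp.coeFn_sum, Finset.sum_apply, Finset.sum_congr rfl h1]
  rw [show (fun j => if n = j then e.repr x j else 0) = (fun j => if j = n then e.repr x j else 0) by
    funext j; by_cases h : n = j <;> simp [h, eq_comm]]
  rw [Finset.sum_ite_eq' F n _]
  simp only [Finset.mem_coe]

lemma P_Iio_eq_sum (e : HilbertBasis ℕ ℂ H) (n : ℕ) (v : H) :
    P e (Iio n) v = ∑ j ∈ Finset.range n, e.repr v j • e j := by
  rw [← Finset.coe_range, P_finset]

lemma tail_tendsto (e : HilbertBasis ℕ ℂ H) (v : H) :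
    Filter.Tendsto (fun n => ‖P e (Ici n) v‖) Filter.atTop (nhds 0) := by
  have h1 : ∀ n, P e (Ici n) v = v - P e (Iio n) v := by
    intro n
    have := P_add_compl e (Iio n) v
    rw [Set.compl_Iio] at this
    linear_combination (norm := module) this
  have h2 : Filter.Tendsto (fun n => P e (Iio n) v) Filter.atTop (nhds v) := by
    have := (e.hasSum_repr v).tendsto_sum_nat
    refine this.congr (fun n => ?_)
    rw [P_Iio_eq_sum]
  simp only [h1]
  have h3 : Filter.Tendsto (fun n => v - P e (Iio n) v) Filter.atTop (nhds (v - v)) :=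
    Filter.Tendsto.sub tendsto_const_nhds h2
  rw [sub_self] at h3
  simpa using h3.norm

lemma isCompactOperator_rankOne (v w : H) :
    IsCompactOperator (fun x : H => ⟪v, x⟫_ℂ • w) := by
  refine ⟨(fun c : ℂ => c • w) '' Metric.closedBall 0 ‖v‖, ?_, ?_⟩
  · exact (isCompact_closedBall 0 ‖v‖).image (by fun_prop)
  · refine Filter.mem_of_superset (Metric.ball_mem_nhds 0 one_pos) ?_
    intro x hx
    refine ⟨⟪v, x⟫_ℂ, ?_, rfl⟩
    rw [Metric.mem_closedBall, dist_zero_right]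
    calc ‖⟪v, x⟫_ℂ‖ ≤ ‖v‖ * ‖x‖ := norm_inner_le_norm v x
      _ ≤ ‖v‖ * 1 := by
          refine mul_le_mul_of_nonneg_left ?_ (norm_nonneg v)
          exact le_of_lt (by simpa [dist_zero_right] using hx)
      _ = ‖v‖ := mul_one _

lemma isCompactOperator_sum_rankOne (e : HilbertBasis ℕ ℂ H) (F : Finset ℕ) :
    IsCompactOperator (fun x => ∑ j ∈ F, ⟪e j, x⟫_ℂ • e j) := by
  classical
  induction F using Finset.induction with
  | empty => simp only [Finset.sum_empty]; exact isCompactOperator_zero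
  | insert _ _ hx ih =>
      rename_i a s
      have : (fun x => ∑ j ∈ insert a s, ⟪e j, x⟫_ℂ • e j)
          = (fun x => ⟪e a, x⟫_ℂ • e a) + fun x => ∑ j ∈ s, ⟪e j, x⟫_ℂ • e j := by
        funext x
        simp [Finset.sum_insert hx]
      rw [this]
      exact (isCompactOperator_rankOne (e a) (e a)).add ih

lemma isCompactOperator_P_finset (e : HilbertBasis ℕ ℂ H) (F : Finset ℕ) :
    IsCompactOperator ⇑(P e (↑F)) := by
  have h : ⇑(P e (↑F : Set ℕ)) = fun x => ∑ j ∈ F, ⟪e j, x⟫_ℂ • e j := by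
    funext x
    rw [P_finset]
    exact Finset.sum_congr rfl (fun j _ => by rw [inner_basis])
  rw [h]
  exact isCompactOperator_sum_rankOne e F

lemma norm_P_finset_le_sum (e : HilbertBasis ℕ ℂ H) (F : Finset ℕ) (w : H) :
    ‖P e (↑F) w‖ ≤ ∑ j ∈ F, ‖⟪e j, w⟫_ℂ‖ := by
  rw [P_finset]
  refine le_trans (norm_sum_le _ _) (Finset.sum_le_sum (fun j _ => ?_))
  rw [norm_smul, e.orthonormal.1 j, mul_one, inner_basis]

/-- A compact operator kills bounded sequences supported further and further out. -/
lemma compact_apply_tendsto_zero (e : HilbertBasis ℕ ℂ H) {C : H →L[ℂ] H}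
    (hC : IsCompactOperator ⇑C) {N : ℕ → ℕ} (hN : Filter.Tendsto N Filter.atTop Filter.atTop)
    {x : ℕ → H} (hx1 : ∀ k, ‖x k‖ ≤ 1) (hxs : ∀ k, P e (Ici (N k)) (x k) = x k) :
    Filter.Tendsto (fun k => ‖C (x k)‖) Filter.atTop (nhds 0) := by
  have hKc : IsCompact (closure (⇑C '' Metric.closedBall 0 1)) :=
    IsCompactOperator.isCompact_closure_image_closedBall (f := (C : H →ₗ[ℂ] H)) hC 1
  rw [Metric.tendsto_atTop]
  intro c hc
  set B : ℝ := ‖C‖ + 1 with hB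
  have hBpos : 0 < B := by positivity
  set δ : ℝ := c ^ 2 / (4 * B) with hδdef
  have hδ : 0 < δ := by positivity
  obtain ⟨t, htf, hcover⟩ := (Metric.totallyBounded_iff).mp hKc.totallyBounded δ hδ
  set g : ℕ → ℝ := fun k => ∑ y ∈ htf.toFinset, ‖P e (Ici (N k)) ((adjoint C) y)‖ with hg
  have hgt : Filter.Tendsto g Filter.atTop (nhds 0) := by
    have h0 : Filter.Tendsto (fun k => ∑ y ∈ htf.toFinset, ‖P e (Ici (N k)) ((adjoint C) y)‖)
        Filter.atTop (nhds (∑ _y ∈ htf.toFinset, (0:ℝ))) := by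
      refine tendsto_finset_sum _ (fun y _ => ?_)
      exact (tail_tendsto e ((adjoint C) y)).comp hN
    simpa using h0
  have hev : ∀ᶠ k in Filter.atTop, g k < c ^ 2 / 4 := by
    have hpos : (0:ℝ) < c ^ 2 / 4 := by positivity
    exact hgt.eventually_lt_const hpos
  obtain ⟨n₀, hn₀⟩ := hev.exists_forall_of_atTop
  refine ⟨n₀, fun k hk => ?_⟩
  rw [Real.dist_eq, sub_zero, abs_of_nonneg (norm_nonneg _)]
  -- find a net point close to `C (x k)`
  have hmem : C (x k) ∈ ⋃ y ∈ t, Metric.ball y δ := by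
    refine hcover ?_
    refine subset_closure ?_
    exact ⟨x k, by simpa [Metric.mem_closedBall, dist_zero_right] using hx1 k, rfl⟩
  rw [Set.mem_iUnion₂] at hmem
  obtain ⟨y, hyt, hy⟩ := hmem
  have hdist : ‖C (x k) - y‖ < δ := by
    rw [← dist_eq_norm]; exact hy
  -- the key estimate on ‖C (x k)‖ ^ 2
  have key : ‖C (x k)‖ ^ 2 ≤ δ * B + g k := by
    have h1 : (‖C (x k)‖:ℝ) ^ 2 = Complex.re ⟪C (x k), C (x k)⟫_ℂ := by
      rw [← inner_self_eq_norm_sq (𝕜 := ℂ)]; rfl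
    have h2 : ⟪C (x k), C (x k)⟫_ℂ = ⟪C (x k) - y, C (x k)⟫_ℂ + ⟪y, C (x k)⟫_ℂ := by
      rw [← inner_add_left, sub_add_cancel]
    have h3 : Complex.re ⟪C (x k) - y, C (x k)⟫_ℂ ≤ δ * B := by
      calc Complex.re ⟪C (x k) - y, C (x k)⟫_ℂ ≤ ‖⟪C (x k) - y, C (x k)⟫_ℂ‖ :=
            Complex.re_le_norm _
        _ ≤ ‖C (x k) - y‖ * ‖C (x k)‖ := norm_inner_le_norm _ _
        _ ≤ δ * B := by
            refine mul_le_mul hdist.le ?_ (norm_nonneg _) hδ.le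
            calc ‖C (x k)‖ ≤ ‖C‖ * ‖x k‖ := le_opNorm C (x k)
              _ ≤ ‖C‖ * 1 := mul_le_mul_of_nonneg_left (hx1 k) (norm_nonneg C)
              _ ≤ B := by rw [mul_one, hB]; linarith
    have h4 : Complex.re ⟪y, C (x k)⟫_ℂ ≤ g k := by
      have e1 : ⟪y, C (x k)⟫_ℂ = ⟪P e (Ici (N k)) ((adjoint C) y), x k⟫_ℂ := by
        rw [inner_P_left, hxs k, ContinuousLinearMap.adjoint_inner_left]
      calc Complex.re ⟪y, C (x k)⟫_ℂ ≤ ‖⟪y, C (x k)⟫_ℂ‖ := Complex.re_le_norm _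
        _ = ‖⟪P e (Ici (N k)) ((adjoint C) y), x k⟫_ℂ‖ := by rw [e1]
        _ ≤ ‖P e (Ici (N k)) ((adjoint C) y)‖ * ‖x k‖ := norm_inner_le_norm _ _
        _ ≤ ‖P e (Ici (N k)) ((adjoint C) y)‖ * 1 :=
            mul_le_mul_of_nonneg_left (hx1 k) (norm_nonneg _)
        _ ≤ g k := by
            rw [mul_one, hg]
            refine Finset.single_le_sum (f := fun y => ‖P e (Ici (N k)) ((adjoint C) y)‖)
              (fun _ _ => norm_nonneg _) ?_
            rw [Set.Finite.mem_toFinset]; exact hyt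
    calc (‖C (x k)‖:ℝ) ^ 2 = Complex.re ⟪C (x k) - y, C (x k)⟫_ℂ
          + Complex.re ⟪y, C (x k)⟫_ℂ := by rw [h1, h2, Complex.add_re]
      _ ≤ δ * B + g k := add_le_add h3 h4
  have hlt : ‖C (x k)‖ ^ 2 < c ^ 2 := by
    have hδB : δ * B = c ^ 2 / 4 := by
      rw [hδdef]; field_simp
    have := hn₀ k hk
    calc ‖C (x k)‖ ^ 2 ≤ δ * B + g k := key
      _ < c ^ 2 / 4 + c ^ 2 / 4 := by rw [hδB]; linarith
      _ < c ^ 2 := by nlinarith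
  exact lt_of_pow_lt_pow_left₀ 2 hc.le hlt

lemma card_filter_powerset (F : Finset ℕ) {m j : ℕ} (hm : m ∈ F) (hj : j ∈ F) (hmj : m ≠ j) :
    (F.powerset.filter (fun S => m ∈ S ∧ j ∉ S)).card = 2 ^ (F.card - 2) := by
  classical
  have hcard : ((F.erase m).erase j).powerset.card = 2 ^ (F.card - 2) := by
    rw [Finset.card_powerset, Finset.card_erase_of_mem, Finset.card_erase_of_mem hm]
    · rfl
    · exact Finset.mem_erase.mpr ⟨hmj.symm, hj⟩
  rw [← hcard]
  refine Finset.card_bij' (fun S _ => S.erase m) (fun T _ => insert m T) ?_ ?_ ?_ ?_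
  · intro S hS
    rw [Finset.mem_filter, Finset.mem_powerset] at hS
    obtain ⟨hSF, hmS, hjS⟩ := hS
    rw [Finset.mem_powerset]
    intro x hx
    rw [Finset.mem_erase] at hx
    refine Finset.mem_erase.mpr ⟨?_, Finset.mem_erase.mpr ⟨hx.1, hSF hx.2⟩⟩
    rintro rfl; exact hjS hx.2
  · intro T hT
    rw [Finset.mem_powerset] at hT
    rw [Finset.mem_filter, Finset.mem_powerset]
    have hmT : m ∉ T := fun h => by
      have := hT h; rw [Finset.mem_erase, Finset.mem_erase] at this; exact this.2.1 rfl
    have hjT : j ∉ T := fun h => by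
      have := hT h; rw [Finset.mem_erase] at this; exact this.1 rfl
    refine ⟨?_, Finset.mem_insert_self m T, ?_⟩
    · intro x hx
      rcases Finset.mem_insert.mp hx with rfl | hx
      · exact hm
      · have := hT hx; rw [Finset.mem_erase, Finset.mem_erase] at this; exact this.2.2
    · intro h
      rcases Finset.mem_insert.mp h with rfl | h
      · exact hmj rfl
      · exact hjT h
  · intro S hS
    rw [Finset.mem_filter] at hS
    exact Finset.insert_erase hS.2.1
  · intro T hT
    rw [Finset.mem_powerset] at hT
    refine Finset.erase_insert (fun h => ?_)
    have := hT h; rw [Finset.mem_erase, Finset.mem_erase] at this; exact this.2.1 rfl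

lemma repr_R_P_finset (e : HilbertBasis ℕ ℂ H) (R : H →L[ℂ] H) (G : Finset ℕ) (x : H) (m : ℕ) :
    e.repr (R (P e (↑G) x)) m = ∑ j ∈ G, e.repr x j * e.repr (R (e j)) m := by
  rw [P_finset, map_sum, map_sum, lp.coeFn_sum, Finset.sum_apply]
  refine Finset.sum_congr rfl (fun j _ => ?_)
  rw [map_smul, map_smul, lp.coeFn_smul, Pi.smul_apply, smul_eq_mul]

lemma sum_corner_identity (e : HilbertBasis ℕ ℂ H) (R : H →L[ℂ] H)
    (hRdiag : ∀ n, ⟪e n, R (e n)⟫_ℂ = 0) (F : Finset ℕ) (hF : 2 ≤ F.card) (x : H) :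
    ∑ S ∈ F.powerset, P e (↑S) (R (P e (↑(F \ S)) x))
      = ((2 : ℂ) ^ (F.card - 2)) • P e (↑F) (R (P e (↑F) x)) := by
  classical
  have hr : ∀ n, e.repr (R (e n)) n = 0 := fun n => by
    rw [← inner_basis]; exact hRdiag n
  refine ext_repr e (fun m => ?_)
  rw [map_sum, lp.coeFn_sum, Finset.sum_apply, map_smul, lp.coeFn_smul, Pi.smul_apply,
    smul_eq_mul]
  have hterm : ∀ S ∈ F.powerset,
      e.repr (P e (↑S) (R (P e (↑(F \ S)) x))) m
        = ∑ j ∈ F, (if m ∈ S ∧ j ∉ S then e.repr x j * e.repr (R (e j)) m else 0) := by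
    intro S hS
    rw [Finset.mem_powerset] at hS
    rw [repr_P]
    by_cases hmS : m ∈ (↑S : Set ℕ)
    · rw [if_pos hmS, repr_R_P_finset]
      rw [show F \ S = F.filter (fun j => j ∉ S) from Finset.sdiff_eq_filter F S,
        Finset.sum_filter]
      refine Finset.sum_congr rfl (fun j _ => ?_)
      by_cases hjS : j ∈ S
      · simp [hjS, Finset.mem_coe.mp hmS]
      · simp [hjS, Finset.mem_coe.mp hmS]
    · rw [if_neg hmS]
      rw [Finset.sum_congr rfl (fun j _ => ?_), Finset.sum_const_zero]
      have : ¬ (m ∈ S ∧ j ∉ S) := fun h => hmS h.1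
      rw [if_neg this]
  rw [Finset.sum_congr rfl hterm, Finset.sum_comm]
  have hcnt : ∀ j ∈ F,
      (∑ S ∈ F.powerset, if m ∈ S ∧ j ∉ S then e.repr x j * e.repr (R (e j)) m else 0)
        = (2 : ℂ) ^ (F.card - 2) * (if m ∈ F then e.repr x j * e.repr (R (e j)) m else 0) := by
    intro j hj
    rw [← Finset.sum_filter, Finset.sum_const, nsmul_eq_mul]
    by_cases hmF : m ∈ F
    · by_cases hjm : j = m
      · subst hjm
        simp [hr]
      · rw [if_pos hmF, card_filter_powerset F hmF hj (Ne.symm hjm)]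
        push_cast
        ring
    · have hempty : (F.powerset.filter (fun S => m ∈ S ∧ j ∉ S)) = ∅ := by
        refine Finset.filter_false_of_mem (fun S hS => ?_)
        rw [Finset.mem_powerset] at hS
        intro h
        exact hmF (hS h.1)
      rw [hempty, if_neg hmF, Finset.card_empty]
      push_cast
      ring
  rw [Finset.sum_congr rfl hcnt, ← Finset.mul_sum, repr_P]
  by_cases hmF : m ∈ F
  · rw [if_pos (show m ∈ (↑F : Set ℕ) from hmF), repr_R_P_finset]
    rw [Finset.sum_congr rfl (fun j hj => if_pos hmF)]
  · rw [if_neg (show m ∉ (↑F : Set ℕ) from hmF)]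
    rw [Finset.sum_congr rfl (fun j hj => if_neg hmF), Finset.sum_const_zero, mul_zero]

lemma exists_corner_subset (e : HilbertBasis ℕ ℂ H) (R : H →L[ℂ] H)
    (hRdiag : ∀ n, ⟪e n, R (e n)⟫_ℂ = 0) (F : Finset ℕ) (hF : 2 ≤ F.card) (x : H)
    (hx : P e (↑F) x = x) :
    ∃ S : Finset ℕ, S ⊆ F ∧ ‖P e (↑F) (R x)‖ / 4 ≤ ‖P e (↑S) (R (P e (↑(F \ S)) x))‖ := by
  classical
  set a : ℝ := ‖P e (↑F) (R x)‖ with ha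
  by_cases ha0 : a ≤ 0
  · refine ⟨∅, Finset.empty_subset F, ?_⟩
    have : a / 4 ≤ 0 := by linarith
    exact le_trans this (norm_nonneg _)
  push_neg at ha0
  by_contra hcon
  push_neg at hcon
  have hlt : ∀ S ∈ F.powerset, ‖P e (↑S) (R (P e (↑(F \ S)) x))‖ < a / 4 := by
    intro S hS
    exact hcon S (Finset.mem_powerset.mp hS)
  have hnorm : ‖∑ S ∈ F.powerset, P e (↑S) (R (P e (↑(F \ S)) x))‖
      = 2 ^ (F.card - 2) * a := by
    rw [sum_corner_identity e R hRdiag F hF x, norm_smul]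
    have hx' : P e (↑F) (R (P e (↑F) x)) = P e (↑F) (R x) := by rw [hx]
    rw [hx', ← ha]
    norm_num
  have hsum : ‖∑ S ∈ F.powerset, P e (↑S) (R (P e (↑(F \ S)) x))‖
      ≤ ∑ S ∈ F.powerset, ‖P e (↑S) (R (P e (↑(F \ S)) x))‖ := norm_sum_le _ _
  have hstrict : ∑ S ∈ F.powerset, ‖P e (↑S) (R (P e (↑(F \ S)) x))‖
      < ∑ S ∈ F.powerset, a / 4 :=
    Finset.sum_lt_sum_of_nonempty (Finset.powerset_nonempty F) hlt
  rw [Finset.sum_const, nsmul_eq_mul, Finset.card_powerset] at hstrict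
  have hpow : (2:ℝ) ^ F.card = 2 ^ (F.card - 2) * 4 := by
    rw [show F.card = F.card - 2 + 2 from (Nat.sub_add_cancel hF).symm]
    rw [pow_add]
    norm_num
  have : 2 ^ (F.card - 2) * a < 2 ^ (F.card - 2) * a := by
    calc (2:ℝ) ^ (F.card - 2) * a ≤ ∑ S ∈ F.powerset, ‖P e (↑S) (R (P e (↑(F \ S)) x))‖ := by
          rw [← hnorm]; exact hsum
      _ < (2 ^ F.card : ℕ) * (a / 4) := hstrict
      _ = 2 ^ (F.card - 2) * a := by push_cast; rw [hpow]; ring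
  exact lt_irrefl _ this

lemma P_Iio_coe (e : HilbertBasis ℕ ℂ H) (n : ℕ) : P e (Iio n) = P e (↑(Finset.range n)) := by
  rw [Finset.coe_range]

/-- One step of the gliding-hump construction. -/
lemma step_lemma (e : HilbertBasis ℕ ℂ H) (R : H →L[ℂ] H) {ε : ℝ} (hε : 0 < ε)
    (hQ : ∀ n, ε ≤ ‖R.comp (P e (Ici n))‖) (M : ℕ) (y : H) :
    ∃ (N M' : ℕ) (x : H), M ≤ N ∧ N + 2 ≤ M' ∧ ‖x‖ ≤ 1 ∧
      P e (Ico N M') x = x ∧ ε / 2 ≤ ‖R x‖ ∧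
      ‖P e (Iio M) (R x)‖ ≤ ε / 16 ∧ ‖P e (Ici N) y‖ ≤ ε / 16 := by
  have h16 : (0:ℝ) < ε / 16 := by linarith
  -- pick N
  have t1 : Filter.Tendsto (fun n => ‖P e (Ici n) y‖) Filter.atTop (nhds 0) := tail_tendsto e y
  have t2 : Filter.Tendsto
      (fun n => ∑ j ∈ Finset.range M, ‖P e (Ici n) ((adjoint R) (e j))‖)
      Filter.atTop (nhds 0) := by
    have h0 : Filter.Tendsto
        (fun n => ∑ j ∈ Finset.range M, ‖P e (Ici n) ((adjoint R) (e j))‖)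
        Filter.atTop (nhds (∑ _j ∈ Finset.range M, (0:ℝ))) :=
      tendsto_finset_sum _ (fun j _ => tail_tendsto e _)
    simpa using h0
  obtain ⟨N, hN⟩ := ((t1.eventually_lt_const h16).and
    ((t2.eventually_lt_const h16).and (Filter.eventually_ge_atTop M))).exists
  obtain ⟨hNy, hNsum, hNM⟩ := hN
  -- pick a nearly-norming vector for R ∘ Q_N
  have h34 : (3*ε/4 : ℝ) < ‖R.comp (P e (Ici N))‖ := lt_of_lt_of_le (by linarith) (hQ N)
  obtain ⟨u, hu1, hu2⟩ := ContinuousLinearMap.exists_lt_apply_of_lt_opNorm _ h34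
  set y₀ : H := P e (Ici N) u with hy₀
  have hy₀n : ‖y₀‖ ≤ 1 := le_trans (norm_P_apply_le e _ u) hu1.le
  have hRy₀ : 3*ε/4 < ‖R y₀‖ := by
    simpa using hu2
  -- truncate
  have t3 : Filter.Tendsto (fun m => ‖P e (Ici m) y₀‖) Filter.atTop (nhds 0) := tail_tendsto e y₀
  have hden : (0:ℝ) < ε / (4 * (‖R‖ + 1)) := by positivity
  obtain ⟨M'', hM''⟩ := (t3.eventually_lt_const hden).exists
  set x : H := P e (Iio M'') y₀ with hx
  set M' : ℕ := max M'' (N + 2) with hM'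
  have hxu : x = P e (Ico N M'') u := by
    rw [hx, hy₀, P_P,
      show (Iio M'' ∩ Ici N : Set ℕ) = Ico N M'' from Set.ext fun t => by
        simp only [Set.mem_inter_iff, Set.mem_Iio, Set.mem_Ici, Set.mem_Ico]; omega]
  have hxsupp : P e (Ico N M') x = x := by
    rw [hxu, P_P,
      show (Ico N M' ∩ Ico N M'' : Set ℕ) = Ico N M'' from Set.ext fun t => by
        simp only [Set.mem_inter_iff, Set.mem_Ico, hM']; omega]
  have hxIci : P e (Ici N) x = x := by
    rw [hxu, P_P,
      show (Ici N ∩ Ico N M'' : Set ℕ) = Ico N M'' from Set.ext fun t => by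
        simp only [Set.mem_inter_iff, Set.mem_Ici, Set.mem_Ico]; omega]
  have hx1 : ‖x‖ ≤ 1 := le_trans (norm_P_apply_le e _ _) hy₀n
  -- ‖R x‖ is big
  have hdiff : y₀ - x = P e (Ici M'') y₀ := by
    have := P_add_compl e (Iio M'') y₀
    rw [Set.compl_Iio] at this
    rw [hx]
    exact sub_eq_of_eq_add' this.symm
  have hRx : ε / 2 ≤ ‖R x‖ := by
    have h1 : ‖R y₀ - R x‖ ≤ ε / 4 := by
      have : R y₀ - R x = R (y₀ - x) := by rw [map_sub]
      rw [this, hdiff]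
      calc ‖R (P e (Ici M'') y₀)‖ ≤ ‖R‖ * ‖P e (Ici M'') y₀‖ := le_opNorm _ _
        _ ≤ ‖R‖ * (ε / (4 * (‖R‖ + 1))) :=
            mul_le_mul_of_nonneg_left hM''.le (norm_nonneg _)
        _ ≤ (‖R‖ + 1) * (ε / (4 * (‖R‖ + 1))) := by
            have hpos : (0:ℝ) ≤ ε / (4 * (‖R‖ + 1)) := hden.le
            nlinarith [norm_nonneg R]
        _ = ε / 4 := by
            have hpos : (0:ℝ) < ‖R‖ + 1 := by positivity
            field_simp
    have h2 : ‖R y₀‖ - ‖R x‖ ≤ ε / 4 := le_trans (norm_sub_norm_le _ _) h1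
    linarith
  -- head estimate
  have hhead : ‖P e (Iio M) (R x)‖ ≤ ε / 16 := by
    rw [P_Iio_coe]
    refine le_trans (norm_P_finset_le_sum e _ _) ?_
    refine le_trans (Finset.sum_le_sum (fun j _ => ?_)) hNsum.le
    show ‖⟪e j, R x⟫_ℂ‖ ≤ ‖P e (Ici N) ((adjoint R) (e j))‖
    have h1 : ⟪e j, R x⟫_ℂ = ⟪P e (Ici N) ((adjoint R) (e j)), x⟫_ℂ := by
      rw [inner_P_left, hxIci, ContinuousLinearMap.adjoint_inner_left]
    rw [h1]
    calc ‖⟪P e (Ici N) ((adjoint R) (e j)), x⟫_ℂ‖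
        ≤ ‖P e (Ici N) ((adjoint R) (e j))‖ * ‖x‖ := norm_inner_le_norm _ _
      _ ≤ ‖P e (Ici N) ((adjoint R) (e j))‖ * 1 :=
          mul_le_mul_of_nonneg_left hx1 (norm_nonneg _)
      _ = _ := mul_one _
  exact ⟨N, M', x, hNM, le_max_right _ _, hx1, hxsupp, hRx, hhead, hNy.le⟩

lemma norm_P_op_le (e : HilbertBasis ℕ ℂ H) (A : Set ℕ) : ‖P e A‖ ≤ 1 :=
  ContinuousLinearMap.opNorm_le_bound _ zero_le_one
    (fun x => by rw [one_mul]; exact norm_P_apply_le e A x)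

lemma exists_eps (e : HilbertBasis ℕ ℂ H) (R : H →L[ℂ] H) (hR : ¬ IsCompactOperator ⇑R) :
    ∃ ε > (0:ℝ), ∀ n, ε ≤ ‖R.comp (P e (Ici n))‖ := by
  by_contra h
  push_neg at h
  apply hR
  have hanti : ∀ m n, m ≤ n → ‖R.comp (P e (Ici n))‖ ≤ ‖R.comp (P e (Ici m))‖ := by
    intro m n hmn
    have hcomp : R.comp (P e (Ici n)) = (R.comp (P e (Ici m))).comp (P e (Ici n)) := by
      refine ContinuousLinearMap.ext (fun x => ?_)
      simp only [ContinuousLinearMap.comp_apply]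
      rw [P_P, show (Ici m ∩ Ici n : Set ℕ) = Ici n from Set.ext fun t => by
        simp only [Set.mem_inter_iff, Set.mem_Ici]; omega]
    rw [hcomp]
    refine le_trans (ContinuousLinearMap.opNorm_comp_le _ _) ?_
    exact mul_le_of_le_one_right (norm_nonneg _) (norm_P_op_le e _)
  have htend : Filter.Tendsto (fun n => R.comp (P e (Iio n))) Filter.atTop (nhds R) := by
    rw [Metric.tendsto_atTop]
    intro c hc
    obtain ⟨n₁, hn₁⟩ := h c hc
    refine ⟨n₁, fun n hn => ?_⟩
    have hEq : R - R.comp (P e (Iio n)) = R.comp (P e (Ici n)) := by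
      refine ContinuousLinearMap.ext (fun x => ?_)
      simp only [ContinuousLinearMap.sub_apply, ContinuousLinearMap.comp_apply]
      have h3 := P_add_compl e (Iio n) x
      rw [Set.compl_Iio] at h3
      have h2 : x - P e (Iio n) x = P e (Ici n) x := sub_eq_of_eq_add' h3.symm
      rw [← map_sub, h2]
    rw [dist_eq_norm, ← norm_neg, neg_sub, hEq]
    exact lt_of_le_of_lt (hanti n₁ n hn) hn₁
  refine isCompactOperator_of_tendsto htend ?_
  refine Filter.Eventually.of_forall (fun n => ?_)
  have h1 : ⇑(R.comp (P e (Iio n))) = ⇑R ∘ ⇑(P e (Iio n)) := rfl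
  rw [h1, P_Iio_coe]
  exact (isCompactOperator_P_finset e (Finset.range n)).continuous_comp R.continuous

lemma P_split_Iio (e : HilbertBasis ℕ ℂ H) {a b : ℕ} (hab : a ≤ b) (v : H) :
    P e (Iio b) v = P e (Iio a) v + P e (Ico a b) v := by
  rw [show (Iio b : Set ℕ) = Iio a ∪ Ico a b from Set.ext fun t => by
      simp only [Set.mem_Iio, Set.mem_union, Set.mem_Ico]; omega]
  refine P_union e ?_ v
  rw [Set.disjoint_left]
  intro t ht ht'
  simp only [Set.mem_Iio] at ht
  simp only [Set.mem_Ico] at ht'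
  omega

/-- The core lemma: an operator with vanishing main diagonal all of whose "corners"
`P_A R P_{Aᶜ}` are compact, is itself compact. -/
lemma core (e : HilbertBasis ℕ ℂ H) (R : H →L[ℂ] H)
    (hRdiag : ∀ n, ⟪e n, R (e n)⟫_ℂ = 0)
    (hcorner : ∀ A : Set ℕ, IsCompactOperator ⇑((P e A).comp (R.comp (P e Aᶜ)))) :
    IsCompactOperator ⇑R := by
  by_contra hR
  obtain ⟨ε, hε, hQ⟩ := exists_eps e R hR
  choose sN sM sx hsMN hsNM hsx1 hsxsupp hsRx hshead hstail using step_lemma e R hε hQ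
  let f : ℕ → ℕ × ℕ × H := fun k => Nat.rec (motive := fun _ => ℕ × ℕ × H)
    (sN 0 0, sM 0 0, sx 0 0)
    (fun _ p => (sN p.2.1 (R p.2.2), sM p.2.1 (R p.2.2), sx p.2.1 (R p.2.2))) k
  let N : ℕ → ℕ := fun k => (f k).1
  let M : ℕ → ℕ := fun k => (f k).2.1
  let x : ℕ → H := fun k => (f k).2.2
  let Mp : ℕ → ℕ := fun k => Nat.casesOn k 0 M
  let y : ℕ → H := fun k => R (x k)
  -- defining properties
  have pMN : ∀ k, Mp k ≤ N k := by
    intro k; cases k with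
    | zero => exact Nat.zero_le _
    | succ k => exact hsMN (M k) (R (x k))
  have pNM : ∀ k, N k + 2 ≤ M k := by
    intro k; cases k with
    | zero => exact hsNM 0 0
    | succ k => exact hsNM (M k) (R (x k))
  have px1 : ∀ k, ‖x k‖ ≤ 1 := by
    intro k; cases k with
    | zero => exact hsx1 0 0
    | succ k => exact hsx1 (M k) (R (x k))
  have psupp : ∀ k, P e (Ico (N k) (M k)) (x k) = x k := by
    intro k; cases k with
    | zero => exact hsxsupp 0 0
    | succ k => exact hsxsupp (M k) (R (x k))
  have pRx : ∀ k, ε / 2 ≤ ‖y k‖ := by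
    intro k; cases k with
    | zero => exact hsRx 0 0
    | succ k => exact hsRx (M k) (R (x k))
  have phead : ∀ k, ‖P e (Iio (Mp k)) (y k)‖ ≤ ε / 16 := by
    intro k; cases k with
    | zero => exact hshead 0 0
    | succ k => exact hshead (M k) (R (x k))
  have ptail : ∀ k, ‖P e (Ici (N (k + 1))) (y k)‖ ≤ ε / 16 := by
    intro k
    exact hstail (M k) (R (x k))
  -- ordering facts
  have hMN' : ∀ k, N k < M k := fun k => by have := pNM k; omega
  have hMNs : ∀ k, M k ≤ N (k + 1) := fun k => pMN (k + 1)
  have hMmono : Monotone M := monotone_nat_of_le_succ (fun k =>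
    le_trans (hMNs k) (le_of_lt (hMN' (k+1))))
  have hNmono : StrictMono N := strictMono_nat_of_lt_succ (fun k =>
    lt_of_lt_of_le (hMN' k) (hMNs k))
  have hNtop : Filter.Tendsto N Filter.atTop Filter.atTop := hNmono.tendsto_atTop
  have hMjNk : ∀ j k, j < k → M j ≤ N k := by
    intro j k hjk
    cases k with
    | zero => omega
    | succ k' => exact le_trans (hMmono (by omega : j ≤ k')) (pMN (k' + 1))
  have pIci : ∀ k, P e (Ici (N k)) (x k) = x k := by
    intro k
    conv_lhs => rw [← psupp k]
    rw [P_P, show (Ici (N k) ∩ Ico (N k) (M k) : Set ℕ) = Ico (N k) (M k) from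
      Set.ext fun t => by simp only [Set.mem_inter_iff, Set.mem_Ici, Set.mem_Ico]; omega]
    exact psupp k
  -- the five-way split
  have h5 : ∀ k, ε/8 ≤ ‖P e (Ico (Mp k) (N k)) (y k)‖ ∨
      ε/8 ≤ ‖P e (Ico (M k) (N (k+1))) (y k)‖ ∨
      ε/8 ≤ ‖P e (Ico (N k) (M k)) (y k)‖ := by
    intro k
    by_contra hcon
    push_neg at hcon
    obtain ⟨h2, h4, h3⟩ := hcon
    have e1 : y k = P e (Iio (Mp k)) (y k) + P e (Ico (Mp k) (N k)) (y k)
        + P e (Ico (N k) (M k)) (y k) + P e (Ico (M k) (N (k+1))) (y k)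
        + P e (Ici (N (k+1))) (y k) := by
      have a1 := P_add_compl e (Iio (N (k+1))) (y k)
      rw [Set.compl_Iio] at a1
      have a2 := P_split_Iio e (hMNs k) (y k)
      have a3 := P_split_Iio e (le_of_lt (hMN' k)) (y k)
      have a4 := P_split_Iio e (pMN k) (y k)
      calc y k = P e (Iio (N (k+1))) (y k) + P e (Ici (N (k+1))) (y k) := a1.symm
        _ = _ := by rw [a2, a3, a4]; try abel
    have t1 := norm_add_le (P e (Iio (Mp k)) (y k) + P e (Ico (Mp k) (N k)) (y k)
        + P e (Ico (N k) (M k)) (y k) + P e (Ico (M k) (N (k+1))) (y k))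
        (P e (Ici (N (k+1))) (y k))
    have t2 := norm_add_le (P e (Iio (Mp k)) (y k) + P e (Ico (Mp k) (N k)) (y k)
        + P e (Ico (N k) (M k)) (y k)) (P e (Ico (M k) (N (k+1))) (y k))
    have t3 := norm_add_le (P e (Iio (Mp k)) (y k) + P e (Ico (Mp k) (N k)) (y k))
        (P e (Ico (N k) (M k)) (y k))
    have t4 := norm_add_le (P e (Iio (Mp k)) (y k)) (P e (Ico (Mp k) (N k)) (y k))
    have hy : ‖y k‖ = ‖P e (Iio (Mp k)) (y k) + P e (Ico (Mp k) (N k)) (y k)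
        + P e (Ico (N k) (M k)) (y k) + P e (Ico (M k) (N (k+1))) (y k)
        + P e (Ici (N (k+1))) (y k)‖ := by rw [← e1]
    have hh := phead k
    have ht := ptail k
    have hrx := pRx k
    rw [hy] at hrx
    linarith
  -- main case split
  by_cases hcase : ∀ k₀, ∃ k, k₀ ≤ k ∧ (ε/8 ≤ ‖P e (Ico (Mp k) (N k)) (y k)‖ ∨
      ε/8 ≤ ‖P e (Ico (M k) (N (k+1))) (y k)‖)
  · -- Case 1 : the mass escapes into the gaps
    set S : Set ℕ := (⋃ j, Ico (N j) (M j))ᶜ with hS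
    have hcpt := compact_apply_tendsto_zero e (hcorner S) hNtop px1 pIci
    obtain ⟨k₁, hk₁⟩ := (Metric.tendsto_atTop.mp hcpt (ε/8) (by linarith)).imp
      (fun k₁ h => h)
    obtain ⟨k, hkk₁, hside⟩ := hcase k₁
    have hxS : P e Sᶜ (x k) = x k := by
      rw [hS, compl_compl]
      conv_lhs => rw [← psupp k]
      rw [P_P, Set.inter_eq_self_of_subset_right (Set.subset_iUnion
        (fun j => (Ico (N j) (M j) : Set ℕ)) k)]
      exact psupp k
    have hCx : ‖((P e S).comp (R.comp (P e Sᶜ))) (x k)‖ < ε/8 := by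
      have := hk₁ k hkk₁
      rwa [Real.dist_eq, sub_zero, abs_of_nonneg (norm_nonneg _)] at this
    rw [ContinuousLinearMap.comp_apply, ContinuousLinearMap.comp_apply, hxS] at hCx
    have hsub1 : (Ico (Mp k) (N k) : Set ℕ) ⊆ S := by
      intro t ht
      simp only [Set.mem_Ico] at ht
      rw [hS, Set.mem_compl_iff, Set.mem_iUnion]
      rintro ⟨j, hj⟩
      simp only [Set.mem_Ico] at hj
      rcases lt_or_ge j k with hjk | hjk
      · have : M j ≤ Mp k := by
          cases k with
          | zero => omega
          | succ k' => exact hMmono (by omega : j ≤ k')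
        omega
      · have := hNmono.le_iff_le.mpr hjk
        omega
    have hsub2 : (Ico (M k) (N (k+1)) : Set ℕ) ⊆ S := by
      intro t ht
      simp only [Set.mem_Ico] at ht
      rw [hS, Set.mem_compl_iff, Set.mem_iUnion]
      rintro ⟨j, hj⟩
      simp only [Set.mem_Ico] at hj
      rcases le_or_gt j k with hjk | hjk
      · have := hMmono hjk
        omega
      · have : N (k+1) ≤ N j := hNmono.le_iff_le.mpr hjk
        omega
    rcases hside with hs | hs
    · have := le_trans hs (norm_P_mono e hsub1 (y k))
      exact absurd hCx (not_lt.mpr this)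
    · have := le_trans hs (norm_P_mono e hsub2 (y k))
      exact absurd hCx (not_lt.mpr this)
  · -- Case 2 : the mass stays in the blocks
    push_neg at hcase
    obtain ⟨k₀, hk₀⟩ := hcase
    have hblock : ∀ k, k₀ ≤ k → ε/8 ≤ ‖P e (Ico (N k) (M k)) (y k)‖ := by
      intro k hk
      obtain ⟨hc1, hc2⟩ := hk₀ k hk
      rcases h5 k with h | h | h
      · exact absurd h (not_le.mpr hc1)
      · exact absurd h (not_le.mpr hc2)
      · exact h
    -- choose the good sub-blocks
    have hsuppF : ∀ k, P e (↑(Finset.Ico (N k) (M k))) (x k) = x k := by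
      intro k
      rw [Finset.coe_Ico]
      exact psupp k
    have hcard : ∀ k, 2 ≤ (Finset.Ico (N k) (M k)).card := by
      intro k
      rw [Nat.card_Ico]
      have := pNM k
      omega
    choose Sk hSk1 hSk2 using fun k =>
      exists_corner_subset e R hRdiag (Finset.Ico (N k) (M k)) (hcard k) (x k) (hsuppF k)
    set S : Set ℕ := ⋃ j, (↑(Sk j) : Set ℕ) with hS
    have hcpt := compact_apply_tendsto_zero e (hcorner S) hNtop px1 pIci
    obtain ⟨k₁, hk₁⟩ := (Metric.tendsto_atTop.mp hcpt (ε/32) (by linarith)).imp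
      (fun k₁ h => h)
    set k : ℕ := max k₀ k₁ with hk
    have hxS : P e Sᶜ (x k) = P e (↑(Finset.Ico (N k) (M k) \ Sk k)) (x k) := by
      conv_lhs => rw [← psupp k]
      rw [P_P, show (Sᶜ ∩ Ico (N k) (M k) : Set ℕ) = ↑(Finset.Ico (N k) (M k) \ Sk k) from
        Set.ext fun t => ?_]
      simp only [hS, Set.mem_inter_iff, Set.mem_compl_iff, Set.mem_iUnion, Finset.coe_sdiff,
        Set.mem_diff, Finset.mem_coe, Finset.coe_Ico, Set.mem_Ico, not_exists]
      constructor
      · rintro ⟨hnot, hico⟩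
        exact ⟨hico, fun h => hnot k (Finset.mem_coe.mpr h)⟩
      · rintro ⟨hico, hnot⟩
        refine ⟨fun j hj => ?_, hico⟩
        rcases eq_or_ne j k with rfl | hjk
        · exact hnot (Finset.mem_coe.mp hj)
        · have hmem := hSk1 j (Finset.mem_coe.mp hj)
          rw [Finset.mem_Ico] at hmem
          rcases lt_or_gt_of_ne hjk with h' | h'
          · have := hMjNk j k h'
            omega
          · have : N k < N j := hNmono h'
            have := hMjNk k j h'
            omega
    have hCx : ‖((P e S).comp (R.comp (P e Sᶜ))) (x k)‖ < ε/32 := by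
      have := hk₁ k (le_max_right _ _)
      rwa [Real.dist_eq, sub_zero, abs_of_nonneg (norm_nonneg _)] at this
    rw [ContinuousLinearMap.comp_apply, ContinuousLinearMap.comp_apply, hxS] at hCx
    have hge : ε/32 ≤ ‖P e S (R (P e (↑(Finset.Ico (N k) (M k) \ Sk k)) (x k)))‖ := by
      have h1 : ε/8 ≤ ‖P e (↑(Finset.Ico (N k) (M k))) (y k)‖ := by
        rw [Finset.coe_Ico]
        exact hblock k (le_max_left _ _)
      have h2 := hSk2 k
      have h3 : (↑(Sk k) : Set ℕ) ⊆ S := Set.subset_iUnion (fun j => (↑(Sk j) : Set ℕ)) k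
      calc ε/32 = (ε/8)/4 := by ring
        _ ≤ ‖P e (↑(Finset.Ico (N k) (M k))) (R (x k))‖ / 4 := by
            have : ‖P e (↑(Finset.Ico (N k) (M k))) (y k)‖
                = ‖P e (↑(Finset.Ico (N k) (M k))) (R (x k))‖ := rfl
            rw [← this]
            linarith
        _ ≤ ‖P e (↑(Sk k)) (R (P e (↑(Finset.Ico (N k) (M k) \ Sk k)) (x k)))‖ := h2
        _ ≤ ‖P e S (R (P e (↑(Finset.Ico (N k) (M k) \ Sk k)) (x k)))‖ :=
            norm_P_mono e h3 _
    exact absurd hCx (not_lt.mpr hge)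

lemma repr_isDiagonal (e : HilbertBasis ℕ ℂ H) {D : H →L[ℂ] H} (hD : IsDiagonal e D)
    (x : H) (m : ℕ) : e.repr (D x) m = e.repr (D (e m)) m * e.repr x m := by
  have h1 : HasSum (fun n => e.repr x n • D (e n)) (D x) := by
    have := (e.hasSum_repr x).mapL D
    simpa using this
  have h2 : HasSum (fun n => e.repr x n * ⟪e m, D (e n)⟫_ℂ) ⟪e m, D x⟫_ℂ := by
    have := h1.mapL (innerSL ℂ (e m))
    simpa [inner_smul_right] using this
  have h3 : ∀ n, n ≠ m → e.repr x n * ⟪e m, D (e n)⟫_ℂ = 0 := by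
    intro n hn
    rw [hD n m hn, mul_zero]
  have h4 : HasSum (fun n => e.repr x n * ⟪e m, D (e n)⟫_ℂ)
      (e.repr x m * ⟪e m, D (e m)⟫_ℂ) := hasSum_single m h3
  have h5 := h2.unique h4
  rw [← inner_basis, h5, inner_basis]
  ring

lemma isDiagonal_mul_comm (e : HilbertBasis ℕ ℂ H) {D D' : H →L[ℂ] H}
    (hD : IsDiagonal e D) (hD' : IsDiagonal e D') : D * D' = D' * D := by
  refine ContinuousLinearMap.ext (fun x => ext_repr e (fun m => ?_))
  rw [ContinuousLinearMap.mul_apply, ContinuousLinearMap.mul_apply,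
    repr_isDiagonal e hD (D' x) m, repr_isDiagonal e hD' x m,
    repr_isDiagonal e hD' (D x) m, repr_isDiagonal e hD x m]
  ring

lemma P_empty (e : HilbertBasis ℕ ℂ H) (x : H) : P e (∅ : Set ℕ) x = 0 := by
  refine ext_repr e (fun n => ?_)
  rw [repr_P, map_zero, lp.coeFn_zero, Pi.zero_apply, if_neg (Set.notMem_empty n)]

/-- Johnson–Parrott for the atomic masa: an operator essentially commuting with all
diagonal operators lies in `D + K`. -/
lemma mem_DplusK_of_essentially_commutes (e : HilbertBasis ℕ ℂ H) (W : H →L[ℂ] H)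
    (hcomm : ∀ D : H →L[ℂ] H, IsDiagonal e D → IsCompactOperator ⇑(W * D - D * W)) :
    W ∈ DplusK e := by
  set b : ℕ → ℂ := fun n => e.repr (W (e n)) n with hb
  have hbb : ∀ n, ‖b n‖ ≤ ‖W‖ := by
    intro n
    calc ‖b n‖ ≤ ‖e.repr (W (e n))‖ := lp.norm_apply_le_norm (by norm_num) _ n
      _ = ‖W (e n)‖ := by rw [LinearIsometryEquiv.norm_map]
      _ ≤ ‖W‖ * ‖e n‖ := le_opNorm _ _
      _ = ‖W‖ := by rw [e.orthonormal.1 n, mul_one]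
  set EW : H →L[ℂ] H := diag e b ‖W‖ hbb with hEW
  have hEWdiag : IsDiagonal e EW := isDiagonal_diag e b ‖W‖ hbb
  set R : H →L[ℂ] H := W - EW with hRdef
  have hRdiag : ∀ n, ⟪e n, R (e n)⟫_ℂ = 0 := by
    intro n
    rw [hRdef, ContinuousLinearMap.sub_apply, inner_sub_right, inner_basis, inner_basis,
      hEW, repr_diag, e.repr_self, lp.single_apply_self]
    simp [hb]
  have hcornerR : ∀ A : Set ℕ, IsCompactOperator ⇑((P e A).comp (R.comp (P e Aᶜ))) := by
    intro A
    have hcomm' : IsCompactOperator ⇑(R * P e Aᶜ - P e Aᶜ * R) := by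
      have hPdiag := isDiagonal_P e Aᶜ
      have h1 : R * P e Aᶜ - P e Aᶜ * R = W * P e Aᶜ - P e Aᶜ * W := by
        rw [hRdef]
        have h2 : EW * P e Aᶜ = P e Aᶜ * EW := isDiagonal_mul_comm e hEWdiag hPdiag
        rw [sub_mul, mul_sub]
        rw [h2]
        abel
      rw [h1]
      exact hcomm (P e Aᶜ) hPdiag
    have heq : ⇑((P e A).comp (R.comp (P e Aᶜ)))
        = ⇑(P e A) ∘ ⇑(R * P e Aᶜ - P e Aᶜ * R) := by
      funext x
      simp only [Function.comp_apply, ContinuousLinearMap.comp_apply,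
        ContinuousLinearMap.sub_apply, ContinuousLinearMap.mul_apply, map_sub]
      rw [P_P, Set.inter_compl_self, P_empty, sub_zero]
    rw [heq]
    exact hcomm'.continuous_comp (P e A).continuous
  have hRcpt : IsCompactOperator ⇑R := core e R hRdiag hcornerR
  exact ⟨EW, R, hEWdiag, hRcpt, by rw [hRdef]; abel⟩

lemma cpt_sub (X Y : H →L[ℂ] H) (hX : IsCompactOperator ⇑X) (hY : IsCompactOperator ⇑Y) :
    IsCompactOperator ⇑(X - Y) := by
  have h : ⇑(X - Y) = ⇑X - ⇑Y := by funext x; simp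
  rw [h]
  exact hX.sub hY

lemma cpt_conj (A B K : H →L[ℂ] H) (hK : IsCompactOperator ⇑K) :
    IsCompactOperator ⇑(A * K * B) := by
  have h : ⇑(A * K * B) = ⇑A ∘ (⇑K ∘ ⇑B) := rfl
  rw [h]
  exact (hK.comp_clm B).continuous_comp A.continuous

end JP

open JP

/-- If `U` is a unitary on `H` with `U D U* ∈ D+K` for every diagonal `D`, then `Ad(U)` restricts
to a *-automorphism of `D+K`; in particular it maps `D+K` bijectively onto `D+K`. -/
theorem adU_automorphism_of_maps_diagonals (e : HilbertBasis ℕ ℂ H)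
    (U : H →L[ℂ] H) (hU : U ∈ unitary (H →L[ℂ] H))
    (hdiag : ∀ D : H →L[ℂ] H, IsDiagonal e D →
      U * D * ContinuousLinearMap.adjoint U ∈ DplusK e) :
    Set.BijOn (fun T => U * T * ContinuousLinearMap.adjoint U) (DplusK e) (DplusK e) := by
  rw [Unitary.mem_iff] at hU
  obtain ⟨hU1, hU2⟩ := hU
  have hsU : ContinuousLinearMap.adjoint U = star U :=
    (ContinuousLinearMap.star_eq_adjoint U).symm
  rw [hsU]
  rw [show (∀ D : H →L[ℂ] H, IsDiagonal e D →
      U * D * ContinuousLinearMap.adjoint U ∈ DplusK e) =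
      (∀ D : H →L[ℂ] H, IsDiagonal e D → U * D * star U ∈ DplusK e) from by rw [hsU]] at hdiag
  have haddK : ∀ T K' : H →L[ℂ] H, T ∈ DplusK e → IsCompactOperator ⇑K' →
      T + K' ∈ DplusK e := by
    rintro T K' ⟨D, K, hD, hK, rfl⟩ hK'
    exact ⟨D, K + K', hD, hK.add hK', by abel⟩
  have hcancel1 : ∀ W : H →L[ℂ] H, star U * (U * W * star U) * U = W := by
    intro W
    calc star U * (U * W * star U) * U = (star U * U) * W * (star U * U) := by noncomm_ring
      _ = W := by rw [hU1, one_mul, mul_one]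
  have hcancel2 : ∀ W : H →L[ℂ] H, U * (star U * W * U) * star U = W := by
    intro W
    calc U * (star U * W * U) * star U = (U * star U) * W * (U * star U) := by noncomm_ring
      _ = W := by rw [hU2, one_mul, mul_one]
  -- the key surjectivity ingredient : `star U * D * U ∈ D+K` for diagonal `D`
  have hkey : ∀ D : H →L[ℂ] H, IsDiagonal e D → star U * D * U ∈ DplusK e := by
    intro D hD
    refine mem_DplusK_of_essentially_commutes e _ (fun D₂ hD₂ => ?_)
    obtain ⟨D₂', K₂, hD₂', hK₂, hUD₂⟩ := hdiag D₂ hD₂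
    have t1 : star U * (D * (U * D₂ * star U)) * U = (star U * D * U) * D₂ := by
      calc star U * (D * (U * D₂ * star U)) * U
          = star U * D * U * D₂ * (star U * U) := by noncomm_ring
        _ = (star U * D * U) * D₂ := by rw [hU1, mul_one]
    have t2 : star U * ((U * D₂ * star U) * D) * U = D₂ * (star U * D * U) := by
      calc star U * ((U * D₂ * star U) * D) * U
          = (star U * U) * (D₂ * (star U * D * U)) := by noncomm_ring
        _ = D₂ * (star U * D * U) := by rw [hU1, one_mul]
    have halg : (star U * D * U) * D₂ - D₂ * (star U * D * U)
        = star U * (D * (U * D₂ * star U) - (U * D₂ * star U) * D) * U := by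
      have expand : star U * (D * (U * D₂ * star U) - (U * D₂ * star U) * D) * U
          = star U * (D * (U * D₂ * star U)) * U - star U * ((U * D₂ * star U) * D) * U := by
        noncomm_ring
      rw [expand, t1, t2]
    rw [halg, hUD₂]
    have h2 : D * (D₂' + K₂) - (D₂' + K₂) * D = D * K₂ - K₂ * D := by
      rw [mul_add, add_mul, isDiagonal_mul_comm e hD hD₂']
      abel
    rw [h2]
    refine cpt_conj _ _ _ (cpt_sub _ _ ?_ ?_)
    · have h : ⇑(D * K₂) = ⇑D ∘ ⇑K₂ := rfl
      rw [h]; exact hK₂.continuous_comp D.continuous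
    · have h : ⇑(K₂ * D) = ⇑K₂ ∘ ⇑D := rfl
      rw [h]; exact hK₂.comp_clm D
  refine ⟨?_, ?_, ?_⟩
  · -- MapsTo
    rintro T ⟨D, K, hD, hK, rfl⟩
    have h1 : U * (D + K) * star U = U * D * star U + U * K * star U := by noncomm_ring
    show U * (D + K) * star U ∈ DplusK e
    rw [h1]
    exact haddK _ _ (hdiag D hD) (cpt_conj U (star U) K hK)
  · -- InjOn
    intro T _ T' _ h
    simp only at h
    calc T = star U * (U * T * star U) * U := (hcancel1 T).symm
      _ = star U * (U * T' * star U) * U := by rw [h]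
      _ = T' := hcancel1 T'
  · -- SurjOn
    rintro T ⟨D, K, hD, hK, rfl⟩
    refine ⟨star U * (D + K) * U, ?_, ?_⟩
    · have h1 : star U * (D + K) * U = star U * D * U + star U * K * U := by noncomm_ring
      rw [h1]
      exact haddK _ _ (hkey D hD) (cpt_conj (star U) U K hK)
    · show U * (star U * (D + K) * U) * star U = D + K
      exact hcancel2 (D + K)
end
end

section
/- Let σ be a permutation of ℕ with infinite support (σ(n) ≠ n for infinitely many n), U_σ the unitary permuting the basis (U_σ e_n = e_{σ(n)}), and T = D + K ∈ D+K. Then ‖U_σ − T‖ ≥ 1; and if moreover T is unitary, ‖U_σ − T‖ ≥ √2. -/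
open scoped InnerProductSpace
open ContinuousLinearMap Filter Topology

variable {H : Type*} [NormedAddCommGroup H] [InnerProductSpace ℂ H] [CompleteSpace H]

lemma coeff_tendsto_zero (e : HilbertBasis ℕ ℂ H) (a : H) :
    Tendsto (fun n => ⟪a, e n⟫_ℂ) atTop (𝓝 0) := by
  have hsum : Summable fun n => ‖⟪(e n : H), a⟫_ℂ‖ ^ 2 :=
    e.orthonormal.inner_products_summable a
  have h1 : Tendsto (fun n => ‖⟪(e n : H), a⟫_ℂ‖ ^ 2) atTop (𝓝 0) := hsum.tendsto_atTop_zero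
  have h2 : Tendsto (fun n => ‖⟪(e n : H), a⟫_ℂ‖) atTop (𝓝 0) := by
    have := h1.sqrt
    simpa [Real.sqrt_sq (norm_nonneg _)] using this
  rw [tendsto_zero_iff_norm_tendsto_zero]
  simpa [norm_inner_symm] using h2

lemma compact_norm_apply_tendsto (e : HilbertBasis ℕ ℂ H) (K : H →L[ℂ] H)
    (hK : IsCompactOperator ⇑K) : Tendsto (fun n => ‖K (e n)‖) atTop (𝓝 0) := by
  have key : Tendsto (fun n => K (e n)) atTop (𝓝 0) := by
    apply tendsto_of_subseq_tendsto
    intro ns hns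
    have hC : IsCompact (closure (⇑K '' Metric.closedBall 0 1)) := by
      have := IsCompactOperator.isCompact_closure_image_closedBall (σ₁₂ := RingHom.id ℂ)
        (f := (K : H →ₗ[ℂ] H)) hK 1
      simpa using this
    have hmem : ∀ k, K (e (ns k)) ∈ closure (⇑K '' Metric.closedBall 0 1) := fun k =>
      subset_closure ⟨e (ns k), by
        simp [Metric.mem_closedBall, dist_zero_right, e.orthonormal.1 (ns k)]⟩
    obtain ⟨y, -, φ, hφ, hly⟩ := hC.tendsto_subseq hmem
    refine ⟨φ, ?_⟩
    have hy : y = 0 := by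
      have h1 : Tendsto (fun k => ⟪y, K (e (ns (φ k)))⟫_ℂ) atTop (𝓝 ⟪y, y⟫_ℂ) :=
        (continuous_inner.tendsto (y, y)).comp (tendsto_const_nhds.prodMk_nhds hly)
      have h2 : Tendsto (fun k => ⟪y, K (e (ns (φ k)))⟫_ℂ) atTop (𝓝 0) := by
        have ha : Tendsto (fun n => ⟪(adjoint K) y, (e n : H)⟫_ℂ) atTop (𝓝 0) :=
          coeff_tendsto_zero e ((adjoint K) y)
        have heq : ∀ n, ⟪y, K (e n)⟫_ℂ = ⟪(adjoint K) y, (e n : H)⟫_ℂ := fun n =>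
          (adjoint_inner_left K (e n) y).symm
        simp only [heq]
        exact ha.comp ((hns.comp hφ.tendsto_atTop))
      have : ⟪y, y⟫_ℂ = 0 := tendsto_nhds_unique h1 h2
      exact inner_self_eq_zero.mp this
    exact hy ▸ hly
  simpa [Function.comp_def] using (continuous_norm.tendsto 0).comp key

theorem dist_permutation_unitary_to_DplusK' (e : HilbertBasis ℕ ℂ H)
    (σ : Equiv.Perm ℕ) (hσ : {n : ℕ | σ n ≠ n}.Infinite)
    (Uσ : H →L[ℂ] H) (hUσ : ∀ n : ℕ, Uσ (e n) = e (σ n))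
    (T : H →L[ℂ] H) (hT : ∃ D K : H →L[ℂ] H, (∀ n m : ℕ, n ≠ m → ⟪(e m : H), D (e n)⟫_ℂ = 0) ∧ IsCompactOperator ⇑K ∧ T = D + K) :
    1 ≤ ‖Uσ - T‖ ∧ (T ∈ unitary (H →L[ℂ] H) → Real.sqrt 2 ≤ ‖Uσ - T‖) := by
  obtain ⟨D, K, hD, hK, rfl⟩ := hT
  set V := Uσ - (D + K) with hV
  have hfreq : ∀ ε > (0:ℝ), ∃ n, σ n ≠ n ∧ ‖K (e n)‖ < ε := by
    intro ε hε
    obtain ⟨N, hN⟩ := (Metric.tendsto_atTop.mp (compact_norm_apply_tendsto e K hK)) ε hε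
    obtain ⟨n, hnS, hn⟩ := hσ.exists_gt N
    refine ⟨n, hnS, ?_⟩
    have := hN n hn.le
    rwa [Real.dist_eq, sub_zero, abs_of_nonneg (norm_nonneg _)] at this
  have hinner : ∀ n, σ n ≠ n → ⟪(e (σ n) : H), V (e n)⟫_ℂ = 1 - ⟪(e (σ n) : H), K (e n)⟫_ℂ := by
    intro n hn
    have h1 : ⟪(e (σ n) : H), (e (σ n) : H)⟫_ℂ = 1 := by
      rw [@inner_self_eq_norm_sq_to_K ℂ, e.orthonormal.1 (σ n)]; norm_num
    simp [hV, sub_apply, add_apply, hUσ n, inner_sub_right, inner_add_right, h1,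
      hD n (σ n) (Ne.symm hn), sub_sub, e.orthonormal.1 (σ n)]
  have hopn : ∀ n, ‖V (e n)‖ ≤ ‖V‖ := by
    intro n
    simpa [e.orthonormal.1 n] using V.le_opNorm (e n)
  constructor
  · refine le_of_forall_pos_le_add ?_
    intro ε hε
    obtain ⟨n, hn, hKn⟩ := hfreq ε hε
    have hb : 1 - ‖K (e n)‖ ≤ ‖V (e n)‖ := by
      calc 1 - ‖K (e n)‖ ≤ ‖(1:ℂ)‖ - ‖⟪(e (σ n) : H), K (e n)⟫_ℂ‖ := by
            have := norm_inner_le_norm (𝕜 := ℂ) (e (σ n) : H) (K (e n))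
            rw [e.orthonormal.1 (σ n), one_mul] at this
            simp only [norm_one]
            linarith
        _ ≤ ‖(1:ℂ) - ⟪(e (σ n) : H), K (e n)⟫_ℂ‖ := norm_sub_norm_le _ _
        _ = ‖⟪(e (σ n) : H), V (e n)⟫_ℂ‖ := by rw [hinner n hn]
        _ ≤ ‖(e (σ n) : H)‖ * ‖V (e n)‖ := norm_inner_le_norm _ _
        _ = ‖V (e n)‖ := by rw [e.orthonormal.1 (σ n), one_mul]
    have := hopn n
    linarith
  · intro hu
    have hsq : 2 ≤ ‖V‖ ^ 2 := by
      refine le_of_forall_pos_le_add ?_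
      intro ε hε
      obtain ⟨n, hn, hKn⟩ := hfreq (ε / 2) (by linarith)
      have hre : RCLike.re ⟪(e (σ n) : H), (D + K) (e n)⟫_ℂ ≤ ‖K (e n)‖ := by
        have h1 : ⟪(e (σ n) : H), (D + K) (e n)⟫_ℂ = ⟪(e (σ n) : H), K (e n)⟫_ℂ := by
          simp [add_apply, inner_add_right, hD n (σ n) (Ne.symm hn)]
        rw [h1]
        calc RCLike.re ⟪(e (σ n) : H), K (e n)⟫_ℂ ≤ ‖⟪(e (σ n) : H), K (e n)⟫_ℂ‖ :=
              RCLike.re_le_norm _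
          _ ≤ ‖(e (σ n) : H)‖ * ‖K (e n)‖ := norm_inner_le_norm _ _
          _ = ‖K (e n)‖ := by rw [e.orthonormal.1 (σ n), one_mul]
      have hnormT : ‖(D + K) (e n)‖ = 1 := by
        rw [norm_map_of_mem_unitary hu, e.orthonormal.1 n]
      have hVn : V (e n) = e (σ n) - (D + K) (e n) := by
        simp [hV, sub_apply, hUσ n]
      have hb : 2 - ε ≤ ‖V (e n)‖ ^ 2 := by
        rw [hVn, @norm_sub_sq ℂ, hnormT, e.orthonormal.1 (σ n)]
        have : ‖K (e n)‖ < ε / 2 := hKn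
        nlinarith [hre]
      have h2 : ‖V (e n)‖ ^ 2 ≤ ‖V‖ ^ 2 :=
        pow_le_pow_left₀ (norm_nonneg _) (hopn n) 2
      linarith
    calc Real.sqrt 2 ≤ Real.sqrt (‖V‖ ^ 2) := Real.sqrt_le_sqrt hsq
      _ = ‖V‖ := Real.sqrt_sq (norm_nonneg _)

/-- main -/
theorem dist_permutation_unitary_to_DplusK (e : HilbertBasis ℕ ℂ H)
    (σ : Equiv.Perm ℕ) (hσ : {n : ℕ | σ n ≠ n}.Infinite)
    (Uσ : H →L[ℂ] H) (hUσ : ∀ n : ℕ, Uσ (e n) = e (σ n))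
    (T : H →L[ℂ] H) (hT : T ∈ DplusK e) :
    1 ≤ ‖Uσ - T‖ ∧ (T ∈ unitary (H →L[ℂ] H) → Real.sqrt 2 ≤ ‖Uσ - T‖) := by
  exact dist_permutation_unitary_to_DplusK' e σ hσ Uσ hUσ T hT
end
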